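/- arXiv:2001.10928 — 5 statements merged into one kernel-verified Lean document; each statement's English description precedes it below -/
import Mathlib

section
/- The Schur complement S = L₂₂ − L₂₁ L₁₁⁻¹ L₁₂ of a graph Laplacian L with respect to its first diagonal block is itself a graph Laplacian: S is symmetric, has nonpositive off-diagonal entries, and satisfies S·𝟏ₘ = 0. -/
open Matrix Finset

lemma laplacian_quad_nonneg {K : Type*} [Fintype K] [DecidableEq K]
    (L : Matrix K K ℝ)
    (hsym : L.IsSymm) (hoff : ∀ i j, i ≠ j → L i j ≤ 0)
    (hrow : ∀ i, ∑ j, L i j = 0) (x : K → ℝ) :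
    0 ≤ x ⬝ᵥ L *ᵥ x := by
  have hcol : ∀ j, ∑ i, L i j = 0 := by
    intro j
    calc ∑ i, L i j = ∑ i, L j i := by
          refine Finset.sum_congr rfl fun i _ => ?_
          exact (hsym.apply i j).symm
      _ = 0 := hrow j
  have key : ∑ i, ∑ j, (-L i j) * (x i - x j)^2 = 2 * (x ⬝ᵥ L *ᵥ x) := by
    have expand : ∀ i j, (-L i j) * (x i - x j)^2
        = 2 * (x i * (L i j * x j)) - L i j * x i ^ 2 - L i j * x j ^ 2 := by
      intro i j; ring
    simp_rw [expand, Finset.sum_sub_distrib]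
    have h1 : ∑ i : K, ∑ j : K, L i j * x i ^ 2 = 0 := by
      simp_rw [← Finset.sum_mul, hrow]; simp
    have h2 : ∑ i : K, ∑ j : K, L i j * x j ^ 2 = 0 := by
      rw [Finset.sum_comm]
      simp_rw [← Finset.sum_mul, hcol]; simp
    rw [h1, h2]
    simp only [dotProduct, mulVec, Finset.mul_sum]
    ring_nf
  have nonneg : 0 ≤ ∑ i, ∑ j, (-L i j) * (x i - x j)^2 := by
    refine Finset.sum_nonneg fun i _ => Finset.sum_nonneg fun j _ => ?_
    rcases eq_or_ne i j with rfl | hij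
    · simp
    · exact mul_nonneg (by linarith [hoff i j hij]) (sq_nonneg _)
  linarith [key ▸ nonneg]

lemma stieltjes_inv_nonneg {k : ℕ} (A : Matrix (Fin k) (Fin k) ℝ)
    (hpsd : A.PosSemidef) (hdet : IsUnit A.det)
    (hoff : ∀ i j, i ≠ j → A i j ≤ 0) :
    ∀ i j, 0 ≤ A⁻¹ i j := by
  intro i0 j
  set x : Fin k → ℝ := fun i => A⁻¹ i j with hxdef
  have hAx : A *ᵥ x = fun i => (1 : Matrix (Fin k) (Fin k) ℝ) i j := by
    ext i'
    have h := congrFun (congrFun (Matrix.mul_nonsing_inv A hdet) i') j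
    simpa [mulVec, dotProduct, Matrix.mul_apply] using h
  set q : Fin k → ℝ := fun i => max (-x i) 0 with hqdef
  set p : Fin k → ℝ := fun i => max (x i) 0 with hpdef
  have hq0 : ∀ i, 0 ≤ q i := fun i => le_max_right _ _
  have hp0 : ∀ i, 0 ≤ p i := fun i => le_max_right _ _
  have hpq : ∀ i, p i * q i = 0 := by
    intro i; rcases le_total (x i) 0 with h | h
    · have : p i = 0 := max_eq_right h
      rw [this, zero_mul]
    · have : q i = 0 := max_eq_right (by linarith)
      rw [this, mul_zero]
  have hxeq : ∀ i, x i = p i - q i := by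
    intro i
    show x i = max (x i) 0 - max (-x i) 0
    rcases le_total (x i) 0 with h | h
    · rw [max_eq_right h, max_eq_left (by linarith : (0:ℝ) ≤ -x i)]; ring
    · rw [max_eq_left h, max_eq_right (by linarith : -x i ≤ 0)]; ring
  have hqAx : q ⬝ᵥ (A *ᵥ x) = q j := by
    rw [hAx]
    simp [dotProduct, Matrix.one_apply, mul_ite]
  have hqAp : q ⬝ᵥ (A *ᵥ p) ≤ 0 := by
    rw [dotProduct, ]
    refine Finset.sum_nonpos fun i _ => ?_
    rw [mulVec, dotProduct, Finset.mul_sum]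
    refine Finset.sum_nonpos fun l _ => ?_
    rcases eq_or_ne i l with rfl | hil
    · have : q i * (A i i * p i) = A i i * (p i * q i) := by ring
      rw [this, hpq, mul_zero]
    · have h1 : 0 ≤ q i * p l := mul_nonneg (hq0 i) (hp0 l)
      have h2 : A i l * (q i * p l) ≤ 0 :=
        mul_nonpos_iff.mpr (Or.inr ⟨hoff i l hil, h1⟩)
      calc q i * (A i l * p l) = A i l * (q i * p l) := by ring
        _ ≤ 0 := h2
  have hsub : p - q = x := by funext i; simp [hxeq i]
  have hqAq : q ⬝ᵥ (A *ᵥ q) ≤ 0 := by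
    have : q ⬝ᵥ (A *ᵥ x) = q ⬝ᵥ (A *ᵥ p) - q ⬝ᵥ (A *ᵥ q) := by
      rw [← hsub, Matrix.mulVec_sub, dotProduct_sub]
    have hqj : 0 ≤ q j := hq0 j
    rw [hqAx] at this
    linarith
  have hzero : q ⬝ᵥ (A *ᵥ q) = 0 := le_antisymm hqAq (by simpa using hpsd.dotProduct_mulVec_nonneg q)
  have hAq : A *ᵥ q = 0 := by
    have := (hpsd.dotProduct_mulVec_zero_iff q).mp (by simpa using hzero)
    exact this
  have hqzero : q = 0 := by
    have : A⁻¹ *ᵥ (A *ᵥ q) = q := by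
      rw [Matrix.mulVec_mulVec, Matrix.nonsing_inv_mul A hdet, Matrix.one_mulVec]
    rw [hAq, Matrix.mulVec_zero] at this
    exact this.symm
  have hqi0 : q i0 = 0 := by rw [hqzero]; rfl
  have hx0 : 0 ≤ x i0 := by
    have h' : max (-x i0) 0 = 0 := hqi0
    have := le_max_left (-x i0) 0
    rw [h'] at this; linarith
  exact hx0

/-- The Schur complement `S = L₂₂ − L₂₁ L₁₁⁻¹ L₁₂` of a graph Laplacian `L`
with respect to its first diagonal block is itself a graph Laplacian: `S` is symmetric,
has nonpositive off-diagonal entries, and satisfies `S · 𝟏ₘ = 0`. -/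
theorem schur_complement_is_graph_laplacian
    (n m : ℕ) (hm : 0 < m) (hmn : m < n)
    (L11 : Matrix (Fin (n - m)) (Fin (n - m)) ℝ)
    (L12 : Matrix (Fin (n - m)) (Fin m) ℝ)
    (L21 : Matrix (Fin m) (Fin (n - m)) ℝ)
    (L22 : Matrix (Fin m) (Fin m) ℝ)
    (L : Matrix (Fin (n - m) ⊕ Fin m) (Fin (n - m) ⊕ Fin m) ℝ)
    (hL : L = Matrix.fromBlocks L11 L12 L21 L22)
    (hsym : L.IsSymm)
    (hoff : ∀ i j, i ≠ j → L i j ≤ 0)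
    (hone : L *ᵥ (fun _ => (1 : ℝ)) = 0)
    (hinv : IsUnit L11.det)
    (S : Matrix (Fin m) (Fin m) ℝ)
    (hS : S = L22 - L21 * L11⁻¹ * L12) :
    S.IsSymm ∧ (∀ i j, i ≠ j → S i j ≤ 0) ∧ S *ᵥ (fun _ => (1 : ℝ)) = 0 := by
  -- block entries of L
  have e11 : ∀ i j, L (Sum.inl i) (Sum.inl j) = L11 i j := by intro i j; rw [hL]; rfl
  have e12 : ∀ i j, L (Sum.inl i) (Sum.inr j) = L12 i j := by intro i j; rw [hL]; rfl
  have e21 : ∀ i j, L (Sum.inr i) (Sum.inl j) = L21 i j := by intro i j; rw [hL]; rfl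
  have e22 : ∀ i j, L (Sum.inr i) (Sum.inr j) = L22 i j := by intro i j; rw [hL]; rfl
  -- symmetry of blocks
  have h11s : L11.IsSymm := by
    ext i j
    rw [transpose_apply, ← e11 j i, ← e11 i j]
    exact hsym.apply (Sum.inl i) (Sum.inl j)
  have h12t : L12ᵀ = L21 := by
    ext i j
    rw [transpose_apply, ← e12 j i, ← e21 i j]
    exact hsym.apply (Sum.inr i) (Sum.inl j)
  have h21t : L21ᵀ = L12 := by
    rw [← h12t, transpose_transpose]
  have h22s : L22.IsSymm := by
    ext i j
    rw [transpose_apply, ← e22 j i, ← e22 i j]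
    exact hsym.apply (Sum.inr i) (Sum.inr j)
  -- row sums of L
  have hrow : ∀ a, ∑ b, L a b = 0 := by
    intro a
    have := congrFun hone a
    simpa [mulVec, dotProduct] using this
  -- block row sums
  have hrow1 : ∀ i, (L11 *ᵥ (fun _ => (1:ℝ))) i + (L12 *ᵥ (fun _ => (1:ℝ))) i = 0 := by
    intro i
    have := hrow (Sum.inl i)
    rw [Fintype.sum_sum_type] at this
    simpa [mulVec, dotProduct, e11, e12] using this
  have hrow2 : ∀ i, (L21 *ᵥ (fun _ => (1:ℝ))) i + (L22 *ᵥ (fun _ => (1:ℝ))) i = 0 := by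
    intro i
    have := hrow (Sum.inr i)
    rw [Fintype.sum_sum_type] at this
    simpa [mulVec, dotProduct, e21, e22] using this
  -- L11 is positive semidefinite
  have hpsd : L11.PosSemidef := by
    refine posSemidef_iff_dotProduct_mulVec.mpr ⟨?_, ?_⟩
    · ext i j
      rw [conjTranspose_apply, star_trivial]
      exact h11s.apply i j
    · intro x
      have hy := laplacian_quad_nonneg L hsym hoff hrow (Sum.elim x 0)
      have heq : (Sum.elim x 0) ⬝ᵥ L *ᵥ (Sum.elim x 0) = x ⬝ᵥ L11 *ᵥ x := by
        rw [hL, fromBlocks_mulVec]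
        simp [dotProduct, Fintype.sum_sum_type, mulVec_zero]
      rw [heq] at hy
      simpa using hy
  have hinvnn : ∀ i j, 0 ≤ L11⁻¹ i j :=
    stieltjes_inv_nonneg L11 hpsd hinv
      (fun i j hij => by rw [← e11 i j]; exact hoff _ _ (by simp [hij]))
  refine ⟨?_, ?_, ?_⟩
  · -- symmetry
    rw [hS]
    show (L22 - L21 * L11⁻¹ * L12)ᵀ = L22 - L21 * L11⁻¹ * L12
    rw [transpose_sub, transpose_mul, transpose_mul, transpose_nonsing_inv,
      h11s, h12t, h21t, h22s]
    rw [Matrix.mul_assoc]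
  · -- off-diagonal
    intro i j hij
    rw [hS]
    have h22 : L22 i j ≤ 0 := by
      rw [← e22 i j]; exact hoff _ _ (by simp [hij])
    have hterm : 0 ≤ (L21 * L11⁻¹ * L12) i j := by
      rw [Matrix.mul_apply]
      refine Finset.sum_nonneg fun l _ => ?_
      have hinner : (L21 * L11⁻¹) i l ≤ 0 := by
        rw [Matrix.mul_apply]
        refine Finset.sum_nonpos fun k _ => ?_
        have h21 : L21 i k ≤ 0 := by
          rw [← e21 i k]; exact hoff _ _ (by simp)
        exact mul_nonpos_iff.mpr (Or.inr ⟨h21, hinvnn k l⟩)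
      have h12 : L12 l j ≤ 0 := by
        rw [← e12 l j]; exact hoff _ _ (by simp)
      exact mul_nonneg_iff.mpr (Or.inr ⟨hinner, h12⟩)
    simp only [Matrix.sub_apply]
    linarith
  · -- row sums
    rw [hS]
    have h1 : L12 *ᵥ (fun _ => (1:ℝ)) = -(L11 *ᵥ (fun _ => (1:ℝ))) := by
      funext i
      have := hrow1 i
      simp only [Pi.neg_apply]
      linarith
    have h2 : (L21 * L11⁻¹ * L12) *ᵥ (fun _ => (1:ℝ)) = L22 *ᵥ (fun _ => (1:ℝ)) := by
      rw [← Matrix.mulVec_mulVec, ← Matrix.mulVec_mulVec, h1, Matrix.mulVec_neg,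
        Matrix.mulVec_mulVec, Matrix.nonsing_inv_mul L11 hinv, Matrix.one_mulVec,
        Matrix.mulVec_neg]
      funext i
      have := hrow2 i
      simp only [Pi.neg_apply]
      linarith
    rw [Matrix.sub_mulVec, h2, sub_self]
end

section
/- The matrix Σ_{i=1}^{m} (eᵢᵀ L₂₂ 𝟏ₘ) eᵢ eᵢᵀ − L₂₁ L₁₁⁻¹ L₁₂, i.e., the diagonal matrix of row sums of L₂₂ minus L₂₁ L₁₁⁻¹ L₁₂, is a graph Laplacian: it is symmetric, has nonpositive off-diagonal entries, and annihilates the all-ones vector 𝟏ₘ. -/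
open Matrix

section Aux

variable {k : Type*} [Fintype k] [DecidableEq k]

lemma quad_expand (A : Matrix k k ℝ) (x : k → ℝ) :
    x ⬝ᵥ A *ᵥ x = ∑ i, ∑ j, A i j * x i * x j := by
  simp only [dotProduct, mulVec, Finset.mul_sum]
  exact Finset.sum_congr rfl fun i _ => Finset.sum_congr rfl fun j _ => by ring

lemma psd_of_laplacian_like (A : Matrix k k ℝ) (hsym : A.IsSymm)
    (hoff : ∀ i j, i ≠ j → A i j ≤ 0)
    (hrow : ∀ i, 0 ≤ ∑ j, A i j) : A.PosSemidef := by
  have hsymm : ∀ i j, A j i = A i j := fun i j => hsym.apply i j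
  rw [posSemidef_iff_dotProduct_mulVec]
  constructor
  · ext i j
    simp [conjTranspose_apply, hsymm i j]
  · intro x
    rw [show star x = x from rfl, quad_expand]
    have hT1 : 0 ≤ ∑ i, ∑ j, A i j * x i ^ 2 / 2 := by
      apply Finset.sum_nonneg; intro i _
      have h : ∑ j, A i j * x i ^ 2 / 2 = (∑ j, A i j) * (x i ^ 2 / 2) := by
        rw [Finset.sum_mul]
        exact Finset.sum_congr rfl fun j _ => by ring
      rw [h]
      exact mul_nonneg (hrow i) (by positivity)
    have hT2 : 0 ≤ ∑ i, ∑ j, A i j * x j ^ 2 / 2 := by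
      rw [Finset.sum_comm]
      apply Finset.sum_nonneg; intro j _
      have h : ∑ i, A i j * x j ^ 2 / 2 = (∑ i, A j i) * (x j ^ 2 / 2) := by
        rw [Finset.sum_mul]
        exact Finset.sum_congr rfl fun i _ => by rw [hsymm i j]; ring
      rw [h]
      have : ∑ i, A j i = ∑ i, A j i := rfl
      exact mul_nonneg (hrow j) (by positivity)
    have hT3 : ∑ i, ∑ j, A i j * (x i - x j) ^ 2 / 2 ≤ 0 := by
      apply Finset.sum_nonpos; intro i _
      apply Finset.sum_nonpos; intro j _
      rcases eq_or_ne i j with rfl | hij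
      · simp
      · have h1 : A i j ≤ 0 := hoff i j hij
        have h2 : 0 ≤ (x i - x j) ^ 2 / 2 := by positivity
        exact div_nonpos_of_nonpos_of_nonneg (mul_nonpos_of_nonpos_of_nonneg h1 (by positivity)) (by norm_num)
    have hsplit : ∑ i, ∑ j, A i j * x i * x j
        = (∑ i, ∑ j, A i j * x i ^ 2 / 2) + (∑ i, ∑ j, A i j * x j ^ 2 / 2)
          - (∑ i, ∑ j, A i j * (x i - x j) ^ 2 / 2) := by
      rw [← Finset.sum_add_distrib, ← Finset.sum_sub_distrib]
      apply Finset.sum_congr rfl; intro i _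
      rw [← Finset.sum_add_distrib, ← Finset.sum_sub_distrib]
      exact Finset.sum_congr rfl fun j _ => by ring
    linarith

lemma inv_nonneg_of_laplacian_like (A : Matrix k k ℝ) (hsym : A.IsSymm)
    (hoff : ∀ i j, i ≠ j → A i j ≤ 0)
    (hrow : ∀ i, 0 ≤ ∑ j, A i j)
    (hinv : IsUnit A.det) : ∀ i j, 0 ≤ A⁻¹ i j := by
  have hpsd := psd_of_laplacian_like A hsym hoff hrow
  have hsymm : ∀ i j, A j i = A i j := fun i j => hsym.apply i j
  intro i0 j
  set x : k → ℝ := fun i => A⁻¹ i j with hxdef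
  have hAx : A *ᵥ x = Pi.single j 1 := by
    funext i'
    have h1 : A * A⁻¹ = 1 := Matrix.mul_nonsing_inv A hinv
    have : (A *ᵥ x) i' = (A * A⁻¹) i' j := by
      simp [mulVec, Matrix.mul_apply, dotProduct, hxdef]
    rw [this, h1]
    simp [Matrix.one_apply, Pi.single_apply]
  set y : k → ℝ := fun i => |x i| with hydef
  have hxq : x ⬝ᵥ A *ᵥ x = x j := by
    rw [hAx, dotProduct_single, mul_one]
  have hyAx : y ⬝ᵥ A *ᵥ x = y j := by
    rw [hAx, dotProduct_single, mul_one]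
  have hvm : x ᵥ* A = A *ᵥ x := by
    conv_lhs => rw [← hsym.eq]
    rw [Matrix.vecMul_transpose]
  have hxAy : x ⬝ᵥ A *ᵥ y = y j := by
    rw [Matrix.dotProduct_mulVec, hvm, hAx, single_dotProduct, one_mul]
  have hyq : y ⬝ᵥ A *ᵥ y ≤ x j := by
    rw [← hxq, quad_expand, quad_expand]
    apply Finset.sum_le_sum; intro i _
    apply Finset.sum_le_sum; intro l _
    rcases eq_or_ne i l with rfl | hil
    · show A i i * |x i| * |x i| ≤ A i i * x i * x i
      rw [mul_assoc, mul_assoc, abs_mul_abs_self]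
    · have h1 : A i l ≤ 0 := hoff i l hil
      have h2 : x i * x l ≤ y i * y l := by
        rw [hydef]; calc x i * x l ≤ |x i * x l| := le_abs_self _
          _ = |x i| * |x l| := abs_mul _ _
      calc A i l * y i * y l = A i l * (y i * y l) := by ring
        _ ≤ A i l * (x i * x l) := mul_le_mul_of_nonpos_left h2 h1
        _ = A i l * x i * x l := by ring
  set z : k → ℝ := y - x with hzdef
  have hzq : z ⬝ᵥ A *ᵥ z ≤ 0 := by
    have hexp : z ⬝ᵥ A *ᵥ z = y ⬝ᵥ A *ᵥ y - y ⬝ᵥ A *ᵥ x - x ⬝ᵥ A *ᵥ y + x ⬝ᵥ A *ᵥ x := by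
      rw [hzdef]
      simp only [Matrix.mulVec_sub, sub_dotProduct, dotProduct_sub]
      ring
    rw [hexp, hxq, hyAx, hxAy]
    have hxy : x j ≤ y j := le_abs_self _
    linarith
  have hz0 : z ⬝ᵥ A *ᵥ z = 0 := le_antisymm hzq (hpsd.dotProduct_mulVec_nonneg z)
  have hAz : A *ᵥ z = 0 := (hpsd.dotProduct_mulVec_zero_iff z).mp hz0
  have hz : z = 0 := by
    have h1 : A⁻¹ * A = 1 := Matrix.nonsing_inv_mul A hinv
    calc z = (A⁻¹ * A) *ᵥ z := by rw [h1, Matrix.one_mulVec]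
      _ = A⁻¹ *ᵥ (A *ᵥ z) := by rw [Matrix.mulVec_mulVec]
      _ = 0 := by rw [hAz, Matrix.mulVec_zero]
  have hy0 : y i0 = x i0 := by
    have h := congrFun hz i0
    simp [hzdef] at h
    linarith [h]
  exact le_of_le_of_eq (abs_nonneg (x i0) : (0:ℝ) ≤ y i0) hy0

end Aux

/-- The diagonal matrix of row sums of `L₂₂` minus `L₂₁ L₁₁⁻¹ L₁₂` is a graph
Laplacian: it is symmetric, has nonpositive off-diagonal entries, and annihilates `𝟏ₘ`. -/
theorem rowSumDiag_sub_schur_term_is_graph_laplacian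
    (n m : ℕ) (hm : 0 < m) (hmn : m < n)
    (L11 : Matrix (Fin (n - m)) (Fin (n - m)) ℝ)
    (L12 : Matrix (Fin (n - m)) (Fin m) ℝ)
    (L21 : Matrix (Fin m) (Fin (n - m)) ℝ)
    (L22 : Matrix (Fin m) (Fin m) ℝ)
    (L : Matrix (Fin (n - m) ⊕ Fin m) (Fin (n - m) ⊕ Fin m) ℝ)
    (hL : L = Matrix.fromBlocks L11 L12 L21 L22)
    (hsym : L.IsSymm)
    (hoff : ∀ i j, i ≠ j → L i j ≤ 0)
    (hone : L *ᵥ (fun _ => (1 : ℝ)) = 0)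
    (hinv : IsUnit L11.det)
    (D : Matrix (Fin m) (Fin m) ℝ)
    (hD : D = Matrix.diagonal (fun i => ∑ j, L22 i j) - L21 * L11⁻¹ * L12) :
    D.IsSymm ∧ (∀ i j, i ≠ j → D i j ≤ 0) ∧ D *ᵥ (fun _ => (1 : ℝ)) = 0 := by
  subst hL
  have hLsym : ∀ a b, Matrix.fromBlocks L11 L12 L21 L22 b a
      = Matrix.fromBlocks L11 L12 L21 L22 a b := fun a b => hsym.apply a b
  -- block symmetry facts
  have h11sym : L11.IsSymm := by
    ext i j
    simpa using hLsym (Sum.inl i) (Sum.inl j)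
  have hT12 : L12ᵀ = L21 := by
    ext i j
    simpa using hLsym (Sum.inr i) (Sum.inl j)
  have hT21 : L21ᵀ = L12 := by
    ext i j
    simpa using hLsym (Sum.inl i) (Sum.inr j)
  -- entry sign facts
  have h11off : ∀ i j, i ≠ j → L11 i j ≤ 0 := by
    intro i j hij
    simpa using hoff (Sum.inl i) (Sum.inl j) (by simp [hij])
  have h12neg : ∀ i j, L12 i j ≤ 0 := by
    intro i j
    simpa using hoff (Sum.inl i) (Sum.inr j) (by simp)
  have h21neg : ∀ i j, L21 i j ≤ 0 := by
    intro i j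
    simpa using hoff (Sum.inr i) (Sum.inl j) (by simp)
  -- row-sum facts from hone
  have hone1 : ∀ i, (L11 *ᵥ (fun _ => (1:ℝ))) i + (L12 *ᵥ (fun _ => (1:ℝ))) i = 0 := by
    intro i
    have := congrFun hone (Sum.inl i)
    simpa [Matrix.mulVec, dotProduct, Fintype.sum_sum_type] using this
  have hone2 : ∀ i, (L21 *ᵥ (fun _ => (1:ℝ))) i + (L22 *ᵥ (fun _ => (1:ℝ))) i = 0 := by
    intro i
    have := congrFun hone (Sum.inr i)
    simpa [Matrix.mulVec, dotProduct, Fintype.sum_sum_type] using this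
  have h11row : ∀ i, 0 ≤ ∑ j, L11 i j := by
    intro i
    have h := hone1 i
    simp only [Matrix.mulVec, dotProduct, mul_one] at h
    have h2 : ∑ j, L12 i j ≤ 0 := Finset.sum_nonpos fun j _ => h12neg i j
    linarith
  have hInv : ∀ i j, 0 ≤ L11⁻¹ i j :=
    inv_nonneg_of_laplacian_like L11 h11sym h11off h11row hinv
  refine ⟨?_, ?_, ?_⟩
  · -- symmetry
    have hMsym : (L21 * L11⁻¹ * L12)ᵀ = L21 * L11⁻¹ * L12 := by
      rw [Matrix.transpose_mul, Matrix.transpose_mul, Matrix.transpose_nonsing_inv,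
        h11sym.eq, hT12, hT21, Matrix.mul_assoc]
    rw [hD]
    show _ᵀ = _
    rw [Matrix.transpose_sub, Matrix.diagonal_transpose, hMsym]
  · -- off-diagonal
    intro i j hij
    rw [hD]
    have hterm : 0 ≤ (L21 * L11⁻¹ * L12) i j := by
      rw [Matrix.mul_apply]
      apply Finset.sum_nonneg; intro l _
      have hin : (L21 * L11⁻¹) i l ≤ 0 := by
        rw [Matrix.mul_apply]
        apply Finset.sum_nonpos; intro s _
        exact mul_nonpos_of_nonpos_of_nonneg (h21neg i s) (hInv s l)
      nlinarith [h12neg l j, hin]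
    have hdiag : Matrix.diagonal (fun i => ∑ j, L22 i j) i j = 0 :=
      Matrix.diagonal_apply_ne _ hij
    simp only [Matrix.sub_apply, hdiag]
    linarith
  · -- kernel
    rw [hD, Matrix.sub_mulVec]
    have h1 : L12 *ᵥ (fun _ => (1:ℝ)) = -(L11 *ᵥ (fun _ => (1:ℝ))) := by
      funext i; have := hone1 i; simp only [Pi.neg_apply]; linarith
    have h2 : L21 *ᵥ (fun _ => (1:ℝ)) = -(L22 *ᵥ (fun _ => (1:ℝ))) := by
      funext i; have := hone2 i; simp only [Pi.neg_apply]; linarith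
    have h3 : (L21 * L11⁻¹ * L12) *ᵥ (fun _ => (1:ℝ)) = L22 *ᵥ (fun _ => (1:ℝ)) := by
      rw [← Matrix.mulVec_mulVec, ← Matrix.mulVec_mulVec, h1, Matrix.mulVec_neg,
        Matrix.mulVec_mulVec, Matrix.nonsing_inv_mul L11 hinv, Matrix.one_mulVec,
        Matrix.mulVec_neg, h2, neg_neg]
    rw [h3]
    funext i
    simp [Matrix.mulVec_diagonal, Matrix.mulVec, dotProduct, Matrix.diagonal_apply,
      Finset.sum_ite_eq, Finset.sum_ite_eq']
end

section
/- (Boundedness of the discrete trace operator.) For every u : (ℤ/kℤ) × {1,…,ℓ} → ℝ, the boundary restriction φ(i) = u(i,1) satisfies |φ|_Γ² ≤ max{3c, 4π²} · |u|_G². -/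
open Real Finset

noncomputable section

/-- The cycle distance on `ℤ/kℤ`: `d(p,q) = min{(p−q) mod k, (q−p) mod k}`. -/
def cycDist (k : ℕ) (p q : ZMod k) : ℕ := min (p - q).val (q - p).val

/-- The boundary seminorm squared:
`|φ|_Γ² = Σ_{{p,q} : p ≠ q} (φ(p) − φ(q))² / d(p,q)²`, the sum being over unordered
pairs of distinct elements of `ℤ/kℤ`. -/
def bSemiSq (k : ℕ) [NeZero k] (φ : ZMod k → ℝ) : ℝ :=
  (1 / 2) * ∑ p : ZMod k, ∑ q : ZMod k,
    if p ≠ q then (φ p - φ q) ^ 2 / (cycDist k p q : ℝ) ^ 2 else 0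

/-- The energy seminorm squared on `G_{k,ℓ} = C_k □ P_ℓ` (vertices `(i,j)`,
`i ∈ ℤ/kℤ`, `j ∈ {1,…,ℓ}`):
`|u|_G² = Σ_i Σ_{j=1}^{ℓ} (u(i+1,j) − u(i,j))² + Σ_i Σ_{j=1}^{ℓ−1} (u(i,j+1) − u(i,j))²`. -/
def energySq (k ℓ : ℕ) [NeZero k] (u : ZMod k → ℕ → ℝ) : ℝ :=
  (∑ i : ZMod k, ∑ j ∈ Finset.Icc 1 ℓ, (u (i + 1) j - u i j) ^ 2)
  + ∑ i : ZMod k, ∑ j ∈ Finset.Icc 1 (ℓ - 1), (u i (j + 1) - u i j) ^ 2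

namespace TraceAux



lemma sq_sum_le (s : Finset ℕ) (f : ℕ → ℝ) :
    (∑ i ∈ s, f i) ^ 2 ≤ (s.card : ℝ) * ∑ i ∈ s, f i ^ 2 := by
  have h := Finset.sum_mul_sq_le_sq_mul_sq s (fun _ => (1:ℝ)) f
  simpa using h

lemma shift_sum {k : ℕ} [NeZero k] (g : ZMod k → ℝ) (t : ZMod k) :
    ∑ p : ZMod k, g (p + t) = ∑ p : ZMod k, g p :=
  Fintype.sum_equiv (Equiv.addRight t) _ _ (fun _ => rfl)

lemma tele_zmod {k : ℕ} [NeZero k] (u : ZMod k → ℕ → ℝ) (j : ℕ) (v : ℕ) (p : ZMod k) :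
    u (p + (v : ZMod k)) j - u p j
      = ∑ i ∈ range v, (u (p + (i : ZMod k) + 1) j - u (p + (i : ZMod k)) j) := by
  induction v with
  | zero => simp
  | succ n ih =>
      rw [sum_range_succ, ← ih]
      push_cast
      rw [← add_assoc]
      ring

lemma tele_vert (b : ℕ → ℝ) (j : ℕ) (hj : 1 ≤ j) :
    b j - b 1 = ∑ i ∈ range (j - 1), (b (i + 2) - b (i + 1)) := by
  have h := Finset.sum_range_sub (fun i => b (i + 1)) (j - 1)
  rw [show j - 1 + 1 = j by omega] at h
  rw [← h]

lemma tele_g (g : ℕ → ℝ) (a : ℕ) : ∀ b, a ≤ b →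
    ∑ v ∈ Icc (a+1) b, (g (v-1) - g v) = g a - g b := by
  intro b hb
  induction b, hb using Nat.le_induction with
  | base => simp
  | succ n hn ih =>
      rw [Finset.sum_Icc_succ_top (by omega), ih]
      have : n + 1 - 1 = n := by omega
      rw [this]; ring



-- Σ_{m=1}^n 1/√m ≤ 2√n
lemma sum_inv_sqrt : ∀ n : ℕ, ∑ m ∈ Icc 1 n, (Real.sqrt m)⁻¹ ≤ 2 * Real.sqrt n := by
  intro n
  induction n with
  | zero => simp
  | succ n ih =>
      rw [Finset.sum_Icc_succ_top (by omega)]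
      have hx := Real.sqrt_nonneg (n : ℝ)
      have hy : (0:ℝ) < Real.sqrt ((n:ℝ)+1) := Real.sqrt_pos.2 (by positivity)
      have hx2 : Real.sqrt (n:ℝ) ^ 2 = n := Real.sq_sqrt (by positivity)
      have hy2 : Real.sqrt ((n:ℝ)+1) ^ 2 = (n:ℝ)+1 := Real.sq_sqrt (by positivity)
      have key : (Real.sqrt (((n:ℕ):ℝ)+1))⁻¹ ≤ 2 * Real.sqrt ((n:ℝ)+1) - 2 * Real.sqrt (n:ℝ) := by
        rw [inv_eq_one_div, div_le_iff₀ hy]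
        nlinarith [sq_nonneg (Real.sqrt ((n:ℝ)+1) - Real.sqrt (n:ℝ))]
      push_cast
      push_cast at ih key
      linarith
-- per-term far bound:  2√(v−1)/v² ≤ 4(1/√(v−1) − 1/√v)  for v ≥ 2
lemma far_term (v : ℕ) (hv : 2 ≤ v) :
    2 * Real.sqrt ((v:ℝ) - 1) / (v:ℝ)^2
      ≤ 4 * ((Real.sqrt ((v:ℝ) - 1))⁻¹ - (Real.sqrt (v:ℝ))⁻¹) := by
  have hv1 : (1:ℝ) ≤ (v:ℝ) - 1 := by
    have : (2:ℝ) ≤ (v:ℝ) := by exact_mod_cast hv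
    linarith
  have hx : (0:ℝ) < Real.sqrt ((v:ℝ) - 1) := Real.sqrt_pos.2 (by linarith)
  have hy : (0:ℝ) < Real.sqrt (v:ℝ) := Real.sqrt_pos.2 (by linarith)
  have hx2 : Real.sqrt ((v:ℝ)-1) ^ 2 = (v:ℝ)-1 := Real.sq_sqrt (by linarith)
  have hy2 : Real.sqrt (v:ℝ) ^ 2 = (v:ℝ) := Real.sq_sqrt (by linarith)
  set x := Real.sqrt ((v:ℝ)-1)
  set y := Real.sqrt (v:ℝ)
  have hvpos : (0:ℝ) < (v:ℝ)^2 := by positivity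
  rw [div_le_iff₀ hvpos]
  have hxy : x * y ≤ (v:ℝ) - 1/2 := by
    nlinarith [sq_nonneg (x*y - ((v:ℝ) - 1/2))]
  have h4 : 4 * (x⁻¹ - y⁻¹) = 4 * (y - x) / (x * y) := by
    field_simp
  rw [h4]
  have hxypos : (0:ℝ) < x * y := by positivity
  rw [div_mul_eq_mul_div, le_div_iff₀ hxypos]
  -- goal: 2x * (x*y) ≤ 4(y-x) * v²
  have hxley : x ≤ y := by nlinarith
  have h1 : (y - x) * (x + y) = 1 := by nlinarith
  nlinarith [mul_pos hx hy, mul_pos (mul_pos hx hy) hy,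
    mul_nonneg (mul_nonneg hx.le hx.le) hy.le,
    mul_le_mul_of_nonneg_right (mul_le_mul_of_nonneg_right hxley hy.le) hy.le,
    mul_le_mul_of_nonneg_right hxley (mul_nonneg hy.le hy.le)]



lemma swap_tri (L : ℕ) (f : ℕ → ℕ → ℝ) :
    ∑ v ∈ Icc 1 L, ∑ m ∈ Icc 1 (v-1), f v m
      = ∑ m ∈ Icc 1 (L-1), ∑ v ∈ Icc (m+1) L, f v m := by
  have h1 : ∀ v ∈ Icc 1 L, ∑ m ∈ Icc 1 (v-1), f v m
      = ∑ m ∈ Icc 1 L, if m < v then f v m else 0 := by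
    intro v hv
    rw [← Finset.sum_filter]
    apply Finset.sum_congr _ (fun _ _ => rfl)
    simp only [mem_Icc] at hv
    ext m
    simp only [mem_Icc, mem_filter]
    omega
  have h2 : ∀ m ∈ Icc 1 L, ∑ v ∈ Icc 1 L, (if m < v then f v m else 0)
      = ∑ v ∈ Icc (m+1) L, f v m := by
    intro m hm
    rw [← Finset.sum_filter]
    apply Finset.sum_congr _ (fun _ _ => rfl)
    simp only [mem_Icc] at hm
    ext v
    simp only [mem_Icc, mem_filter]
    omega
  rw [Finset.sum_congr rfl h1, Finset.sum_comm, Finset.sum_congr rfl h2]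
  symm
  apply Finset.sum_subset
  · intro m hm; simp only [mem_Icc] at hm ⊢; omega
  · intro m hm hnm
    simp only [mem_Icc] at hm hnm
    have hmL : L < m + 1 := by omega
    rw [Finset.Icc_eq_empty_of_lt hmL]
    simp

-- weighted Cauchy-Schwarz step
lemma cs_step (b : ℕ → ℝ) (v : ℕ) (hv : 1 ≤ v) :
    (b v - b 1)^2 ≤ 2 * Real.sqrt ((v:ℝ) - 1)
      * ∑ m ∈ Icc 1 (v-1), Real.sqrt m * (b (m+1) - b m)^2 := by
  have htel : b v - b 1 = ∑ m ∈ Icc 1 (v-1), (b (m+1) - b m) := by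
    rw [show Icc 1 (v-1) = Ico 1 ((v-1)+1) by rw [Finset.Ico_add_one_right_eq_Icc],
      show (v-1)+1 = v by omega, Finset.sum_Ico_eq_sum_range]
    have h := Finset.sum_range_sub (fun i => b (i + 1)) (v - 1)
    rw [show v - 1 + 1 = v by omega] at h
    rw [← h]
    apply Finset.sum_congr rfl
    intro i _
    norm_num [add_comm, add_assoc, add_left_comm]
  rw [htel]
  set I := Icc 1 (v-1)
  have key : ∀ m ∈ I, (b (m+1) - b m)
      = Real.sqrt ((Real.sqrt m)⁻¹) * (Real.sqrt (Real.sqrt m) * (b (m+1) - b m)) := by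
    intro m hm
    simp only [I, mem_Icc] at hm
    have hmpos : (0:ℝ) < Real.sqrt m := Real.sqrt_pos.2 (by exact_mod_cast hm.1)
    rw [← mul_assoc, ← Real.sqrt_mul (by positivity), inv_mul_cancel₀ hmpos.ne',
      Real.sqrt_one, one_mul]
  rw [Finset.sum_congr rfl key]
  calc (∑ m ∈ I, Real.sqrt ((Real.sqrt m)⁻¹) * (Real.sqrt (Real.sqrt m) * (b (m+1) - b m)))^2
      ≤ (∑ m ∈ I, Real.sqrt ((Real.sqrt m)⁻¹)^2)
        * ∑ m ∈ I, (Real.sqrt (Real.sqrt m) * (b (m+1) - b m))^2 :=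
        Finset.sum_mul_sq_le_sq_mul_sq I _ _
    _ ≤ (2 * Real.sqrt ((v:ℝ) - 1)) * ∑ m ∈ I, Real.sqrt m * (b (m+1) - b m)^2 := by
        apply mul_le_mul
        · calc ∑ m ∈ I, Real.sqrt ((Real.sqrt m)⁻¹)^2
              = ∑ m ∈ I, (Real.sqrt m)⁻¹ := by
                apply Finset.sum_congr rfl
                intro m _
                exact Real.sq_sqrt (by positivity)
            _ ≤ 2 * Real.sqrt ((v-1 : ℕ) : ℝ) := sum_inv_sqrt (v-1)
            _ = 2 * Real.sqrt ((v:ℝ) - 1) := by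
                congr 1
                congr 1
                push_cast [Nat.cast_sub hv]
                ring
        · apply le_of_eq
          apply Finset.sum_congr rfl
          intro m _
          rw [mul_pow, Real.sq_sqrt (Real.sqrt_nonneg _)]
        · positivity
        · positivity


lemma core {k : ℕ} [NeZero k] (u : ZMod k → ℕ → ℝ) (v j : ℕ) :
    ∑ p : ZMod k, (u p 1 - u (p + (v:ZMod k)) 1)^2
      ≤ 3 * (v:ℝ)^2 * (∑ p : ZMod k, (u (p+1) j - u p j)^2)
        + 6 * ∑ p : ZMod k, (u p j - u p 1)^2 := by
  have hpt : ∀ p : ZMod k, (u p 1 - u (p + (v:ZMod k)) 1)^2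
      ≤ 3*(u p j - u p 1)^2 + 3*(u (p + (v:ZMod k)) j - u p j)^2
        + 3*(u (p + (v:ZMod k)) j - u (p + (v:ZMod k)) 1)^2 := by
    intro p
    nlinarith [sq_nonneg ((u p 1 - u p j) - (u p j - u (p + (v:ZMod k)) j)),
      sq_nonneg ((u p j - u (p + (v:ZMod k)) j) - (u (p + (v:ZMod k)) j - u (p + (v:ZMod k)) 1)),
      sq_nonneg ((u p 1 - u p j) - (u (p + (v:ZMod k)) j - u (p + (v:ZMod k)) 1))]
  have hB : ∑ p : ZMod k, (u (p + (v:ZMod k)) j - u p j)^2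
      ≤ (v:ℝ)^2 * ∑ p : ZMod k, (u (p+1) j - u p j)^2 := by
    have hBp : ∀ p : ZMod k, (u (p + (v:ZMod k)) j - u p j)^2
        ≤ (v:ℝ) * ∑ i ∈ range v, (u (p + (i:ZMod k) + 1) j - u (p + (i:ZMod k)) j)^2 := by
      intro p
      rw [tele_zmod u j v p]
      have h := sq_sum_le (range v) (fun i => u (p + (i:ZMod k) + 1) j - u (p + (i:ZMod k)) j)
      rwa [Finset.card_range] at h
    calc ∑ p : ZMod k, (u (p + (v:ZMod k)) j - u p j)^2
        ≤ ∑ p : ZMod k, (v:ℝ) * ∑ i ∈ range v, (u (p + (i:ZMod k) + 1) j - u (p + (i:ZMod k)) j)^2 :=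
          Finset.sum_le_sum (fun p _ => hBp p)
      _ = (v:ℝ) * ∑ i ∈ range v, ∑ p : ZMod k, (u (p + (i:ZMod k) + 1) j - u (p + (i:ZMod k)) j)^2 := by
          rw [← Finset.mul_sum, Finset.sum_comm]
      _ = (v:ℝ) * ∑ i ∈ range v, ∑ p : ZMod k, (u (p + 1) j - u p j)^2 := by
          congr 1
          apply Finset.sum_congr rfl
          intro i _
          exact shift_sum (fun q => (u (q + 1) j - u q j)^2) (i:ZMod k)
      _ = (v:ℝ)^2 * ∑ p : ZMod k, (u (p+1) j - u p j)^2 := by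
          rw [Finset.sum_const, Finset.card_range, nsmul_eq_mul]
          ring
  have hC : ∑ p : ZMod k, (u (p + (v:ZMod k)) j - u (p + (v:ZMod k)) 1)^2
      = ∑ p : ZMod k, (u p j - u p 1)^2 :=
    shift_sum (fun q => (u q j - u q 1)^2) (v:ZMod k)
  calc ∑ p : ZMod k, (u p 1 - u (p + (v:ZMod k)) 1)^2
      ≤ ∑ p : ZMod k, (3*(u p j - u p 1)^2 + 3*(u (p + (v:ZMod k)) j - u p j)^2
          + 3*(u (p + (v:ZMod k)) j - u (p + (v:ZMod k)) 1)^2) :=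
        Finset.sum_le_sum (fun p _ => hpt p)
    _ = 3*(∑ p : ZMod k, (u p j - u p 1)^2) + 3*(∑ p : ZMod k, (u (p + (v:ZMod k)) j - u p j)^2)
          + 3*(∑ p : ZMod k, (u (p + (v:ZMod k)) j - u (p + (v:ZMod k)) 1)^2) := by
        rw [Finset.sum_add_distrib, Finset.sum_add_distrib, ← Finset.mul_sum, ← Finset.mul_sum,
          ← Finset.mul_sum]
    _ ≤ 3 * (v:ℝ)^2 * (∑ p : ZMod k, (u (p+1) j - u p j)^2)
        + 6 * ∑ p : ZMod k, (u p j - u p 1)^2 := by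
        rw [hC]
        nlinarith [hB]

lemma tele_icc (b : ℕ → ℝ) (v : ℕ) (hv : 1 ≤ v) :
    b v - b 1 = ∑ m ∈ Icc 1 (v-1), (b (m+1) - b m) := by
  rw [show Icc 1 (v-1) = Ico 1 ((v-1)+1) by rw [Finset.Ico_add_one_right_eq_Icc],
    show (v-1)+1 = v by omega, Finset.sum_Ico_eq_sum_range]
  have h := Finset.sum_range_sub (fun i => b (i + 1)) (v - 1)
  rw [show v - 1 + 1 = v by omega] at h
  rw [← h]
  apply Finset.sum_congr rfl
  intro i _
  rw [add_comm 1 i]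

lemma vert_bound (b : ℕ → ℝ) (j : ℕ) (hj : 1 ≤ j) :
    (b j - b 1)^2 ≤ ((j:ℝ) - 1) * ∑ m ∈ Icc 1 (j-1), (b (m+1) - b m)^2 := by
  rw [tele_icc b j hj]
  have h := sq_sum_le (Icc 1 (j-1)) (fun m => b (m+1) - b m)
  have hc : (((Icc 1 (j-1)).card : ℕ) : ℝ) = (j:ℝ) - 1 := by
    rw [Nat.card_Icc]
    push_cast [Nat.cast_sub hj]
    ring
  rwa [hc] at h

lemma sum_inv_sq (l S : ℕ) (hl : 1 ≤ l) (hlS : l ≤ S) :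
    ∑ v ∈ Ioc l S, (((v:ℝ))^2)⁻¹ ≤ ((l:ℝ))⁻¹ := by
  have hIoc : Ioc l S = Icc (l+1) S := by ext x; simp only [mem_Icc, mem_Ioc]; omega
  rw [hIoc]
  have hper : ∀ v ∈ Icc (l+1) S, (((v:ℝ))^2)⁻¹ ≤ (((v-1:ℕ):ℝ))⁻¹ - (((v:ℕ):ℝ))⁻¹ := by
    intro v hv
    simp only [mem_Icc] at hv
    have hv2 : 2 ≤ v := by omega
    have hc : ((v-1:ℕ):ℝ) = (v:ℝ) - 1 := by
      push_cast [Nat.cast_sub (by omega : 1 ≤ v)]; ring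
    rw [hc]
    have hx : (2:ℝ) ≤ (v:ℝ) := by exact_mod_cast hv2
    have hp1 : (0:ℝ) < (v:ℝ) - 1 := by linarith
    have hp2 : (0:ℝ) < (v:ℝ) := by linarith
    rw [inv_sub_inv hp1.ne' hp2.ne', show (v:ℝ) - ((v:ℝ)-1) = 1 by ring, inv_eq_one_div]
    apply one_div_le_one_div_of_le (by positivity)
    nlinarith
  calc ∑ v ∈ Icc (l+1) S, (((v:ℝ))^2)⁻¹
      ≤ ∑ v ∈ Icc (l+1) S, ((((v-1:ℕ):ℝ))⁻¹ - (((v:ℕ):ℝ))⁻¹) := Finset.sum_le_sum hper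
    _ = ((l:ℝ))⁻¹ - ((S:ℝ))⁻¹ := tele_g (fun x : ℕ => ((x:ℝ))⁻¹) l S hlS
    _ ≤ ((l:ℝ))⁻¹ := by
        have : (0:ℝ) ≤ ((S:ℝ))⁻¹ := by positivity
        linarith


lemma hardy (b : ℕ → ℝ) (L : ℕ) :
    ∑ v ∈ Icc 1 L, (b v - b 1)^2 / (v:ℝ)^2
      ≤ 4 * ∑ m ∈ Icc 1 (L-1), (b (m+1) - b m)^2 := by
  have main : ∑ v ∈ Icc 1 L, (b v - b 1)^2 / (v:ℝ)^2
      ≤ ∑ m ∈ Icc 1 (L-1), ∑ v ∈ Icc (m+1) L,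
          (2 * Real.sqrt ((v:ℝ) - 1) / (v:ℝ)^2) * (Real.sqrt m * (b (m+1) - b m)^2) := by
    rw [← swap_tri L (fun v m => (2 * Real.sqrt ((v:ℝ) - 1) / (v:ℝ)^2)
        * (Real.sqrt m * (b (m+1) - b m)^2))]
    apply Finset.sum_le_sum
    intro v hv
    simp only [mem_Icc] at hv
    have hv2 : (0:ℝ) < (v:ℝ)^2 := by
      have : (1:ℝ) ≤ (v:ℝ) := by exact_mod_cast hv.1
      positivity
    calc (b v - b 1)^2 / (v:ℝ)^2
        ≤ (2 * Real.sqrt ((v:ℝ) - 1)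
            * ∑ m ∈ Icc 1 (v-1), Real.sqrt m * (b (m+1) - b m)^2) / (v:ℝ)^2 := by
          gcongr
          exact cs_step b v hv.1
      _ = ∑ m ∈ Icc 1 (v-1), (2 * Real.sqrt ((v:ℝ) - 1) / (v:ℝ)^2)
            * (Real.sqrt m * (b (m+1) - b m)^2) := by
          rw [Finset.mul_sum, Finset.sum_div]
          apply Finset.sum_congr rfl
          intro m _
          ring
  refine main.trans ?_
  rw [Finset.mul_sum]
  apply Finset.sum_le_sum
  intro m hm
  simp only [mem_Icc] at hm
  have hm1 : (1:ℝ) ≤ (m:ℝ) := by exact_mod_cast hm.1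
  have hsm : (0:ℝ) < Real.sqrt m := Real.sqrt_pos.2 (by linarith)
  calc ∑ v ∈ Icc (m+1) L, (2 * Real.sqrt ((v:ℝ) - 1) / (v:ℝ)^2)
          * (Real.sqrt m * (b (m+1) - b m)^2)
      ≤ ∑ v ∈ Icc (m+1) L, (4 * (((fun x : ℕ => (Real.sqrt (x:ℝ))⁻¹) (v-1))
          - (Real.sqrt (v:ℝ))⁻¹)) * (Real.sqrt m * (b (m+1) - b m)^2) := by
        apply Finset.sum_le_sum
        intro v hv
        simp only [mem_Icc] at hv
        have hv2 : 2 ≤ v := by omega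
        apply mul_le_mul_of_nonneg_right _ (by positivity)
        have hc : ((v-1 : ℕ) : ℝ) = (v:ℝ) - 1 := by
          push_cast [Nat.cast_sub (by omega : 1 ≤ v)]; ring
        show 2 * Real.sqrt ((v:ℝ) - 1) / (v:ℝ)^2
          ≤ 4 * ((Real.sqrt ((v-1:ℕ):ℝ))⁻¹ - (Real.sqrt (v:ℝ))⁻¹)
        rw [hc]
        exact far_term v hv2
    _ = (4 * ∑ v ∈ Icc (m+1) L, (((fun x : ℕ => (Real.sqrt (x:ℝ))⁻¹) (v-1))
          - (Real.sqrt (v:ℝ))⁻¹)) * (Real.sqrt m * (b (m+1) - b m)^2) := by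
        rw [← Finset.sum_mul]
        congr 1
        rw [Finset.mul_sum]
    _ ≤ 4 * (b (m+1) - b m)^2 := by
        rw [tele_g (fun x : ℕ => (Real.sqrt (x:ℝ))⁻¹) m L (by omega)]
        have h1 : (Real.sqrt (m:ℝ))⁻¹ - (Real.sqrt (L:ℝ))⁻¹ ≤ (Real.sqrt (m:ℝ))⁻¹ := by
          have : (0:ℝ) ≤ (Real.sqrt (L:ℝ))⁻¹ := by positivity
          linarith
        calc (4 * ((Real.sqrt (m:ℝ))⁻¹ - (Real.sqrt (L:ℝ))⁻¹))
                * (Real.sqrt m * (b (m+1) - b m)^2)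
            ≤ (4 * (Real.sqrt (m:ℝ))⁻¹) * (Real.sqrt m * (b (m+1) - b m)^2) := by
              apply mul_le_mul_of_nonneg_right _ (by positivity)
              linarith
          _ = 4 * (b (m+1) - b m)^2 := by
              field_simp [hsm.ne']

lemma step1 {k : ℕ} [NeZero k] (φ : ZMod k → ℝ) :
    bSemiSq k φ ≤ ∑ v ∈ Icc 1 (k/2),
      (∑ p : ZMod k, (φ p - φ (p + (v:ZMod k)))^2) / (v:ℝ)^2 := by
  have hk : 0 < k := Nat.pos_of_ne_zero (NeZero.ne k)
  set G : ZMod k → ℝ := fun s =>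
    (∑ p : ZMod k, (φ p - φ (p + s))^2) / ((min (-s).val s.val : ℕ):ℝ)^2 with hG
  have hGnn : ∀ s, 0 ≤ G s := by
    intro s
    apply div_nonneg _ (by positivity)
    exact Finset.sum_nonneg (fun p _ => sq_nonneg _)
  -- Step A
  have hA : bSemiSq k φ = (1/2) * ∑ s ∈ univ.filter (fun s : ZMod k => s ≠ 0), G s := by
    rw [bSemiSq]
    congr 1
    have hrow : ∀ p : ZMod k,
        (∑ q : ZMod k, if p ≠ q then (φ p - φ q)^2 / (cycDist k p q : ℝ)^2 else 0)
        = ∑ s : ZMod k,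
            (if s ≠ 0 then (φ p - φ (p + s))^2 / ((min (-s).val s.val : ℕ):ℝ)^2 else 0) := by
      intro p
      refine (Fintype.sum_equiv (Equiv.addLeft p) _ _ ?_).symm
      intro s
      have h1 : p - (p + s) = -s := by ring
      have h2 : p + s - p = s := by ring
      simp only [Equiv.coe_addLeft, cycDist]
      have hcond : (p ≠ p + s) ↔ (s ≠ 0) := not_congr (left_eq_add)
      rw [h1, h2]
      exact if_congr hcond.symm rfl rfl
    rw [Finset.sum_congr rfl (fun p _ => hrow p), Finset.sum_comm]
    have hpull : ∀ y : ZMod k, (∑ x : ZMod k,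
        if y ≠ 0 then (φ x - φ (x + y))^2 / ((min (-y).val y.val : ℕ):ℝ)^2 else 0)
        = if y ≠ 0 then G y else 0 := by
      intro y
      by_cases h : y = 0
      · simp [h]
      · rw [if_pos h, hG]
        simp only
        rw [Finset.sum_congr rfl (fun x _ => if_pos h), ← Finset.sum_div]
    rw [Finset.sum_congr rfl (fun y _ => hpull y), ← Finset.sum_filter]
  -- Step B/C: fold the far half onto the near half
  set A := univ.filter (fun s : ZMod k => s ≠ 0 ∧ s.val ≤ k/2) with hAdef
  set B := univ.filter (fun s : ZMod k => s ≠ 0 ∧ ¬ s.val ≤ k/2) with hBdef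
  have hsplit : ∑ s ∈ univ.filter (fun s : ZMod k => s ≠ 0), G s
      = ∑ s ∈ A, G s + ∑ s ∈ B, G s := by
    rw [hAdef, hBdef, ← Finset.filter_filter, ← Finset.filter_filter]
    exact (Finset.sum_filter_add_sum_filter_not _ _ _).symm
  have hGneg : ∀ s : ZMod k, G (-s) = G s := by
    intro s
    rw [hG]
    simp only [neg_neg]
    rw [min_comm]
    congr 1
    have := shift_sum (fun p => (φ p - φ (p + -s))^2) s
    rw [← this]
    apply Finset.sum_congr rfl
    intro p _
    rw [show p + s + -s = p by ring]
    rw [← neg_sub, neg_sq]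
  have hBA : ∑ s ∈ B, G s ≤ ∑ s ∈ A, G s := by
    have hinj : ∀ x ∈ B, ∀ y ∈ B, -x = -y → x = y := by
      intro x _ y _ h
      exact neg_injective h
    have himg : B.image (fun s => -s) ⊆ A := by
      intro t ht
      simp only [Finset.mem_image] at ht
      obtain ⟨s, hs, rfl⟩ := ht
      rw [hBdef] at hs
      simp only [Finset.mem_filter, Finset.mem_univ, true_and] at hs
      rw [hAdef]
      simp only [Finset.mem_filter, Finset.mem_univ, true_and]
      constructor
      · exact neg_ne_zero.2 hs.1
      · have hval : (-s).val = k - s.val := by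
          rw [ZMod.neg_val, if_neg hs.1]
        have hslt : s.val < k := ZMod.val_lt s
        omega
    calc ∑ s ∈ B, G s = ∑ s ∈ B, G (-s) := by
          exact Finset.sum_congr rfl (fun s _ => (hGneg s).symm)
      _ = ∑ t ∈ B.image (fun s => -s), G t := (Finset.sum_image hinj).symm
      _ ≤ ∑ s ∈ A, G s :=
          Finset.sum_le_sum_of_subset_of_nonneg himg (fun s _ _ => hGnn s)
  -- Step D: reindex A by val
  have hD : ∑ s ∈ A, G s = ∑ v ∈ Icc 1 (k/2),
      (∑ p : ZMod k, (φ p - φ (p + (v:ZMod k)))^2) / (v:ℝ)^2 := by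
    apply Finset.sum_nbij' (i := fun s : ZMod k => s.val) (j := fun v : ℕ => (v : ZMod k))
    · intro s hs
      rw [hAdef] at hs
      simp only [Finset.mem_filter, Finset.mem_univ, true_and] at hs
      simp only [Finset.mem_Icc]
      have : s.val ≠ 0 := fun h => hs.1 ((ZMod.val_eq_zero s).1 h)
      omega
    · intro v hv
      simp only [Finset.mem_Icc] at hv
      have hvk : v < k := by omega
      rw [hAdef]
      simp only [Finset.mem_filter, Finset.mem_univ, true_and]
      rw [ZMod.val_cast_of_lt hvk]
      constructor
      · intro h
        have := (ZMod.val_eq_zero _).2 h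
        rw [ZMod.val_cast_of_lt hvk] at this
        omega
      · exact hv.2
    · intro s _
      exact ZMod.natCast_rightInverse s
    · intro v hv
      simp only [Finset.mem_Icc] at hv
      exact ZMod.val_cast_of_lt (by omega)
    · intro s hs
      rw [hAdef] at hs
      simp only [Finset.mem_filter, Finset.mem_univ, true_and] at hs
      show (∑ p : ZMod k, (φ p - φ (p + s)) ^ 2) / ((min (-s).val s.val : ℕ):ℝ) ^ 2
        = (∑ p : ZMod k, (φ p - φ (p + ((s.val : ℕ) : ZMod k)))^2) / ((s.val : ℕ):ℝ)^2
      have hmin : min (-s).val s.val = s.val := by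
        have hval : (-s).val = k - s.val := by rw [ZMod.neg_val, if_neg hs.1]
        have hslt : s.val < k := ZMod.val_lt s
        have : s.val ≤ (-s).val := by omega
        exact min_eq_right this
      rw [hmin, ZMod.natCast_rightInverse s]
  rw [hA, hsplit, ← hD]
  have := hBA
  have hnnA : 0 ≤ ∑ s ∈ A, G s := Finset.sum_nonneg (fun s _ => hGnn s)
  linarith


end TraceAux


/-- Boundedness of the discrete trace operator: for every
`u : (ℤ/kℤ) × {1,…,ℓ} → ℝ`, the boundary restriction `φ(i) = u(i,1)` satisfies
`|φ|_Γ² ≤ max{3c, 4π²} · |u|_G²`. -/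
theorem discrete_trace_bounded (k ℓ c : ℕ) [NeZero k]
    (h1 : 4 * ℓ < k) (h2 : k < 2 * c * ℓ)
    (u : ZMod k → ℕ → ℝ) :
    bSemiSq k (fun i => u i 1) ≤ max (3 * (c : ℝ)) (4 * π ^ 2) * energySq k ℓ u := by
  have hk : 0 < k := Nat.pos_of_ne_zero (NeZero.ne k)
  have hl : 1 ≤ ℓ := by
    rcases Nat.eq_zero_or_pos ℓ with h | h
    · subst h; rw [mul_zero] at h2; omega
    · exact h
  have hlS : ℓ ≤ k / 2 := by omega
  have hScl : k / 2 ≤ c * ℓ := by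
    have h2' : k < 2 * (c * ℓ) := by rw [← mul_assoc]; exact h2
    omega
  have hlR : (0:ℝ) < (ℓ:ℝ) := by exact_mod_cast hl
  have hHHnn : (0:ℝ) ≤ ∑ j ∈ Icc 1 ℓ, ∑ p : ZMod k, (u (p+1) j - u p j)^2 :=
    Finset.sum_nonneg (fun j _ => Finset.sum_nonneg (fun p _ => sq_nonneg _))
  have hVVnn : (0:ℝ) ≤ ∑ p : ZMod k, ∑ m ∈ Icc 1 (ℓ-1), (u p (m+1) - u p m)^2 :=
    Finset.sum_nonneg (fun p _ => Finset.sum_nonneg (fun m _ => sq_nonneg _))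
  have hE : energySq k ℓ u = (∑ j ∈ Icc 1 ℓ, ∑ p : ZMod k, (u (p+1) j - u p j)^2)
      + ∑ p : ZMod k, ∑ m ∈ Icc 1 (ℓ-1), (u p (m+1) - u p m)^2 := by
    rw [energySq]
    congr 1
    exact Finset.sum_comm
  -- Hardy bound on near vertical terms
  have hHardy : ∑ v ∈ Icc 1 ℓ, (∑ p : ZMod k, (u p v - u p 1)^2) / (v:ℝ)^2
      ≤ 4 * ∑ p : ZMod k, ∑ m ∈ Icc 1 (ℓ-1), (u p (m+1) - u p m)^2 := by
    calc ∑ v ∈ Icc 1 ℓ, (∑ p : ZMod k, (u p v - u p 1)^2) / (v:ℝ)^2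
        = ∑ v ∈ Icc 1 ℓ, ∑ p : ZMod k, (u p v - u p 1)^2 / (v:ℝ)^2 := by
          exact Finset.sum_congr rfl (fun v _ => Finset.sum_div _ _ _)
      _ = ∑ p : ZMod k, ∑ v ∈ Icc 1 ℓ, (u p v - u p 1)^2 / (v:ℝ)^2 := Finset.sum_comm
      _ ≤ ∑ p : ZMod k, 4 * ∑ m ∈ Icc 1 (ℓ-1), (u p (m+1) - u p m)^2 :=
          Finset.sum_le_sum (fun p _ => TraceAux.hardy (u p) ℓ)
      _ = 4 * ∑ p : ZMod k, ∑ m ∈ Icc 1 (ℓ-1), (u p (m+1) - u p m)^2 := by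
          rw [Finset.mul_sum]
  -- crude bound on the vertical sums W_j
  have hWW : ∑ j ∈ Icc 1 ℓ, (∑ p : ZMod k, (u p j - u p 1)^2)
      ≤ (ℓ:ℝ)^2 * ∑ p : ZMod k, ∑ m ∈ Icc 1 (ℓ-1), (u p (m+1) - u p m)^2 := by
    have hWb : ∀ j ∈ Icc 1 ℓ, (∑ p : ZMod k, (u p j - u p 1)^2)
        ≤ (ℓ:ℝ) * ∑ p : ZMod k, ∑ m ∈ Icc 1 (ℓ-1), (u p (m+1) - u p m)^2 := by
      intro j hj
      simp only [mem_Icc] at hj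
      calc ∑ p : ZMod k, (u p j - u p 1)^2
          ≤ ∑ p : ZMod k, ((j:ℝ)-1) * ∑ m ∈ Icc 1 (j-1), (u p (m+1) - u p m)^2 :=
            Finset.sum_le_sum (fun p _ => TraceAux.vert_bound (u p) j hj.1)
        _ ≤ ∑ p : ZMod k, (ℓ:ℝ) * ∑ m ∈ Icc 1 (ℓ-1), (u p (m+1) - u p m)^2 := by
            apply Finset.sum_le_sum
            intro p _
            have hsub : ∑ m ∈ Icc 1 (j-1), (u p (m+1) - u p m)^2
                ≤ ∑ m ∈ Icc 1 (ℓ-1), (u p (m+1) - u p m)^2 := by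
              apply Finset.sum_le_sum_of_subset_of_nonneg
              · exact Finset.Icc_subset_Icc_right (by omega)
              · intro m _ _; positivity
            have hjl : (j:ℝ) ≤ (ℓ:ℝ) := by exact_mod_cast hj.2
            have hj1 : (1:ℝ) ≤ (j:ℝ) := by exact_mod_cast hj.1
            have hnn : (0:ℝ) ≤ ∑ m ∈ Icc 1 (j-1), (u p (m+1) - u p m)^2 :=
              Finset.sum_nonneg (fun m _ => sq_nonneg _)
            calc ((j:ℝ)-1) * ∑ m ∈ Icc 1 (j-1), (u p (m+1) - u p m)^2
                ≤ (ℓ:ℝ) * ∑ m ∈ Icc 1 (j-1), (u p (m+1) - u p m)^2 :=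
                  mul_le_mul_of_nonneg_right (by linarith) hnn
              _ ≤ (ℓ:ℝ) * ∑ m ∈ Icc 1 (ℓ-1), (u p (m+1) - u p m)^2 :=
                  mul_le_mul_of_nonneg_left hsub (by positivity)
        _ = (ℓ:ℝ) * ∑ p : ZMod k, ∑ m ∈ Icc 1 (ℓ-1), (u p (m+1) - u p m)^2 := by
            rw [Finset.mul_sum]
    calc ∑ j ∈ Icc 1 ℓ, (∑ p : ZMod k, (u p j - u p 1)^2)
        ≤ ∑ _j ∈ Icc 1 ℓ, (ℓ:ℝ) * ∑ p : ZMod k, ∑ m ∈ Icc 1 (ℓ-1), (u p (m+1) - u p m)^2 :=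
          Finset.sum_le_sum hWb
      _ = (ℓ:ℝ)^2 * ∑ p : ZMod k, ∑ m ∈ Icc 1 (ℓ-1), (u p (m+1) - u p m)^2 := by
          rw [Finset.sum_const, Nat.card_Icc, show ℓ + 1 - 1 = ℓ from by omega, nsmul_eq_mul]
          ring
  -- step 1 : reduce to sums over shifts 1 ≤ v ≤ k/2
  have hstep1 := TraceAux.step1 (k := k) (fun i => u i 1)
  -- split the range at ℓ
  have hsplit := Finset.sum_Ioc_consecutive
      (fun v : ℕ => (∑ p : ZMod k, (u p 1 - u (p + (v:ZMod k)) 1)^2) / (v:ℝ)^2)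
      (Nat.zero_le ℓ) hlS
  have hIccS : Icc 1 (k/2) = Ioc 0 (k/2) := by
    ext x; simp only [mem_Icc, mem_Ioc]; omega
  have hIccl : Ioc 0 ℓ = Icc 1 ℓ := by
    ext x; simp only [mem_Icc, mem_Ioc]; omega
  -- near part
  have hnear : ∑ v ∈ Ioc 0 ℓ, (∑ p : ZMod k, (u p 1 - u (p + (v:ZMod k)) 1)^2) / (v:ℝ)^2
      ≤ 3 * (∑ j ∈ Icc 1 ℓ, ∑ p : ZMod k, (u (p+1) j - u p j)^2)
        + 24 * ∑ p : ZMod k, ∑ m ∈ Icc 1 (ℓ-1), (u p (m+1) - u p m)^2 := by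
    calc ∑ v ∈ Ioc 0 ℓ, (∑ p : ZMod k, (u p 1 - u (p + (v:ZMod k)) 1)^2) / (v:ℝ)^2
        ≤ ∑ v ∈ Ioc 0 ℓ, (3 * (∑ p : ZMod k, (u (p+1) v - u p v)^2)
            + 6 * ((∑ p : ZMod k, (u p v - u p 1)^2) / (v:ℝ)^2)) := by
          apply Finset.sum_le_sum
          intro v hv
          simp only [mem_Ioc] at hv
          have hv0 : (0:ℝ) < (v:ℝ) := by exact_mod_cast hv.1
          calc (∑ p : ZMod k, (u p 1 - u (p + (v:ZMod k)) 1)^2) / (v:ℝ)^2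
              ≤ (3 * (v:ℝ)^2 * (∑ p : ZMod k, (u (p+1) v - u p v)^2)
                  + 6 * ∑ p : ZMod k, (u p v - u p 1)^2) / (v:ℝ)^2 := by
                gcongr
                exact TraceAux.core u v v
            _ = 3 * (∑ p : ZMod k, (u (p+1) v - u p v)^2)
                  + 6 * ((∑ p : ZMod k, (u p v - u p 1)^2) / (v:ℝ)^2) := by
                field_simp
      _ = 3 * (∑ v ∈ Icc 1 ℓ, ∑ p : ZMod k, (u (p+1) v - u p v)^2)
            + 6 * ∑ v ∈ Icc 1 ℓ, ((∑ p : ZMod k, (u p v - u p 1)^2) / (v:ℝ)^2) := by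
          rw [hIccl, Finset.sum_add_distrib, ← Finset.mul_sum, ← Finset.mul_sum]
      _ ≤ 3 * (∑ j ∈ Icc 1 ℓ, ∑ p : ZMod k, (u (p+1) j - u p j)^2)
            + 24 * ∑ p : ZMod k, ∑ m ∈ Icc 1 (ℓ-1), (u p (m+1) - u p m)^2 := by
          linarith [hHardy]
  -- far part
  have hfar : ∑ v ∈ Ioc ℓ (k/2), (∑ p : ZMod k, (u p 1 - u (p + (v:ZMod k)) 1)^2) / (v:ℝ)^2
      ≤ (((k/2 : ℕ):ℝ) - (ℓ:ℝ)) * (3 * (∑ j ∈ Icc 1 ℓ, ∑ p : ZMod k, (u (p+1) j - u p j)^2) / (ℓ:ℝ))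
        + 6 * ∑ p : ZMod k, ∑ m ∈ Icc 1 (ℓ-1), (u p (m+1) - u p m)^2 := by
    have hfar1 : ∀ v ∈ Ioc ℓ (k/2),
        (∑ p : ZMod k, (u p 1 - u (p + (v:ZMod k)) 1)^2) / (v:ℝ)^2
        ≤ 3 * (∑ j ∈ Icc 1 ℓ, ∑ p : ZMod k, (u (p+1) j - u p j)^2) / (ℓ:ℝ)
          + (6 * (∑ j ∈ Icc 1 ℓ, ∑ p : ZMod k, (u p j - u p 1)^2) / (ℓ:ℝ)) * ((v:ℝ)^2)⁻¹ := by
      intro v hv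
      simp only [mem_Ioc] at hv
      have hv0 : (0:ℝ) < (v:ℝ) := by
        have : 0 < v := by omega
        exact_mod_cast this
      have havg : (ℓ:ℝ) * (∑ p : ZMod k, (u p 1 - u (p + (v:ZMod k)) 1)^2)
          ≤ 3 * (v:ℝ)^2 * (∑ j ∈ Icc 1 ℓ, ∑ p : ZMod k, (u (p+1) j - u p j)^2)
            + 6 * ∑ j ∈ Icc 1 ℓ, ∑ p : ZMod k, (u p j - u p 1)^2 := by
        calc (ℓ:ℝ) * (∑ p : ZMod k, (u p 1 - u (p + (v:ZMod k)) 1)^2)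
            = ∑ _j ∈ Icc 1 ℓ, ∑ p : ZMod k, (u p 1 - u (p + (v:ZMod k)) 1)^2 := by
              rw [Finset.sum_const, Nat.card_Icc, show ℓ + 1 - 1 = ℓ from by omega, nsmul_eq_mul]
          _ ≤ ∑ j ∈ Icc 1 ℓ, (3 * (v:ℝ)^2 * (∑ p : ZMod k, (u (p+1) j - u p j)^2)
                + 6 * ∑ p : ZMod k, (u p j - u p 1)^2) :=
              Finset.sum_le_sum (fun j _ => TraceAux.core u v j)
          _ = 3 * (v:ℝ)^2 * (∑ j ∈ Icc 1 ℓ, ∑ p : ZMod k, (u (p+1) j - u p j)^2)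
                + 6 * ∑ j ∈ Icc 1 ℓ, ∑ p : ZMod k, (u p j - u p 1)^2 := by
              rw [Finset.sum_add_distrib, ← Finset.mul_sum, ← Finset.mul_sum]
      have h3 : (∑ p : ZMod k, (u p 1 - u (p + (v:ZMod k)) 1)^2)
          ≤ (3 * (v:ℝ)^2 * (∑ j ∈ Icc 1 ℓ, ∑ p : ZMod k, (u (p+1) j - u p j)^2)
              + 6 * ∑ j ∈ Icc 1 ℓ, ∑ p : ZMod k, (u p j - u p 1)^2) / (ℓ:ℝ) := by
        rw [le_div_iff₀ hlR, mul_comm]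
        exact havg
      calc (∑ p : ZMod k, (u p 1 - u (p + (v:ZMod k)) 1)^2) / (v:ℝ)^2
          ≤ ((3 * (v:ℝ)^2 * (∑ j ∈ Icc 1 ℓ, ∑ p : ZMod k, (u (p+1) j - u p j)^2)
              + 6 * ∑ j ∈ Icc 1 ℓ, ∑ p : ZMod k, (u p j - u p 1)^2) / (ℓ:ℝ)) / (v:ℝ)^2 := by
            gcongr
        _ = 3 * (∑ j ∈ Icc 1 ℓ, ∑ p : ZMod k, (u (p+1) j - u p j)^2) / (ℓ:ℝ)
              + (6 * (∑ j ∈ Icc 1 ℓ, ∑ p : ZMod k, (u p j - u p 1)^2) / (ℓ:ℝ)) * ((v:ℝ)^2)⁻¹ := by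
            field_simp
    calc ∑ v ∈ Ioc ℓ (k/2), (∑ p : ZMod k, (u p 1 - u (p + (v:ZMod k)) 1)^2) / (v:ℝ)^2
        ≤ ∑ v ∈ Ioc ℓ (k/2), (3 * (∑ j ∈ Icc 1 ℓ, ∑ p : ZMod k, (u (p+1) j - u p j)^2) / (ℓ:ℝ)
            + (6 * (∑ j ∈ Icc 1 ℓ, ∑ p : ZMod k, (u p j - u p 1)^2) / (ℓ:ℝ)) * ((v:ℝ)^2)⁻¹) :=
          Finset.sum_le_sum hfar1
      _ = ((Ioc ℓ (k/2)).card : ℝ)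
              * (3 * (∑ j ∈ Icc 1 ℓ, ∑ p : ZMod k, (u (p+1) j - u p j)^2) / (ℓ:ℝ))
            + (6 * (∑ j ∈ Icc 1 ℓ, ∑ p : ZMod k, (u p j - u p 1)^2) / (ℓ:ℝ))
              * ∑ v ∈ Ioc ℓ (k/2), ((v:ℝ)^2)⁻¹ := by
          rw [Finset.sum_add_distrib, Finset.sum_const, nsmul_eq_mul, ← Finset.mul_sum]
      _ ≤ (((k/2 : ℕ):ℝ) - (ℓ:ℝ))
              * (3 * (∑ j ∈ Icc 1 ℓ, ∑ p : ZMod k, (u (p+1) j - u p j)^2) / (ℓ:ℝ))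
            + 6 * ∑ p : ZMod k, ∑ m ∈ Icc 1 (ℓ-1), (u p (m+1) - u p m)^2 := by
          have hcard : ((Ioc ℓ (k/2)).card : ℝ) = ((k/2 : ℕ):ℝ) - (ℓ:ℝ) := by
            rw [Nat.card_Ioc]
            exact Nat.cast_sub hlS
          rw [hcard]
          have hsuminv := TraceAux.sum_inv_sq ℓ (k/2) hl hlS
          have hWnn : (0:ℝ) ≤ ∑ j ∈ Icc 1 ℓ, ∑ p : ZMod k, (u p j - u p 1)^2 :=
            Finset.sum_nonneg (fun j _ => Finset.sum_nonneg (fun p _ => sq_nonneg _))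
          have t1 : (6 * (∑ j ∈ Icc 1 ℓ, ∑ p : ZMod k, (u p j - u p 1)^2) / (ℓ:ℝ))
                * ∑ v ∈ Ioc ℓ (k/2), ((v:ℝ)^2)⁻¹
              ≤ (6 * ((ℓ:ℝ)^2 * ∑ p : ZMod k, ∑ m ∈ Icc 1 (ℓ-1), (u p (m+1) - u p m)^2) / (ℓ:ℝ))
                * ((ℓ:ℝ))⁻¹ := by
            apply mul_le_mul _ hsuminv
              (Finset.sum_nonneg (fun v _ => by positivity)) (by positivity)
            gcongr
          have t2 : (6 * ((ℓ:ℝ)^2 * ∑ p : ZMod k, ∑ m ∈ Icc 1 (ℓ-1), (u p (m+1) - u p m)^2) / (ℓ:ℝ))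
                * ((ℓ:ℝ))⁻¹ = 6 * ∑ p : ZMod k, ∑ m ∈ Icc 1 (ℓ-1), (u p (m+1) - u p m)^2 := by
            field_simp
          linarith [t1]
  -- coefficient bookkeeping
  have hcoef : (((k/2 : ℕ):ℝ) - (ℓ:ℝ))
        * (3 * (∑ j ∈ Icc 1 ℓ, ∑ p : ZMod k, (u (p+1) j - u p j)^2) / (ℓ:ℝ))
        + 3 * (∑ j ∈ Icc 1 ℓ, ∑ p : ZMod k, (u (p+1) j - u p j)^2)
      ≤ 3 * (c:ℝ) * ∑ j ∈ Icc 1 ℓ, ∑ p : ZMod k, (u (p+1) j - u p j)^2 := by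
    have hS : ((k/2 : ℕ):ℝ) ≤ (c:ℝ) * (ℓ:ℝ) := by exact_mod_cast hScl
    have hlSR : (ℓ:ℝ) ≤ ((k/2 : ℕ):ℝ) := by exact_mod_cast hlS
    have hstep : (((k/2 : ℕ):ℝ) - (ℓ:ℝ))
          * (3 * (∑ j ∈ Icc 1 ℓ, ∑ p : ZMod k, (u (p+1) j - u p j)^2) / (ℓ:ℝ))
        ≤ ((c:ℝ) * (ℓ:ℝ) - (ℓ:ℝ))
          * (3 * (∑ j ∈ Icc 1 ℓ, ∑ p : ZMod k, (u (p+1) j - u p j)^2) / (ℓ:ℝ)) :=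
      mul_le_mul_of_nonneg_right (by linarith) (by positivity)
    have heq : ((c:ℝ) * (ℓ:ℝ) - (ℓ:ℝ))
          * (3 * (∑ j ∈ Icc 1 ℓ, ∑ p : ZMod k, (u (p+1) j - u p j)^2) / (ℓ:ℝ))
        = 3 * (c:ℝ) * (∑ j ∈ Icc 1 ℓ, ∑ p : ZMod k, (u (p+1) j - u p j)^2)
          - 3 * (∑ j ∈ Icc 1 ℓ, ∑ p : ZMod k, (u (p+1) j - u p j)^2) := by
      field_simp
    linarith
  -- finish
  have h30 : (30:ℝ) ≤ 4 * π^2 := by nlinarith [Real.pi_gt_three]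
  have hmax1 : 3 * (c:ℝ) ≤ max (3 * (c:ℝ)) (4 * π^2) := le_max_left _ _
  have hmax2 : (30:ℝ) ≤ max (3 * (c:ℝ)) (4 * π^2) := h30.trans (le_max_right _ _)
  calc bSemiSq k (fun i => u i 1)
      ≤ ∑ v ∈ Icc 1 (k/2), (∑ p : ZMod k, (u p 1 - u (p + (v:ZMod k)) 1)^2) / (v:ℝ)^2 := hstep1
    _ = (∑ v ∈ Ioc 0 ℓ, (∑ p : ZMod k, (u p 1 - u (p + (v:ZMod k)) 1)^2) / (v:ℝ)^2)
        + ∑ v ∈ Ioc ℓ (k/2), (∑ p : ZMod k, (u p 1 - u (p + (v:ZMod k)) 1)^2) / (v:ℝ)^2 := by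
        rw [hIccS]
        exact hsplit.symm
    _ ≤ 3 * (c:ℝ) * (∑ j ∈ Icc 1 ℓ, ∑ p : ZMod k, (u (p+1) j - u p j)^2)
        + 30 * ∑ p : ZMod k, ∑ m ∈ Icc 1 (ℓ-1), (u p (m+1) - u p m)^2 := by
        linarith [hnear, hfar, hcoef]
    _ ≤ max (3 * (c:ℝ)) (4 * π^2) * energySq k ℓ u := by
        rw [hE]
        have e1 : 3 * (c:ℝ) * (∑ j ∈ Icc 1 ℓ, ∑ p : ZMod k, (u (p+1) j - u p j)^2)
            ≤ max (3 * (c:ℝ)) (4 * π^2) * (∑ j ∈ Icc 1 ℓ, ∑ p : ZMod k, (u (p+1) j - u p j)^2) :=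
          mul_le_mul_of_nonneg_right hmax1 hHHnn
        have e2 : 30 * (∑ p : ZMod k, ∑ m ∈ Icc 1 (ℓ-1), (u p (m+1) - u p m)^2)
            ≤ max (3 * (c:ℝ)) (4 * π^2) * ∑ p : ZMod k, ∑ m ∈ Icc 1 (ℓ-1), (u p (m+1) - u p m)^2 :=
          mul_le_mul_of_nonneg_right hmax2 hVVnn
        have e3 : max (3 * (c:ℝ)) (4 * π^2) * ((∑ j ∈ Icc 1 ℓ, ∑ p : ZMod k, (u (p+1) j - u p j)^2)
              + ∑ p : ZMod k, ∑ m ∈ Icc 1 (ℓ-1), (u p (m+1) - u p m)^2)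
            = max (3 * (c:ℝ)) (4 * π^2) * (∑ j ∈ Icc 1 ℓ, ∑ p : ZMod k, (u (p+1) j - u p j)^2)
              + max (3 * (c:ℝ)) (4 * π^2) * ∑ p : ZMod k, ∑ m ∈ Icc 1 (ℓ-1), (u p (m+1) - u p m)^2 := by
          ring
        linarith
end
end

section
/- (Continuous right inverse of the discrete trace operator.) Assume ℓ ≥ 2. For every φ : ℤ/kℤ → ℝ, the averaging extension u defined by u(i,j) = ((j−1)/(ℓ−1))·a + (1 − (j−1)/(ℓ−1))·a(i,j) satisfies u(i,1) = φ(i) for all i and |u|_G² ≤ (2c + 233/9) · |φ|_Γ². -/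
open Real Finset

noncomputable section

/-- The global average `a = (1/k) Σ_p φ(p)`. -/
def globalAvg (k : ℕ) [NeZero k] (φ : ZMod k → ℝ) : ℝ :=
  (1 / (k : ℝ)) * ∑ p : ZMod k, φ p

/-- The local average `a(i,j) = (1/(2j−1)) Σ_{h=−(j−1)}^{j−1} φ(i+h)`. -/
def localAvg (k : ℕ) (φ : ZMod k → ℝ) (i : ZMod k) (j : ℕ) : ℝ :=
  (1 / (2 * (j : ℝ) - 1)) * ∑ h ∈ Finset.Icc (-(j : ℤ) + 1) ((j : ℤ) - 1), φ (i + (h : ZMod k))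

/-- The averaging extension `u(i,j) = ((j−1)/(ℓ−1))·a + (1 − (j−1)/(ℓ−1))·a(i,j)`. -/
def avgExt (k ℓ : ℕ) [NeZero k] (φ : ZMod k → ℝ) (i : ZMod k) (j : ℕ) : ℝ :=
  (((j : ℝ) - 1) / ((ℓ : ℝ) - 1)) * globalAvg k φ
    + (1 - ((j : ℝ) - 1) / ((ℓ : ℝ) - 1)) * localAvg k φ i j

set_option linter.unusedSectionVars false
namespace TP
variable {k : ℕ} [NeZero k]

def rr (k : ℕ) [NeZero k] (φ : ZMod k → ℝ) (p q : ZMod k) : ℝ :=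
  (φ p - φ q) ^ 2 / (cycDist k p q : ℝ) ^ 2

def gg (k : ℕ) [NeZero k] (φ : ZMod k → ℝ) (p q : ZMod k) : ℝ :=
  if p = q then 0 else (φ p - φ q) / (cycDist k p q : ℝ)

def Rsh (k : ℕ) [NeZero k] (φ : ZMod k → ℝ) (s : ZMod k) : ℝ :=
  ∑ i : ZMod k, rr k φ i (i + s)

variable (φ : ZMod k → ℝ)

lemma rr_nonneg (p q : ZMod k) : 0 ≤ rr k φ p q := by
  unfold rr; positivity

lemma rr_self (p : ZMod k) : rr k φ p p = 0 := by simp [rr]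

lemma cycDist_symm (p q : ZMod k) : cycDist k p q = cycDist k q p := min_comm _ _

lemma cycDist_pos {p q : ZMod k} (h : p ≠ q) : 0 < cycDist k p q := by
  have h1 : p - q ≠ 0 := sub_ne_zero.mpr h
  have h2 : q - p ≠ 0 := sub_ne_zero.mpr (Ne.symm h)
  simp only [cycDist, lt_min_iff]
  exact ⟨Nat.pos_of_ne_zero (by simpa [ZMod.val_eq_zero] using h1),
    Nat.pos_of_ne_zero (by simpa [ZMod.val_eq_zero] using h2)⟩

lemma rr_symm (p q : ZMod k) : rr k φ p q = rr k φ q p := by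
  unfold rr; rw [cycDist_symm]; ring_nf

lemma cycDist_shift (i p q : ZMod k) : cycDist k (i + p) (i + q) = cycDist k p q := by
  simp [cycDist, add_sub_add_left_eq_sub]

lemma sum_shift (a b : ZMod k) :
    ∑ i : ZMod k, rr k φ (i + a) (i + b) = Rsh k φ (b - a) := by
  unfold Rsh
  refine Fintype.sum_equiv (Equiv.addRight a) _ _ (fun i => ?_)
  simp only [Equiv.coe_addRight]
  have hb : i + a + (b - a) = i + b := by ring
  rw [hb]

lemma gg_sq (p q : ZMod k) : (gg k φ p q) ^ 2 = rr k φ p q := by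
  unfold gg rr
  split_ifs with h
  · simp [h]
  · rw [div_pow]

lemma D_mul_gg (p q : ZMod k) : (cycDist k p q : ℝ) * gg k φ p q = φ p - φ q := by
  unfold gg
  split_ifs with h
  · simp [h]
  · have := cycDist_pos (k := k) h
    field_simp

lemma sq_eq_D_rr (p q : ZMod k) :
    (φ p - φ q) ^ 2 = (cycDist k p q : ℝ) ^ 2 * rr k φ p q := by
  rcases eq_or_ne p q with h | h
  · simp [h, rr_self]
  · have := cycDist_pos (k := k) h
    unfold rr
    field_simp


lemma bSemiSq_eq : bSemiSq k φ = (1 / 2) * ∑ p : ZMod k, ∑ q : ZMod k, rr k φ p q := by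
  unfold bSemiSq
  congr 1
  refine Finset.sum_congr rfl fun p _ => Finset.sum_congr rfl fun q _ => ?_
  rcases eq_or_ne p q with h | h
  · simp [h, rr_self]
  · simp [h, rr]

lemma bSemiSq_nonneg : 0 ≤ bSemiSq k φ := by
  rw [bSemiSq_eq]
  have : ∀ p : ZMod k, 0 ≤ ∑ q : ZMod k, rr k φ p q :=
    fun p => Finset.sum_nonneg fun q _ => rr_nonneg φ p q
  have := Finset.sum_nonneg fun p (_ : p ∈ Finset.univ) => this p
  linarith

lemma sum_rr : ∑ p : ZMod k, ∑ q : ZMod k, rr k φ p q = 2 * bSemiSq k φ := by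
  rw [bSemiSq_eq]; ring

lemma sum_Rsh : ∑ s : ZMod k, Rsh k φ s = 2 * bSemiSq k φ := by
  unfold Rsh
  rw [Finset.sum_comm, ← sum_rr φ]
  refine Finset.sum_congr rfl fun i _ => ?_
  exact Fintype.sum_equiv (Equiv.addLeft i) _ _ (fun s => rfl)

lemma Rsh_nonneg (s : ZMod k) : 0 ≤ Rsh k φ s :=
  Finset.sum_nonneg fun i _ => rr_nonneg φ _ _

lemma Rsh_neg (s : ZMod k) : Rsh k φ (-s) = Rsh k φ s := by
  have h1 : ∑ i : ZMod k, rr k φ (i + s) (i + 0) = Rsh k φ (0 - s) := sum_shift φ s 0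
  have h2 : ∑ i : ZMod k, rr k φ (i + 0) (i + s) = Rsh k φ (s - 0) := sum_shift φ 0 s
  rw [zero_sub] at h1
  rw [sub_zero] at h2
  rw [← h1, ← h2]
  exact Finset.sum_congr rfl fun i _ => rr_symm φ _ _

lemma sum_Rsh_le {ι : Type*} [DecidableEq ι] (s : Finset ι) (σ : ι → ZMod k)
    (hinj : Set.InjOn σ s) : ∑ x ∈ s, Rsh k φ (σ x) ≤ 2 * bSemiSq k φ := by
  rw [← sum_Rsh φ, ← Finset.sum_image (f := Rsh k φ) (g := σ)
    (fun x hx y hy h => hinj hx hy h)]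
  exact Finset.sum_le_sum_of_subset_of_nonneg (Finset.subset_univ _)
    (fun t _ _ => Rsh_nonneg φ t)

lemma cyc_cast {m : ℕ} (hm : 2 * m ≤ k) : cycDist k ((m : ZMod k)) 0 = m := by
  have hk : 0 < k := Nat.pos_of_ne_zero (NeZero.ne k)
  have hmk : m < k := by omega
  have hv : ((m : ZMod k)).val = m := ZMod.val_cast_of_lt hmk
  rcases Nat.eq_zero_or_pos m with h0 | h0
  · simp [cycDist, h0]
  · have hne : (m : ZMod k) ≠ 0 := by
      intro h
      rw [h, ZMod.val_zero] at hv
      omega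
    simp only [cycDist, sub_zero, zero_sub, ZMod.neg_val, hne, if_false, hv]
    omega

lemma cyc_eq {a b : ZMod k} {m : ℕ} (h : a - b = (m : ZMod k) ∨ b - a = (m : ZMod k))
    (hm : 2 * m ≤ k) : cycDist k a b = m := by
  rcases h with h | h
  · have : cycDist k a b = cycDist k (a - b) 0 := by
      rw [← cycDist_shift b (a - b) 0, add_zero]
      congr 1
      ring
    rw [this, h, cyc_cast hm]
  · rw [cycDist_symm]
    have : cycDist k b a = cycDist k (b - a) 0 := by
      rw [← cycDist_shift a (b - a) 0, add_zero]
      congr 1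
      ring
    rw [this, h, cyc_cast hm]

lemma cast_injOn {ι : Type*} (s : Finset ι) (f : ι → ℕ) (hf : ∀ x ∈ s, f x < k)
    (hne : ∀ x ∈ s, ∀ y ∈ s, x ≠ y → f x ≠ f y) :
    Set.InjOn (fun x => ((f x : ZMod k))) s := by
  intro x hx y hy h
  by_contra hxy
  apply hne x hx y hy hxy
  have hvx : ((f x : ZMod k)).val = f x := ZMod.val_cast_of_lt (hf x hx)
  have hvy : ((f y : ZMod k)).val = f y := ZMod.val_cast_of_lt (hf y hy)
  rw [← hvx, ← hvy]
  simp only at h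
  rw [h]

lemma gauss_sum (n : ℕ) : ∑ v ∈ Finset.range n, (v : ℝ) = n * (n - 1) / 2 := by
  induction n with
  | zero => simp
  | succ n ih => rw [Finset.sum_range_succ, ih]; push_cast; ring

lemma quad_sum (n : ℕ) :
    ∑ v ∈ Finset.range n, (v : ℝ) * ((n : ℝ) - v) = n * ((n : ℝ) ^ 2 - 1) / 6 := by
  induction n with
  | zero => simp
  | succ n ih =>
    have step : ∑ v ∈ Finset.range (n + 1), (v : ℝ) * (((n : ℝ) + 1) - v)
        = (∑ v ∈ Finset.range (n + 1), (v : ℝ) * ((n : ℝ) - v))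
          + ∑ v ∈ Finset.range (n + 1), (v : ℝ) := by
      rw [← Finset.sum_add_distrib]
      exact Finset.sum_congr rfl fun v _ => by ring
    push_cast
    rw [step, Finset.sum_range_succ, ih, gauss_sum]
    push_cast
    ring

lemma sum_dist_sq (p : ZMod k) :
    ∑ q : ZMod k, (cycDist k q p : ℝ) ^ 2 ≤ (k : ℝ) ^ 3 / 6 := by
  have step1 : ∀ q : ZMod k,
      (cycDist k q p : ℝ) ^ 2 ≤ ((q - p).val : ℝ) * (((p - q).val : ℝ)) := by
    intro q
    have hmin : cycDist k q p ≤ (q - p).val := min_le_left _ _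
    have hmin2 : cycDist k q p ≤ (p - q).val := min_le_right _ _
    have c1 : (cycDist k q p : ℝ) ≤ ((q - p).val : ℝ) := Nat.cast_le.mpr hmin
    have c2 : (cycDist k q p : ℝ) ≤ ((p - q).val : ℝ) := Nat.cast_le.mpr hmin2
    have c0 : (0 : ℝ) ≤ (cycDist k q p : ℝ) := Nat.cast_nonneg _
    nlinarith
  calc ∑ q : ZMod k, (cycDist k q p : ℝ) ^ 2
      ≤ ∑ q : ZMod k, ((q - p).val : ℝ) * (((p - q).val : ℝ)) :=
        Finset.sum_le_sum fun q _ => step1 q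
    _ = ∑ s : ZMod k, (s.val : ℝ) * (((-s).val : ℝ)) := by
        refine Fintype.sum_equiv (Equiv.subRight p) _ _ (fun q => ?_)
        simp only [Equiv.subRight_apply]
        congr 2
        ring
    _ ≤ (k : ℝ) ^ 3 / 6 := by
        have hb : ∀ s : ZMod k, (s.val : ℝ) * (((-s).val : ℝ))
            ≤ (s.val : ℝ) * ((k : ℝ) - s.val) := by
          intro s
          rw [ZMod.neg_val]
          split_ifs with h
          · simp [h]
          · have : s.val < k := ZMod.val_lt s
            have : ((k - s.val : ℕ) : ℝ) = (k : ℝ) - s.val := by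
              push_cast [Nat.cast_sub (le_of_lt (ZMod.val_lt s))]
              ring
            rw [this]
        calc ∑ s : ZMod k, (s.val : ℝ) * (((-s).val : ℝ))
            ≤ ∑ s : ZMod k, (s.val : ℝ) * ((k : ℝ) - s.val) :=
              Finset.sum_le_sum fun s _ => hb s
          _ = ∑ v ∈ Finset.range k, (v : ℝ) * ((k : ℝ) - v) := by
              refine Finset.sum_nbij' (fun s => s.val) (fun v => ((v : ZMod k)))
                (fun s _ => Finset.mem_range.mpr (ZMod.val_lt s))
                (fun v _ => Finset.mem_univ _)
                (fun s _ => ZMod.natCast_rightInverse s)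
                (fun v hv => ZMod.val_cast_of_lt (Finset.mem_range.mp hv))
                (fun s _ => rfl)
          _ = (k : ℝ) * ((k : ℝ) ^ 2 - 1) / 6 := quad_sum k
          _ ≤ (k : ℝ) ^ 3 / 6 := by
              have hk : (0 : ℝ) ≤ (k : ℝ) := Nat.cast_nonneg k
              nlinarith


lemma sum_Icc_int (F : ℤ → ℝ) (a : ℤ) : ∀ n : ℕ,
    ∑ h ∈ Finset.Icc a (a + n - 1), F h = ∑ t ∈ Finset.range n, F (a + t) := by
  intro n
  induction n with
  | zero =>
    rw [Finset.Icc_eq_empty (by omega)]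
    simp
  | succ n ih =>
    have hsplit : Finset.Icc a (a + (n + 1 : ℕ) - 1)
        = insert (a + n) (Finset.Icc a (a + n - 1)) := by
      ext x
      simp only [Finset.mem_Icc, Finset.mem_insert]
      omega
    have hnotmem : (a + (n : ℤ)) ∉ Finset.Icc a (a + n - 1) := by
      simp only [Finset.mem_Icc]
      omega
    rw [hsplit, Finset.sum_insert hnotmem, ih, Finset.sum_range_succ]
    push_cast
    ring

lemma localAvg_eq (i : ZMod k) {n : ℕ} (hn : 1 ≤ n) :
    localAvg k φ i n = (1 / (2 * (n : ℝ) - 1)) *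
      ∑ t ∈ Finset.range (2 * n - 1), φ (i + (((1 - (n : ℤ) + t) : ℤ) : ZMod k)) := by
  unfold localAvg
  congr 1
  have hIcc : Finset.Icc (-(n : ℤ) + 1) ((n : ℤ) - 1)
      = Finset.Icc (1 - (n : ℤ)) ((1 - (n : ℤ)) + ((2 * n - 1 : ℕ) : ℤ) - 1) := by
    congr 1
    · ring
    · push_cast [Nat.cast_sub (by omega : 1 ≤ 2 * n)]
      ring
  rw [hIcc, sum_Icc_int (fun h => φ (i + (h : ZMod k))) (1 - (n : ℤ)) (2 * n - 1)]

lemma local_diff (i : ZMod k) {n : ℕ} (hn : 1 ≤ n) :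
    localAvg k φ (i + 1) n - localAvg k φ i n
      = (1 / (2 * (n : ℝ) - 1)) *
        (φ (i + (((n : ℤ)) : ZMod k)) - φ (i + (((1 - (n : ℤ)) : ℤ) : ZMod k))) := by
  rw [localAvg_eq φ (i + 1) hn, localAvg_eq φ i hn, ← mul_sub]
  congr 1
  set G : ℕ → ℝ := fun t => φ (i + (((1 - (n : ℤ) + t) : ℤ) : ZMod k)) with hG
  have h1 : ∀ t : ℕ, φ ((i + 1) + (((1 - (n : ℤ) + t) : ℤ) : ZMod k)) = G (t + 1) := by
    intro t
    simp only [hG]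
    congr 1
    push_cast
    ring
  have h2 : (∑ t ∈ Finset.range (2 * n - 1), φ ((i + 1) + (((1 - (n : ℤ) + t) : ℤ) : ZMod k)))
      - ∑ t ∈ Finset.range (2 * n - 1), G t
      = ∑ t ∈ Finset.range (2 * n - 1), (G (t + 1) - G t) := by
    rw [← Finset.sum_sub_distrib]
    exact Finset.sum_congr rfl fun t _ => by rw [h1]
  rw [h2, Finset.sum_range_sub G (2 * n - 1)]
  have e1 : (1 - (n : ℤ) + ((2 * n - 1 : ℕ) : ℤ)) = (n : ℤ) := by omega
  have e0 : (1 - (n : ℤ) + ((0 : ℕ) : ℤ)) = 1 - (n : ℤ) := by simp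
  have g1 : G (2 * n - 1) = φ (i + (((n : ℤ)) : ZMod k)) := by
    simp only [hG, e1]
  have g0 : G 0 = φ (i + (((1 - (n : ℤ)) : ℤ) : ZMod k)) := by
    simp only [hG, e0]
  rw [g1, g0]

lemma local_step (i : ZMod k) {n : ℕ} (hn : 1 ≤ n) :
    (2 * (n : ℝ) + 1) * localAvg k φ i (n + 1)
      = φ (i + (((n : ℤ)) : ZMod k)) + φ (i + ((-(n : ℤ)) : ZMod k))
        + (2 * (n : ℝ) - 1) * localAvg k φ i n := by
  have hn1 : (1 : ℕ) ≤ n + 1 := by omega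
  have hne1 : (2 * (n : ℝ) + 1) ≠ 0 := by positivity
  have hne2 : (2 * (n : ℝ) - 1) ≠ 0 := by
    have : (1:ℝ) ≤ (n:ℝ) := by exact_mod_cast hn
    nlinarith
  rw [localAvg_eq φ i hn1, localAvg_eq φ i hn]
  have hca : (2 * (((n : ℕ) + 1 : ℕ) : ℝ) - 1) = 2 * (n : ℝ) + 1 := by push_cast; ring
  rw [hca]
  set f : ℕ → ℝ := fun t => φ (i + (((1 - ((n + 1 : ℕ) : ℤ) + t) : ℤ) : ZMod k)) with hf
  set g : ℕ → ℝ := fun t => φ (i + (((1 - (n : ℤ) + t) : ℤ) : ZMod k)) with hg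
  have hsum : ∑ t ∈ Finset.range (2 * (n + 1) - 1), f t
      = φ (i + ((-(n : ℤ)) : ZMod k)) + (∑ t ∈ Finset.range (2 * n - 1), g t)
        + φ (i + (((n : ℤ)) : ZMod k)) := by
    have hN2 : 2 * (n + 1) - 1 = (2 * n - 1) + 1 + 1 := by omega
    rw [hN2, Finset.sum_range_succ, Finset.sum_range_succ']
    have hf0 : f 0 = φ (i + ((-(n : ℤ)) : ZMod k)) := by
      simp only [hf]
      have : (((1 - ((n + 1 : ℕ) : ℤ) + ((0 : ℕ) : ℤ)) : ℤ) : ZMod k)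
          = -(((n : ℤ)) : ZMod k) := by push_cast; ring
      rw [this]
    have hftop : f ((2 * n - 1) + 1) = φ (i + (((n : ℤ)) : ZMod k)) := by
      simp only [hf]
      have : (1 - ((n + 1 : ℕ) : ℤ) + (((2 * n - 1) + 1 : ℕ) : ℤ)) = (n : ℤ) := by omega
      rw [this]
    have hmid : ∀ t : ℕ, f (t + 1) = g t := by
      intro t
      simp only [hf, hg]
      have : (1 - ((n + 1 : ℕ) : ℤ) + ((t + 1 : ℕ) : ℤ)) = 1 - (n : ℤ) + (t : ℤ) := by
        push_cast
        ring
      rw [this]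
    rw [hf0, hftop, Finset.sum_congr rfl (fun t _ => hmid t)]
    ring
  rw [hsum]
  field_simp
  ring

lemma Xrep (i : ZMod k) {n : ℕ} (hn : 1 ≤ n) (w : ZMod k) :
    φ w - localAvg k φ i n
      = (1 / (2 * (n : ℝ) - 1)) *
        ∑ t ∈ Finset.range (2 * n - 1), (φ w - φ (i + (((1 - (n : ℤ) + t) : ℤ) : ZMod k))) := by
  rw [localAvg_eq φ i hn, Finset.sum_sub_distrib, Finset.sum_const, Finset.card_range]
  have hN : ((2 * n - 1 : ℕ) : ℝ) = 2 * (n : ℝ) - 1 := by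
    push_cast [Nat.cast_sub (by omega : 1 ≤ 2 * n)]
    ring
  have hNne : (2 * (n : ℝ) - 1) ≠ 0 := by
    have : (1:ℝ) ≤ (n:ℝ) := by exact_mod_cast hn
    nlinarith
  rw [nsmul_eq_mul, hN]
  field_simp


def gfun (n : ℕ) : ℝ := 1 / ((2 * (n : ℝ) - 1) * (2 * (n : ℝ) + 1))

lemma gfun_nonneg {n : ℕ} (hn : 1 ≤ n) : 0 ≤ gfun n := by
  unfold gfun
  have h1 : (1:ℝ) ≤ (n:ℝ) := by exact_mod_cast hn
  apply div_nonneg (by norm_num)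
  nlinarith

lemma tele (j₀ : ℕ) (hj : 1 ≤ j₀) : ∀ J : ℕ, j₀ ≤ J + 1 →
    ∑ n ∈ Finset.Icc j₀ J, (4:ℝ) / ((2*(n:ℝ)-1) * (2*(n:ℝ)+1) * (2*(n:ℝ)+3))
      = gfun j₀ - gfun (J+1) := by
  intro J
  induction J with
  | zero =>
    intro hJ
    have : j₀ = 1 := by omega
    subst this
    rw [Finset.Icc_eq_empty (by omega)]
    simp
  | succ J ih =>
    intro hJ
    rcases Nat.lt_or_ge (J+1) j₀ with h | h
    · have : j₀ = J + 2 := by omega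
      subst this
      rw [Finset.Icc_eq_empty (by omega)]
      simp
    · rw [Finset.sum_Icc_succ_top h, ih (by omega)]
      have hJ1 : (1:ℝ) ≤ ((J:ℝ)+1) := by
        have := Nat.cast_nonneg (α := ℝ) J
        linarith
      unfold gfun
      have d1 : (2*((J+1:ℕ):ℝ)-1) > 0 := by push_cast; nlinarith
      have d2 : (2*((J+1:ℕ):ℝ)+1) > 0 := by positivity
      have d3 : (2*((J+1:ℕ):ℝ)+3) > 0 := by positivity
      have d4 : (2*((J+1+1:ℕ):ℝ)-1) > 0 := by push_cast; nlinarith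
      have d5 : (2*((J+1+1:ℕ):ℝ)+1) > 0 := by positivity
      push_cast at *
      field_simp
      ring

lemma Kbound {m : ℕ} (hm : 1 ≤ m) (J : ℕ) :
    (m:ℝ)^2 * ∑ n ∈ Finset.Icc ((m+2)/2) J, (4:ℝ) / ((2*(n:ℝ)+1)^2 * (2*(n:ℝ)-1))
      ≤ 5/3 := by
  set j₀ := (m+2)/2 with hj0
  have hj1 : 1 ≤ j₀ := by omega
  have hterm : ∀ n ∈ Finset.Icc j₀ J,
      (4:ℝ) / ((2*(n:ℝ)+1)^2 * (2*(n:ℝ)-1))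
        ≤ (5/3) * ((4:ℝ) / ((2*(n:ℝ)-1) * (2*(n:ℝ)+1) * (2*(n:ℝ)+3))) := by
    intro n hn
    have hn1 : 1 ≤ n := le_trans hj1 (Finset.mem_Icc.mp hn).1
    have hn1' : (1:ℝ) ≤ (n:ℝ) := by exact_mod_cast hn1
    have p1 : (1:ℝ) ≤ 2*(n:ℝ)-1 := by linarith
    have p2 : (0:ℝ) < 2*(n:ℝ)+1 := by linarith
    have p3 : (0:ℝ) < 2*(n:ℝ)+3 := by linarith
    have p0 : (0:ℝ) < 2*(n:ℝ)-1 := by linarith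
    have hX : (0:ℝ) < (2*(n:ℝ)+1)^2 * (2*(n:ℝ)-1) := by positivity
    have hY : (0:ℝ) < 3 * ((2*(n:ℝ)-1) * (2*(n:ℝ)+1) * (2*(n:ℝ)+3)) := by positivity
    have hrw : (5/3) * ((4:ℝ) / ((2*(n:ℝ)-1) * (2*(n:ℝ)+1) * (2*(n:ℝ)+3)))
        = 20 / (3 * ((2*(n:ℝ)-1) * (2*(n:ℝ)+1) * (2*(n:ℝ)+3))) := by
      rw [div_mul_div_comm]
      norm_num
    rw [hrw, div_le_div_iff₀ hX hY]
    have key : 12*(2*(n:ℝ)+3) ≤ 20*(2*(n:ℝ)+1) := by linarith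
    have h88 : (0:ℝ) ≤ (2*(n:ℝ)-1) * (2*(n:ℝ)+1) := by positivity
    nlinarith [mul_le_mul_of_nonneg_left key h88]
  rcases Nat.lt_or_ge (J+1) j₀ with hc | hc
  · rw [Finset.Icc_eq_empty (by omega)]
    simp
    norm_num
  have hsum := Finset.sum_le_sum hterm
  rw [← Finset.mul_sum, tele j₀ hj1 J hc] at hsum
  have hg : gfun j₀ - gfun (J+1) ≤ gfun j₀ := by
    have := gfun_nonneg (n := J+1) (by omega)
    linarith
  have hmj : (m:ℝ) ≤ 2*(j₀:ℝ)-1 := by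
    have : m + 1 ≤ 2 * j₀ := by omega
    have := (Nat.cast_le (α := ℝ)).mpr this
    push_cast at this
    linarith
  have hm' : (1:ℝ) ≤ (m:ℝ) := by exact_mod_cast hm
  have hgj : gfun j₀ ≤ 1 / ((m:ℝ) * (m:ℝ)) := by
    unfold gfun
    apply one_div_le_one_div_of_le
    · nlinarith
    · nlinarith
  have hS : ∑ n ∈ Finset.Icc j₀ J, (4:ℝ) / ((2*(n:ℝ)+1)^2 * (2*(n:ℝ)-1))
      ≤ (5/3) * (1 / ((m:ℝ) * (m:ℝ))) := by
    calc _ ≤ (5/3) * (gfun j₀ - gfun (J+1)) := hsum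
    _ ≤ (5/3) * gfun j₀ := by linarith
    _ ≤ _ := by
        have := hgj
        nlinarith [gfun_nonneg hj1]
  calc (m:ℝ)^2 * ∑ n ∈ Finset.Icc j₀ J, (4:ℝ) / ((2*(n:ℝ)+1)^2 * (2*(n:ℝ)-1))
      ≤ (m:ℝ)^2 * ((5/3) * (1 / ((m:ℝ) * (m:ℝ)))) := by
        apply mul_le_mul_of_nonneg_left hS (by positivity)
    _ = 5/3 := by field_simp


lemma sum_shift_right (q z : ZMod k) :
    ∑ i : ZMod k, rr k φ q (i + z) = ∑ i : ZMod k, rr k φ q i :=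
  Fintype.sum_equiv (Equiv.addRight z) _ _ (fun i => rfl)

lemma Abound {n : ℕ} (hn : 1 ≤ n) :
    ∑ i : ZMod k, (globalAvg k φ - localAvg k φ i n)^2 ≤ ((k:ℝ)/3) * bSemiSq k φ := by
  have hk : (0:ℝ) < (k:ℝ) := by
    have := Nat.pos_of_ne_zero (NeZero.ne k)
    exact_mod_cast this
  have hn' : (1:ℝ) ≤ (n:ℝ) := by exact_mod_cast hn
  have hNc : ((2 * n - 1 : ℕ) : ℝ) = 2 * (n:ℝ) - 1 := by
    push_cast [Nat.cast_sub (by omega : 1 ≤ 2 * n)]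
    ring
  have hNpos : (0:ℝ) < 2 * (n:ℝ) - 1 := by linarith
  set N := 2 * n - 1 with hN
  set w : ℝ := 1 / ((k:ℝ) * (2 * (n:ℝ) - 1)) with hw
  set z : ℕ → ZMod k := fun t => (((1 - (n : ℤ) + t) : ℤ) : ZMod k) with hz
  -- Cauchy-Schwarz per i
  have main : ∀ i : ZMod k, (globalAvg k φ - localAvg k φ i n)^2
      ≤ (w^2 * ((2*(n:ℝ)-1) * ((k:ℝ)^3/6)))
        * ∑ t ∈ Finset.range N, ∑ q : ZMod k, rr k φ q (i + z t) := by
    intro i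
    have rep : globalAvg k φ - localAvg k φ i n
        = ∑ x ∈ (Finset.univ ×ˢ Finset.range N),
            ((w * (cycDist k x.1 (i + z x.2) : ℝ)) * gg k φ x.1 (i + z x.2)) := by
      rw [Finset.sum_product]
      have e0 : ∀ (q : ZMod k) (t : ℕ),
          (w * (cycDist k q (i + z t) : ℝ)) * gg k φ q (i + z t)
            = w * (φ q - φ (i + z t)) := by
        intro q t
        rw [mul_assoc, D_mul_gg]
      have e1 : ∀ q : ZMod k, ∑ t ∈ Finset.range N,
          ((w * (cycDist k q (i + z t) : ℝ)) * gg k φ q (i + z t))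
            = w * ((2*(n:ℝ)-1) * φ q - ∑ t ∈ Finset.range N, φ (i + z t)) := by
        intro q
        rw [Finset.sum_congr rfl (fun t _ => e0 q t), ← Finset.mul_sum,
          Finset.sum_sub_distrib, Finset.sum_const, Finset.card_range, nsmul_eq_mul, hNc]
      rw [Finset.sum_congr rfl (fun q _ => e1 q), ← Finset.mul_sum,
        Finset.sum_sub_distrib, ← Finset.mul_sum, Finset.sum_const, Finset.card_univ,
        ZMod.card k]
      have hla : localAvg k φ i n
          = (1 / (2 * (n : ℝ) - 1)) * ∑ t ∈ Finset.range N, φ (i + z t) :=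
        localAvg_eq φ i hn
      unfold globalAvg
      rw [hla, hw]
      field_simp
      ring
    rw [rep]
    calc (∑ x ∈ (Finset.univ ×ˢ Finset.range N),
            ((w * (cycDist k x.1 (i + z x.2) : ℝ)) * gg k φ x.1 (i + z x.2)))^2
        ≤ (∑ x ∈ (Finset.univ ×ˢ Finset.range N),
              (w * (cycDist k x.1 (i + z x.2) : ℝ))^2)
          * ∑ x ∈ (Finset.univ ×ˢ Finset.range N), (gg k φ x.1 (i + z x.2))^2 :=
          Finset.sum_mul_sq_le_sq_mul_sq _ _ _
      _ ≤ (w^2 * ((2*(n:ℝ)-1) * ((k:ℝ)^3/6)))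
          * ∑ t ∈ Finset.range N, ∑ q : ZMod k, rr k φ q (i + z t) := by
          have hB : ∑ x ∈ (Finset.univ ×ˢ Finset.range N), (gg k φ x.1 (i + z x.2))^2
              = ∑ t ∈ Finset.range N, ∑ q : ZMod k, rr k φ q (i + z t) := by
            rw [Finset.sum_product, Finset.sum_comm]
            exact Finset.sum_congr rfl fun t _ =>
              Finset.sum_congr rfl fun q _ => gg_sq φ _ _
          have hBnn : (0:ℝ) ≤ ∑ t ∈ Finset.range N, ∑ q : ZMod k, rr k φ q (i + z t) :=
            Finset.sum_nonneg fun t _ => Finset.sum_nonneg fun q _ => rr_nonneg φ _ _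
          have hA : ∑ x ∈ (Finset.univ ×ˢ Finset.range N),
              (w * (cycDist k x.1 (i + z x.2) : ℝ))^2
                ≤ w^2 * ((2*(n:ℝ)-1) * ((k:ℝ)^3/6)) := by
            have e2 : ∑ x ∈ (Finset.univ ×ˢ Finset.range N),
                (w * (cycDist k x.1 (i + z x.2) : ℝ))^2
                  = w^2 * ∑ t ∈ Finset.range N, ∑ q : ZMod k,
                      (cycDist k q (i + z t) : ℝ)^2 := by
              rw [Finset.sum_product, Finset.sum_comm, Finset.mul_sum]
              refine Finset.sum_congr rfl fun t _ => ?_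
              rw [Finset.mul_sum]
              exact Finset.sum_congr rfl fun q _ => by ring
            rw [e2]
            have e3 : ∑ t ∈ Finset.range N, ∑ q : ZMod k, (cycDist k q (i + z t) : ℝ)^2
                ≤ (2*(n:ℝ)-1) * ((k:ℝ)^3/6) := by
              calc ∑ t ∈ Finset.range N, ∑ q : ZMod k, (cycDist k q (i + z t) : ℝ)^2
                  ≤ ∑ t ∈ Finset.range N, ((k:ℝ)^3/6) :=
                    Finset.sum_le_sum fun t _ => sum_dist_sq (i + z t)
                _ = (2*(n:ℝ)-1) * ((k:ℝ)^3/6) := by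
                    rw [Finset.sum_const, Finset.card_range, nsmul_eq_mul, hNc]
            exact mul_le_mul_of_nonneg_left e3 (by positivity)
          rw [hB]
          exact mul_le_mul_of_nonneg_right hA hBnn
  -- sum over i
  have total : ∑ i : ZMod k, ∑ t ∈ Finset.range N, ∑ q : ZMod k, rr k φ q (i + z t)
      = (2*(n:ℝ)-1) * (2 * bSemiSq k φ) := by
    rw [Finset.sum_comm]
    have e4 : ∀ t : ℕ, ∑ i : ZMod k, ∑ q : ZMod k, rr k φ q (i + z t)
        = 2 * bSemiSq k φ := by
      intro t
      rw [Finset.sum_comm]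
      rw [Finset.sum_congr rfl (fun q _ => sum_shift_right φ q (z t))]
      exact sum_rr φ
    rw [Finset.sum_congr rfl (fun t _ => e4 t), Finset.sum_const, Finset.card_range,
      nsmul_eq_mul, hNc]
  calc ∑ i : ZMod k, (globalAvg k φ - localAvg k φ i n)^2
      ≤ ∑ i : ZMod k, ((w^2 * ((2*(n:ℝ)-1) * ((k:ℝ)^3/6)))
          * ∑ t ∈ Finset.range N, ∑ q : ZMod k, rr k φ q (i + z t)) :=
        Finset.sum_le_sum fun i _ => main i
    _ = (w^2 * ((2*(n:ℝ)-1) * ((k:ℝ)^3/6))) * ((2*(n:ℝ)-1) * (2 * bSemiSq k φ)) := by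
        rw [← Finset.mul_sum, total]
    _ = ((k:ℝ)/3) * bSemiSq k φ := by
        rw [hw]
        field_simp
        ring


variable {ℓ : ℕ}

lemma tfac_bound (hℓ : 2 ≤ ℓ) {j : ℕ} (h1j : 1 ≤ j) (hjl : j ≤ ℓ) :
    (1 - ((j : ℝ) - 1) / ((ℓ : ℝ) - 1))^2 ≤ 1 := by
  have hl : (1:ℝ) ≤ (ℓ:ℝ) - 1 := by
    have : (2:ℝ) ≤ (ℓ:ℝ) := by exact_mod_cast hℓ
    linarith
  have hj' : (1:ℝ) ≤ (j:ℝ) := by exact_mod_cast h1j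
  have hjl' : (j:ℝ) ≤ (ℓ:ℝ) := by exact_mod_cast hjl
  have h0 : 0 ≤ ((j : ℝ) - 1) / ((ℓ : ℝ) - 1) := by
    apply div_nonneg <;> linarith
  have h1 : ((j : ℝ) - 1) / ((ℓ : ℝ) - 1) ≤ 1 := by
    rw [div_le_one (by linarith)]
    linarith
  nlinarith

lemma horiz (hℓk : 4 * ℓ < k) (hℓ : 2 ≤ ℓ) :
    ∑ i : ZMod k, ∑ j ∈ Finset.Icc 1 ℓ,
      (avgExt k ℓ φ (i+1) j - avgExt k ℓ φ i j)^2 ≤ 2 * bSemiSq k φ := by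
  rw [Finset.sum_comm]
  have key : ∀ j ∈ Finset.Icc 1 ℓ,
      ∑ i : ZMod k, (avgExt k ℓ φ (i+1) j - avgExt k ℓ φ i j)^2
        ≤ Rsh k φ (((2*j-1 : ℕ)) : ZMod k) := by
    intro j hj
    obtain ⟨h1j, hjl⟩ := Finset.mem_Icc.mp hj
    have hNc : ((2 * j - 1 : ℕ) : ℝ) = 2 * (j:ℝ) - 1 := by
      push_cast [Nat.cast_sub (by omega : 1 ≤ 2 * j)]
      ring
    have hj' : (1:ℝ) ≤ (j:ℝ) := by exact_mod_cast h1j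
    have hNpos : (0:ℝ) < 2 * (j:ℝ) - 1 := by linarith
    have hdist : ∀ i : ZMod k,
        cycDist k (i + (((j : ℤ)) : ZMod k)) (i + (((1 - (j : ℤ)) : ℤ) : ZMod k))
          = 2*j-1 := by
      intro i
      rw [cycDist_shift]
      apply cyc_eq (m := 2*j-1) _ (by omega)
      left
      push_cast [Nat.cast_sub (by omega : 1 ≤ 2 * j)]
      ring
    have hterm : ∀ i : ZMod k, (avgExt k ℓ φ (i+1) j - avgExt k ℓ φ i j)^2
        ≤ rr k φ (i + (((j : ℤ)) : ZMod k)) (i + (((1 - (j : ℤ)) : ℤ) : ZMod k)) := by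
      intro i
      have hd : avgExt k ℓ φ (i+1) j - avgExt k ℓ φ i j
          = (1 - ((j : ℝ) - 1) / ((ℓ : ℝ) - 1))
            * (localAvg k φ (i+1) j - localAvg k φ i j) := by
        unfold avgExt
        ring
      rw [hd, local_diff φ i h1j]
      have hsq := sq_eq_D_rr φ (i + (((j : ℤ)) : ZMod k)) (i + (((1 - (j : ℤ)) : ℤ) : ZMod k))
      rw [hdist i, hNc] at hsq
      have htf := tfac_bound hℓ h1j hjl
      have hrrn := rr_nonneg φ (i + (((j : ℤ)) : ZMod k)) (i + (((1 - (j : ℤ)) : ℤ) : ZMod k))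
      rw [mul_pow, mul_pow, hsq]
      rw [div_pow, one_pow]
      have e5 : (1 - ((j:ℝ) - 1) / ((ℓ:ℝ) - 1))^2 * (1 / (2*(j:ℝ)-1)^2
          * ((2*(j:ℝ)-1)^2 * rr k φ (i + (((j : ℤ)) : ZMod k))
              (i + (((1 - (j : ℤ)) : ℤ) : ZMod k))))
          = (1 - ((j:ℝ) - 1) / ((ℓ:ℝ) - 1))^2 * rr k φ (i + (((j : ℤ)) : ZMod k))
              (i + (((1 - (j : ℤ)) : ℤ) : ZMod k)) := by
        rw [one_div, inv_mul_cancel_left₀ (pow_ne_zero 2 hNpos.ne')]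
      rw [e5]
      nlinarith
    calc ∑ i : ZMod k, (avgExt k ℓ φ (i+1) j - avgExt k ℓ φ i j)^2
        ≤ ∑ i : ZMod k, rr k φ (i + (((j : ℤ)) : ZMod k))
            (i + (((1 - (j : ℤ)) : ℤ) : ZMod k)) := Finset.sum_le_sum fun i _ => hterm i
      _ = Rsh k φ ((((1 - (j : ℤ)) : ℤ) : ZMod k) - (((j : ℤ)) : ZMod k)) :=
          sum_shift φ _ _
      _ = Rsh k φ (((2*j-1 : ℕ)) : ZMod k) := by
          have : (((1 - (j : ℤ)) : ℤ) : ZMod k) - (((j : ℤ)) : ZMod k)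
              = -((((2*j-1 : ℕ)) : ZMod k)) := by
            push_cast [Nat.cast_sub (by omega : 1 ≤ 2 * j)]
            ring
          rw [this, Rsh_neg]
  calc ∑ j ∈ Finset.Icc 1 ℓ, ∑ i : ZMod k, (avgExt k ℓ φ (i+1) j - avgExt k ℓ φ i j)^2
      ≤ ∑ j ∈ Finset.Icc 1 ℓ, Rsh k φ (((2*j-1 : ℕ)) : ZMod k) := Finset.sum_le_sum key
    _ ≤ 2 * bSemiSq k φ := by
        apply sum_Rsh_le φ (Finset.Icc 1 ℓ) (fun j => (((2*j-1 : ℕ)) : ZMod k))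
        apply cast_injOn
        · intro x hx
          have := (Finset.mem_Icc.mp hx).2
          omega
        · intro x hx y hy hxy
          have hx' := (Finset.mem_Icc.mp hx).1
          have hy' := (Finset.mem_Icc.mp hy).1
          omega


lemma reindex1 (F : ℕ → ℝ) (N : ℕ) :
    ∑ t ∈ Finset.range N, F (N - t) = ∑ m ∈ Finset.Icc 1 N, F m := by
  refine Finset.sum_nbij' (fun t => N - t) (fun m => N - m) ?_ ?_ ?_ ?_ ?_
  · intro t ht
    have := Finset.mem_range.mp ht
    rw [Finset.mem_Icc]
    omega
  · intro m hm
    have := Finset.mem_Icc.mp hm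
    rw [Finset.mem_range]
    omega
  · intro t ht
    have := Finset.mem_range.mp ht
    omega
  · intro m hm
    have := Finset.mem_Icc.mp hm
    omega
  · intro t _
    rfl

lemma reindex2 (F : ℕ → ℝ) (N : ℕ) :
    ∑ t ∈ Finset.range N, F (t + 1) = ∑ m ∈ Finset.Icc 1 N, F m := by
  refine Finset.sum_nbij' (fun t => t + 1) (fun m => m - 1) ?_ ?_ ?_ ?_ ?_
  · intro t ht
    have := Finset.mem_range.mp ht
    rw [Finset.mem_Icc]
    omega
  · intro m hm
    have := Finset.mem_Icc.mp hm
    rw [Finset.mem_range]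
    omega
  · intro t _
    omega
  · intro m hm
    have := Finset.mem_Icc.mp hm
    omega
  · intro t _
    rfl

lemma XYbound {n : ℕ} (hn : 1 ≤ n) (e : ℤ) (md : ℕ → ℕ)
    (hdist : ∀ t, t < 2*n-1 → ∀ i : ZMod k,
        cycDist k (i + ((e : ℤ) : ZMod k)) (i + (((1 - (n:ℤ) + t) : ℤ) : ZMod k)) = md t)
    (hrsh : ∀ t, t < 2*n-1 →
        Rsh k φ ((((1 - (n:ℤ) + t) : ℤ) : ZMod k) - ((e : ℤ) : ZMod k))
          = Rsh k φ (((md t : ℕ)) : ZMod k)) :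
    ∑ i : ZMod k, (φ (i + ((e : ℤ) : ZMod k)) - localAvg k φ i n)^2
      ≤ (1/(2*(n:ℝ)-1)) * ∑ t ∈ Finset.range (2*n-1),
          ((md t : ℕ) : ℝ)^2 * Rsh k φ (((md t : ℕ)) : ZMod k) := by
  have hn' : (1:ℝ) ≤ (n:ℝ) := by exact_mod_cast hn
  have hNpos : (0:ℝ) < 2 * (n:ℝ) - 1 := by linarith
  have hNc : ((2 * n - 1 : ℕ) : ℝ) = 2 * (n:ℝ) - 1 := by
    push_cast [Nat.cast_sub (by omega : 1 ≤ 2 * n)]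
    ring
  set N := 2*n-1 with hN
  set E : ZMod k := ((e : ℤ) : ZMod k) with hE
  set z : ℕ → ZMod k := fun t => (((1 - (n:ℤ) + t) : ℤ) : ZMod k) with hz
  have per_i : ∀ i : ZMod k, (φ (i + E) - localAvg k φ i n)^2
      ≤ (1/(2*(n:ℝ)-1)^2) * ((2*(n:ℝ)-1) *
          ∑ t ∈ Finset.range N, (φ (i + E) - φ (i + z t))^2) := by
    intro i
    rw [Xrep φ i hn (i + E), mul_pow]
    have hcs := sq_sum_le_card_mul_sum_sq
      (s := Finset.range N) (f := fun t => φ (i + E) - φ (i + z t))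
    rw [Finset.card_range, hNc] at hcs
    have h1 : (1 / (2*(n:ℝ)-1))^2 = 1/(2*(n:ℝ)-1)^2 := by
      rw [div_pow, one_pow]
    rw [h1]
    exact mul_le_mul_of_nonneg_left hcs (by positivity)
  have hsq : ∀ t ∈ Finset.range N, ∀ i : ZMod k,
      (φ (i + E) - φ (i + z t))^2
        = ((md t : ℕ) : ℝ)^2 * rr k φ (i + E) (i + z t) := by
    intro t ht i
    have := sq_eq_D_rr φ (i + E) (i + z t)
    rw [hdist t (Finset.mem_range.mp ht) i] at this
    exact this
  have hsum_t : ∀ t ∈ Finset.range N,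
      ∑ i : ZMod k, (φ (i + E) - φ (i + z t))^2
        = ((md t : ℕ) : ℝ)^2 * Rsh k φ (((md t : ℕ)) : ZMod k) := by
    intro t ht
    rw [Finset.sum_congr rfl (fun i _ => hsq t ht i), ← Finset.mul_sum,
      sum_shift φ E (z t), hrsh t (Finset.mem_range.mp ht)]
  calc ∑ i : ZMod k, (φ (i + E) - localAvg k φ i n)^2
      ≤ ∑ i : ZMod k, ((1/(2*(n:ℝ)-1)^2) * ((2*(n:ℝ)-1) *
          ∑ t ∈ Finset.range N, (φ (i + E) - φ (i + z t))^2)) :=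
        Finset.sum_le_sum fun i _ => per_i i
    _ = (1/(2*(n:ℝ)-1)^2) * ((2*(n:ℝ)-1) *
          ∑ t ∈ Finset.range N, ∑ i : ZMod k, (φ (i + E) - φ (i + z t))^2) := by
        rw [← Finset.mul_sum, ← Finset.mul_sum, Finset.sum_comm]
    _ = (1/(2*(n:ℝ)-1)) * ∑ t ∈ Finset.range N,
          ((md t : ℕ) : ℝ)^2 * Rsh k φ (((md t : ℕ)) : ZMod k) := by
        rw [Finset.sum_congr rfl hsum_t]
        field_simp

lemma Bbound (hℓk : 4 * ℓ < k) (hℓ : 2 ≤ ℓ) :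
    ∑ n ∈ Finset.Icc 1 (ℓ-1), ∑ i : ZMod k,
      (localAvg k φ i (n+1) - localAvg k φ i n)^2 ≤ (10/3) * bSemiSq k φ := by
  set F : ℕ → ℝ := fun m => ((m : ℕ) : ℝ)^2 * Rsh k φ (((m : ℕ)) : ZMod k) with hF
  have hFnn : ∀ m, 1 ≤ m → 0 ≤ F m := by
    intro m _
    exact mul_nonneg (by positivity) (Rsh_nonneg φ _)
  set T : ℕ → ℝ := fun n => ∑ m ∈ Finset.Icc 1 (2*n-1), F m with hT
  have per_n : ∀ n ∈ Finset.Icc 1 (ℓ-1),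
      ∑ i : ZMod k, (localAvg k φ i (n+1) - localAvg k φ i n)^2
        ≤ (4/((2*(n:ℝ)+1)^2 * (2*(n:ℝ)-1))) * T n := by
    intro n hn
    obtain ⟨hn1, hnl⟩ := Finset.mem_Icc.mp hn
    have hn' : (1:ℝ) ≤ (n:ℝ) := by exact_mod_cast hn1
    have hNpos : (0:ℝ) < 2 * (n:ℝ) - 1 := by linarith
    have hPpos : (0:ℝ) < 2 * (n:ℝ) + 1 := by linarith
    -- X part
    have hX := XYbound φ hn1 ((n : ℤ)) (fun t => 2*n-1-t)
      (by
        intro t ht i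
        rw [cycDist_shift]
        apply cyc_eq (m := 2*n-1-t) _ (by omega)
        left
        have h9 : ((2*n-1-t : ℕ) : ℤ) = (n:ℤ) - (1 - (n:ℤ) + t) := by omega
        rw [← Int.cast_sub, ← h9, Int.cast_natCast])
      (by
        intro t ht
        have : ((((1 - (n:ℤ) + t) : ℤ) : ZMod k)) - (((n : ℤ) : ZMod k))
            = -((((2*n-1-t : ℕ)) : ZMod k)) := by
          have h9 : (-((2*n-1-t : ℕ) : ℤ)) = (1 - (n:ℤ) + t) - (n:ℤ) := by omega
          rw [← Int.cast_sub, ← h9, Int.cast_neg, Int.cast_natCast]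
        rw [this, Rsh_neg])
    -- Y part
    have hY := XYbound φ hn1 (-(n : ℤ)) (fun t => t+1)
      (by
        intro t ht i
        rw [cycDist_shift]
        apply cyc_eq (m := t+1) _ (by omega)
        right
        have h9 : ((t+1 : ℕ) : ℤ) = (1 - (n:ℤ) + t) - (-(n:ℤ)) := by omega
        rw [← Int.cast_sub, ← h9, Int.cast_natCast])
      (by
        intro t ht
        congr 1
        have h9 : ((t+1 : ℕ) : ℤ) = (1 - (n:ℤ) + t) - (-(n:ℤ)) := by omega
        rw [← Int.cast_sub, ← h9, Int.cast_natCast])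
    have hXr : ∑ t ∈ Finset.range (2*n-1), F (2*n-1-t) = T n := reindex1 F (2*n-1)
    have hYr : ∑ t ∈ Finset.range (2*n-1), F (t+1) = T n := reindex2 F (2*n-1)
    rw [hXr] at hX
    rw [hYr] at hY
    have hcastY : ((((-(n : ℤ)) : ℤ)) : ZMod k) = -(((n : ℤ) : ZMod k)) := by
      push_cast
      ring
    rw [hcastY] at hY
    -- decomposition
    have hdecomp : ∀ i : ZMod k,
        (localAvg k φ i (n+1) - localAvg k φ i n)^2
          ≤ (2/(2*(n:ℝ)+1)^2) * ((φ (i + (((n : ℤ)) : ZMod k)) - localAvg k φ i n)^2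
              + (φ (i + ((-(n : ℤ)) : ZMod k)) - localAvg k φ i n)^2) := by
      intro i
      have hstep := local_step φ i hn1
      set X := φ (i + (((n : ℤ)) : ZMod k)) - localAvg k φ i n with hXd
      set Y := φ (i + ((-(n : ℤ)) : ZMod k)) - localAvg k φ i n with hYd
      have hΔ : (2*(n:ℝ)+1) * (localAvg k φ i (n+1) - localAvg k φ i n) = X + Y := by
        rw [hXd, hYd]
        nlinarith [hstep]
      have h2 : localAvg k φ i (n+1) - localAvg k φ i n = (X + Y)/(2*(n:ℝ)+1) := by
        field_simp
        linarith [hΔ]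
      rw [h2, div_pow]
      rw [div_le_iff₀ (by positivity)]
      have : (X+Y)^2 ≤ 2*(X^2+Y^2) := by nlinarith [sq_nonneg (X - Y)]
      calc (X+Y)^2 ≤ 2*(X^2+Y^2) := this
        _ = 2 / (2 * (n:ℝ) + 1) ^ 2 * (X ^ 2 + Y ^ 2) * (2 * (n:ℝ) + 1) ^ 2 := by
            field_simp
    calc ∑ i : ZMod k, (localAvg k φ i (n+1) - localAvg k φ i n)^2
        ≤ ∑ i : ZMod k, ((2/(2*(n:ℝ)+1)^2) *
            ((φ (i + (((n : ℤ)) : ZMod k)) - localAvg k φ i n)^2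
              + (φ (i + ((-(n : ℤ)) : ZMod k)) - localAvg k φ i n)^2)) :=
          Finset.sum_le_sum fun i _ => hdecomp i
      _ = (2/(2*(n:ℝ)+1)^2) *
            ((∑ i : ZMod k, (φ (i + (((n : ℤ)) : ZMod k)) - localAvg k φ i n)^2)
              + ∑ i : ZMod k, (φ (i + ((-(n : ℤ)) : ZMod k)) - localAvg k φ i n)^2) := by
          rw [← Finset.mul_sum, Finset.sum_add_distrib]
      _ ≤ (2/(2*(n:ℝ)+1)^2) * ((1/(2*(n:ℝ)-1)) * T n + (1/(2*(n:ℝ)-1)) * T n) := by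
          apply mul_le_mul_of_nonneg_left _ (by positivity)
          exact add_le_add hX hY
      _ = (4/((2*(n:ℝ)+1)^2 * (2*(n:ℝ)-1))) * T n := by
          field_simp
          ring
  -- swap sums
  have hTn : ∀ n ∈ Finset.Icc 1 (ℓ-1), T n
      = ∑ m ∈ Finset.Icc 1 (2*ℓ-3), (if m ≤ 2*n-1 then F m else 0) := by
    intro n hn
    obtain ⟨hn1, hnl⟩ := Finset.mem_Icc.mp hn
    rw [← Finset.sum_filter]
    have hfil : (Finset.Icc 1 (2*ℓ-3)).filter (fun m => m ≤ 2*n-1)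
        = Finset.Icc 1 (2*n-1) := by
      ext x
      simp only [Finset.mem_filter, Finset.mem_Icc]
      omega
    rw [hfil]
  have step2 : ∑ n ∈ Finset.Icc 1 (ℓ-1),
      (4/((2*(n:ℝ)+1)^2 * (2*(n:ℝ)-1))) * T n
      = ∑ m ∈ Finset.Icc 1 (2*ℓ-3),
          ((∑ n ∈ Finset.Icc ((m+2)/2) (ℓ-1), 4/((2*(n:ℝ)+1)^2 * (2*(n:ℝ)-1))) * F m) := by
    rw [Finset.sum_congr rfl (fun n hn => by rw [hTn n hn, Finset.mul_sum])]
    rw [Finset.sum_comm]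
    refine Finset.sum_congr rfl fun m hm => ?_
    obtain ⟨hm1, hml⟩ := Finset.mem_Icc.mp hm
    rw [Finset.sum_mul]
    have : ∀ n ∈ Finset.Icc 1 (ℓ-1),
        (4/((2*(n:ℝ)+1)^2 * (2*(n:ℝ)-1))) * (if m ≤ 2*n-1 then F m else 0)
          = (if (m+2)/2 ≤ n then (4/((2*(n:ℝ)+1)^2 * (2*(n:ℝ)-1))) * F m else 0) := by
      intro n hn
      obtain ⟨hn1, _⟩ := Finset.mem_Icc.mp hn
      have hiff : (m ≤ 2*n-1) ↔ ((m+2)/2 ≤ n) := by omega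
      split_ifs with h1 h2 h2
      · rfl
      · exact absurd (hiff.mp h1) h2
      · exact absurd (hiff.mpr h2) h1
      · ring
    rw [Finset.sum_congr rfl this, ← Finset.sum_filter]
    have hfil : (Finset.Icc 1 (ℓ-1)).filter (fun n => (m+2)/2 ≤ n)
        = Finset.Icc ((m+2)/2) (ℓ-1) := by
      ext x
      simp only [Finset.mem_filter, Finset.mem_Icc]
      omega
    rw [hfil]
  have step3 : ∀ m ∈ Finset.Icc 1 (2*ℓ-3),
      ((∑ n ∈ Finset.Icc ((m+2)/2) (ℓ-1), 4/((2*(n:ℝ)+1)^2 * (2*(n:ℝ)-1))) * F m)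
        ≤ (5/3) * Rsh k φ (((m : ℕ)) : ZMod k) := by
    intro m hm
    obtain ⟨hm1, hml⟩ := Finset.mem_Icc.mp hm
    have hK := Kbound (m := m) hm1 (ℓ-1)
    have hRnn := Rsh_nonneg φ (((m : ℕ)) : ZMod k)
    have : ((∑ n ∈ Finset.Icc ((m+2)/2) (ℓ-1), 4/((2*(n:ℝ)+1)^2 * (2*(n:ℝ)-1))) * F m)
        = ((m:ℝ)^2 * ∑ n ∈ Finset.Icc ((m+2)/2) (ℓ-1), 4/((2*(n:ℝ)+1)^2 * (2*(n:ℝ)-1)))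
          * Rsh k φ (((m : ℕ)) : ZMod k) := by
      rw [hF]
      ring
    rw [this]
    exact mul_le_mul_of_nonneg_right hK hRnn
  calc ∑ n ∈ Finset.Icc 1 (ℓ-1), ∑ i : ZMod k,
        (localAvg k φ i (n+1) - localAvg k φ i n)^2
      ≤ ∑ n ∈ Finset.Icc 1 (ℓ-1), (4/((2*(n:ℝ)+1)^2 * (2*(n:ℝ)-1))) * T n :=
        Finset.sum_le_sum per_n
    _ = ∑ m ∈ Finset.Icc 1 (2*ℓ-3),
          ((∑ n ∈ Finset.Icc ((m+2)/2) (ℓ-1), 4/((2*(n:ℝ)+1)^2 * (2*(n:ℝ)-1))) * F m) :=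
        step2
    _ ≤ ∑ m ∈ Finset.Icc 1 (2*ℓ-3), (5/3) * Rsh k φ (((m : ℕ)) : ZMod k) :=
        Finset.sum_le_sum step3
    _ = (5/3) * ∑ m ∈ Finset.Icc 1 (2*ℓ-3), Rsh k φ (((m : ℕ)) : ZMod k) := by
        rw [Finset.mul_sum]
    _ ≤ (5/3) * (2 * bSemiSq k φ) := by
        apply mul_le_mul_of_nonneg_left _ (by norm_num)
        apply sum_Rsh_le φ (Finset.Icc 1 (2*ℓ-3)) (fun m => (((m : ℕ)) : ZMod k))
        apply cast_injOn
        · intro x hx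
          have := (Finset.mem_Icc.mp hx).2
          omega
        · intro x hx y hy hxy
          exact hxy
    _ = (10/3) * bSemiSq k φ := by ring


variable {c : ℕ}

lemma vert (hℓk : 4 * ℓ < k) (hk2 : k < 2 * c * ℓ) (hℓ : 2 ≤ ℓ) :
    ∑ i : ZMod k, ∑ j ∈ Finset.Icc 1 (ℓ-1),
      (avgExt k ℓ φ i (j+1) - avgExt k ℓ φ i j)^2
      ≤ (2 * (c:ℝ) + 10) * bSemiSq k φ := by
  rw [Finset.sum_comm]
  have hc3 : 3 ≤ c := by
    have h4 : 4 * ℓ < 2 * c * ℓ := lt_trans hℓk hk2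
    have hl0 : 0 < ℓ := by omega
    have : 4 < 2 * c := by
      by_contra hcon
      push_neg at hcon
      have : 2 * c * ℓ ≤ 4 * ℓ := Nat.mul_le_mul_right ℓ hcon
      omega
    omega
  have hl' : (2:ℝ) ≤ (ℓ:ℝ) := by exact_mod_cast hℓ
  have hlpos : (0:ℝ) < (ℓ:ℝ) - 1 := by linarith
  have hlne : ((ℓ:ℝ) - 1) ≠ 0 := ne_of_gt hlpos
  have per_j : ∀ j ∈ Finset.Icc 1 (ℓ-1),
      ∑ i : ZMod k, (avgExt k ℓ φ i (j+1) - avgExt k ℓ φ i j)^2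
        ≤ (3/2) * (1/((ℓ:ℝ)-1))^2 * (((k:ℝ)/3) * bSemiSq k φ)
          + 3 * ∑ i : ZMod k, (localAvg k φ i (j+1) - localAvg k φ i j)^2 := by
    intro j hj
    obtain ⟨hj1, hjl⟩ := Finset.mem_Icc.mp hj
    have hper : ∀ i : ZMod k, (avgExt k ℓ φ i (j+1) - avgExt k ℓ φ i j)^2
        ≤ (3/2) * (1/((ℓ:ℝ)-1))^2 * (globalAvg k φ - localAvg k φ i (j+1))^2
          + 3 * (localAvg k φ i (j+1) - localAvg k φ i j)^2 := by
      intro i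
      set A := (1/((ℓ:ℝ)-1)) * (globalAvg k φ - localAvg k φ i (j+1)) with hA
      set B := (1 - ((j:ℝ)-1)/((ℓ:ℝ)-1)) * (localAvg k φ i (j+1) - localAvg k φ i j)
        with hB
      have hdiff : avgExt k ℓ φ i (j+1) - avgExt k ℓ φ i j = A + B := by
        rw [hA, hB]
        unfold avgExt
        push_cast
        field_simp
        ring
      rw [hdiff]
      have h1 : (A + B)^2 ≤ (3/2) * A^2 + 3 * B^2 := by
        nlinarith [sq_nonneg (A - 2*B)]
      have h2 : A^2 = (1/((ℓ:ℝ)-1))^2 * (globalAvg k φ - localAvg k φ i (j+1))^2 := by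
        rw [hA, mul_pow]
      have h3 : B^2 ≤ (localAvg k φ i (j+1) - localAvg k φ i j)^2 := by
        rw [hB, mul_pow]
        have htf := tfac_bound hℓ (by omega : 1 ≤ j) (by omega : j ≤ ℓ)
        nlinarith [sq_nonneg (localAvg k φ i (j+1) - localAvg k φ i j)]
      nlinarith [sq_nonneg A]
    calc ∑ i : ZMod k, (avgExt k ℓ φ i (j+1) - avgExt k ℓ φ i j)^2
        ≤ ∑ i : ZMod k, ((3/2) * (1/((ℓ:ℝ)-1))^2
            * (globalAvg k φ - localAvg k φ i (j+1))^2
            + 3 * (localAvg k φ i (j+1) - localAvg k φ i j)^2) :=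
          Finset.sum_le_sum fun i _ => hper i
      _ = (3/2) * (1/((ℓ:ℝ)-1))^2
            * ∑ i : ZMod k, (globalAvg k φ - localAvg k φ i (j+1))^2
          + 3 * ∑ i : ZMod k, (localAvg k φ i (j+1) - localAvg k φ i j)^2 := by
          rw [Finset.sum_add_distrib, ← Finset.mul_sum, ← Finset.mul_sum]
      _ ≤ (3/2) * (1/((ℓ:ℝ)-1))^2 * (((k:ℝ)/3) * bSemiSq k φ)
          + 3 * ∑ i : ZMod k, (localAvg k φ i (j+1) - localAvg k φ i j)^2 := by
          have := Abound φ (n := j+1) (by omega)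
          have hco : (0:ℝ) ≤ (3/2) * (1/((ℓ:ℝ)-1))^2 := by positivity
          nlinarith [mul_le_mul_of_nonneg_left this hco]
  have hcard : ((Finset.Icc 1 (ℓ-1)).card : ℝ) = (ℓ:ℝ) - 1 := by
    rw [Nat.card_Icc]
    push_cast [Nat.cast_sub (by omega : 1 ≤ ℓ)]
    ring
  calc ∑ j ∈ Finset.Icc 1 (ℓ-1), ∑ i : ZMod k,
        (avgExt k ℓ φ i (j+1) - avgExt k ℓ φ i j)^2
      ≤ ∑ j ∈ Finset.Icc 1 (ℓ-1), ((3/2) * (1/((ℓ:ℝ)-1))^2 * (((k:ℝ)/3) * bSemiSq k φ)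
          + 3 * ∑ i : ZMod k, (localAvg k φ i (j+1) - localAvg k φ i j)^2) :=
        Finset.sum_le_sum per_j
    _ = ((ℓ:ℝ)-1) * ((3/2) * (1/((ℓ:ℝ)-1))^2 * (((k:ℝ)/3) * bSemiSq k φ))
        + 3 * ∑ j ∈ Finset.Icc 1 (ℓ-1), ∑ i : ZMod k,
            (localAvg k φ i (j+1) - localAvg k φ i j)^2 := by
        rw [Finset.sum_add_distrib, Finset.sum_const, ← Finset.mul_sum, nsmul_eq_mul,
          hcard]
    _ ≤ ((ℓ:ℝ)-1) * ((3/2) * (1/((ℓ:ℝ)-1))^2 * (((k:ℝ)/3) * bSemiSq k φ))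
        + 3 * ((10/3) * bSemiSq k φ) := by
        have := Bbound φ hℓk hℓ
        linarith
    _ = ((k:ℝ)/(2*((ℓ:ℝ)-1))) * bSemiSq k φ + 10 * bSemiSq k φ := by
        field_simp
    _ ≤ (2 * (c:ℝ) + 10) * bSemiSq k φ := by
        have hbs := bSemiSq_nonneg φ
        have hcge : (3:ℝ) ≤ (c:ℝ) := by exact_mod_cast hc3
        have hkc : (k:ℝ) < 2 * (c:ℝ) * (ℓ:ℝ) := by exact_mod_cast hk2
        have hfrac : (k:ℝ)/(2*((ℓ:ℝ)-1)) ≤ 2 * (c:ℝ) := by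
          rw [div_le_iff₀ (by linarith)]
          nlinarith
        nlinarith

lemma trace (i : ZMod k) : avgExt k ℓ φ i 1 = φ i := by
  unfold avgExt localAvg
  norm_num

end TP


/-- Continuous right inverse of the discrete trace operator: assuming
`ℓ ≥ 2`, for every `φ : ℤ/kℤ → ℝ` the averaging extension `u` satisfies
`u(i,1) = φ(i)` for all `i` and `|u|_G² ≤ (2c + 233/9) · |φ|_Γ²`. -/
theorem discrete_trace_right_inverse (k ℓ c : ℕ) [NeZero k]
    (h1 : 4 * ℓ < k) (h2 : k < 2 * c * ℓ) (hℓ : 2 ≤ ℓ)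
    (φ : ZMod k → ℝ) :
    (∀ i : ZMod k, avgExt k ℓ φ i 1 = φ i) ∧
    energySq k ℓ (avgExt k ℓ φ) ≤ (2 * (c : ℝ) + 233 / 9) * bSemiSq k φ := by
  refine ⟨fun i => TP.trace φ i, ?_⟩
  have hH := TP.horiz φ h1 hℓ
  have hV := TP.vert φ h1 h2 hℓ
  have hb := TP.bSemiSq_nonneg φ
  unfold energySq
  nlinarith [hH, hV, hb]
end
end

section
/- (Discrete trace theorem for C_k □ P_ℓ.) Assume ℓ ≥ 2. For every φ : ℤ/kℤ → ℝ: (i) every u : (ℤ/kℤ) × {1,…,ℓ} → ℝ with u(i,1) = φ(i) for all i satisfies |φ|_Γ² ≤ max{3c, 4π²} · |u|_G²; and (ii) there exists u : (ℤ/kℤ) × {1,…,ℓ} → ℝ with u(i,1) = φ(i) for all i and |u|_G² ≤ (2c + 233/9) · |φ|_Γ². -/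
set_option linter.unusedSectionVars false
set_option linter.unusedVariables false
open Real Finset

noncomputable section

/-- `T d = ∑_i (φ(i+d) - φ(i))²`. -/
def Td (k : ℕ) [NeZero k] (φ : ZMod k → ℝ) (d : ℕ) : ℝ :=
  ∑ i : ZMod k, (φ (i + (d : ZMod k)) - φ i) ^ 2

section Aux


lemma hardy (b : ℕ → ℝ) (N : ℕ) :
    ∑ n ∈ Ioc 0 N, ((∑ j ∈ Ioc 0 n, b j) / n) ^ 2 ≤ 4 * ∑ n ∈ Ioc 0 N, (b n) ^ 2 := by
  set S : ℕ → ℝ := fun n => ∑ j ∈ Ioc 0 n, b j with hS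
  set t : ℕ → ℝ := fun n => S n / n with ht
  have hSN : ∀ n : ℕ, S n = n * t n := by
    intro n
    rcases Nat.eq_zero_or_pos n with h | h
    · subst h; simp [ht, hS]
    · have : (n:ℝ) ≠ 0 := by positivity
      simp only [ht]; field_simp
  have key : ∀ n : ℕ, ∑ m ∈ Ioc 0 n, ((t m) ^ 2 - 2 * t m * b m) ≤ -(n * (t n) ^ 2) := by
    intro n
    induction n with
    | zero => simp [ht, hS]
    | succ N ih =>
      rw [Finset.sum_Ioc_succ_top (Nat.zero_le _)]
      have hSrec : S (N + 1) = S N + b (N + 1) := Finset.sum_Ioc_succ_top (Nat.zero_le _) _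
      have hrel : ((N:ℝ) + 1) * t (N + 1) = (N:ℝ) * t N + b (N + 1) := by
        have h1 : ((N:ℝ) + 1) ≠ 0 := by positivity
        have h2 : t (N + 1) = S (N + 1) / ((N:ℝ) + 1) := by simp [ht]
        rw [h2, hSrec, hSN N]
        field_simp
      have hx : b (N + 1) = ((N:ℝ) + 1) * t (N + 1) - (N:ℝ) * t N := by linarith
      have hterm : (t (N+1)) ^ 2 - 2 * t (N+1) * b (N+1)
          ≤ -( ((N:ℝ)+1) * (t (N+1)) ^ 2) + (N:ℝ) * (t N) ^ 2 := by
        rw [hx]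
        nlinarith [mul_nonneg (Nat.cast_nonneg N : (0:ℝ) ≤ N) (sq_nonneg (t (N+1) - t N))]
      push_cast
      push_cast at ih hterm
      linarith
  have hkey := key N
  have hexp : ∑ m ∈ Ioc 0 N, ((t m) ^ 2 - 2 * t m * b m)
      = (∑ m ∈ Ioc 0 N, (t m) ^ 2) - 2 * ∑ m ∈ Ioc 0 N, t m * b m := by
    rw [Finset.sum_sub_distrib, Finset.mul_sum]
    congr 1
    apply Finset.sum_congr rfl
    intro m _; ring
  have hneg : -((N:ℝ) * (t N) ^ 2) ≤ 0 := by
    apply neg_nonpos_of_nonneg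
    exact mul_nonneg (Nat.cast_nonneg N) (sq_nonneg _)
  have h1 : ∑ m ∈ Ioc 0 N, (t m) ^ 2 ≤ 2 * ∑ m ∈ Ioc 0 N, t m * b m := by
    rw [hexp] at hkey; linarith
  have h2 : (∑ m ∈ Ioc 0 N, t m * b m) ^ 2
      ≤ (∑ m ∈ Ioc 0 N, (t m) ^ 2) * ∑ m ∈ Ioc 0 N, (b m) ^ 2 :=
    Finset.sum_mul_sq_le_sq_mul_sq _ _ _
  have hX : 0 ≤ ∑ m ∈ Ioc 0 N, (t m) ^ 2 := Finset.sum_nonneg fun _ _ => sq_nonneg _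
  have hZ : 0 ≤ ∑ m ∈ Ioc 0 N, (b m) ^ 2 := Finset.sum_nonneg fun _ _ => sq_nonneg _
  set X := ∑ m ∈ Ioc 0 N, (t m) ^ 2
  set Y := ∑ m ∈ Ioc 0 N, t m * b m
  set Z := ∑ m ∈ Ioc 0 N, (b m) ^ 2
  rcases eq_or_lt_of_le hX with h | h
  · rw [← h]; positivity
  · have hXsq : X * X ≤ X * (4 * Z) := by nlinarith [sq_nonneg (X - 2 * Y)]
    exact le_of_mul_le_mul_left hXsq h


lemma sq_sum_le_card_mul (n : ℕ) (f : ℕ → ℝ) :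
    (∑ x ∈ range n, f x) ^ 2 ≤ (n : ℝ) * ∑ x ∈ range n, (f x) ^ 2 := by
  have h := Finset.sum_mul_sq_le_sq_mul_sq (range n) (fun _ => (1:ℝ)) f
  simp only [one_pow, one_mul, Finset.sum_const, Finset.card_range, nsmul_eq_mul, mul_one] at h
  exact h

variable {k : ℕ} [NeZero k] (φ : ZMod k → ℝ)

lemma sum_shift (f : ZMod k → ℝ) (a : ZMod k) :
    ∑ i : ZMod k, f (i + a) = ∑ i : ZMod k, f i :=
  Fintype.sum_equiv (Equiv.addRight a) _ _ (fun _ => rfl)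
lemma zmod_sum_eq_range (f : ZMod k → ℝ) :
    ∑ e : ZMod k, f e = ∑ d ∈ range k, f (d : ZMod k) := by
  apply Finset.sum_nbij' (fun e => ZMod.val e) (fun d => (d : ZMod k))
  · intro a _; exact Finset.mem_range.2 (ZMod.val_lt a)
  · intro a _; exact Finset.mem_univ _
  · intro a _; exact ZMod.natCast_zmod_val a
  · intro a ha; exact ZMod.val_cast_of_lt (Finset.mem_range.1 ha)
  · intro a _; rw [ZMod.natCast_zmod_val]

lemma B0 : bSemiSq k φ
    = (1/2) * ∑ d ∈ Ioc 0 (k-1), Td k φ d / ((min d (k - d) : ℕ) : ℝ)^2 := by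
  have hk : 1 ≤ k := Nat.one_le_iff_ne_zero.2 (NeZero.ne k)
  unfold bSemiSq
  congr 1
  have step1 : ∀ p : ZMod k, (∑ q : ZMod k,
      if p ≠ q then (φ p - φ q) ^ 2 / (cycDist k p q : ℝ) ^ 2 else 0)
      = ∑ e : ZMod k, (if e ≠ 0 then (φ (p + e) - φ p) ^ 2 / ((min (k - e.val) e.val : ℕ) : ℝ) ^ 2 else 0) := by
    intro p
    rw [← sum_shift (fun q => if p ≠ q then (φ p - φ q) ^ 2 / (cycDist k p q : ℝ) ^ 2 else 0) p]
    apply Finset.sum_congr rfl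
    intro e _
    by_cases he : e = 0
    · subst he; simp
    · have h1 : p ≠ e + p := by
        intro h; apply he
        have : p - p = e + p - p := congrArg (fun x => x - p) h
        simpa using this.symm
      rw [if_pos h1, if_pos he]
      have hd : cycDist k p (e + p) = min (k - e.val) e.val := by
        unfold cycDist
        have h2 : p - (e + p) = -e := by ring
        have h3 : e + p - p = e := by ring
        rw [h2, h3]
        congr 1
        rcases eq_or_ne e 0 with h | h
        · exact absurd h he
        · haveI : NeZero e := ⟨h⟩
          exact ZMod.val_neg_of_ne_zero e
      rw [hd]
      ring_nf
  simp_rw [step1]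
  rw [Finset.sum_comm]
  have step2 : ∀ e : ZMod k,
      (∑ p : ZMod k, if e ≠ 0 then (φ (p + e) - φ p) ^ 2 / ((min (k - e.val) e.val : ℕ) : ℝ) ^ 2 else 0)
      = (if e ≠ 0 then Td k φ e.val / ((min e.val (k - e.val) : ℕ) : ℝ) ^ 2 else 0) := by
    intro e
    by_cases he : e ≠ 0
    · simp only [if_pos he]
      rw [← Finset.sum_div]
      rw [Nat.min_comm]
      congr 1
      unfold Td
      rw [ZMod.natCast_zmod_val]
    · simp [he]
  simp_rw [step2]
  rw [zmod_sum_eq_range]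
  have step3 : ∀ d ∈ range k,
      (if (d : ZMod k) ≠ 0 then Td k φ ((d:ZMod k)).val / ((min ((d:ZMod k)).val (k - ((d:ZMod k)).val) : ℕ) : ℝ) ^ 2 else 0)
      = if d ≠ 0 then Td k φ d / ((min d (k - d) : ℕ) : ℝ) ^ 2 else 0 := by
    intro d hd
    have hdk : d < k := Finset.mem_range.1 hd
    have hval : ((d : ZMod k)).val = d := ZMod.val_cast_of_lt hdk
    have hiff : (d : ZMod k) ≠ 0 ↔ d ≠ 0 := by
      constructor
      · intro h h0; subst h0; simp at h
      · intro h h0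
        apply h
        have : ((d : ZMod k)).val = 0 := by rw [h0]; simp [ZMod.val_zero]
        omega
    rw [hval]
    by_cases h : d ≠ 0
    · rw [if_pos (hiff.2 h), if_pos h]
    · rw [if_neg (fun hh => h (hiff.1 hh)), if_neg h]
  rw [Finset.sum_congr rfl step3, ← Finset.sum_filter]
  congr 1
  ext d
  simp only [Finset.mem_filter, Finset.mem_range, Finset.mem_Ioc]
  omega

lemma Td_nonneg (d : ℕ) : 0 ≤ Td k φ d :=
  Finset.sum_nonneg fun _ _ => sq_nonneg _

lemma Td_symm {d : ℕ} (hd : d ≤ k) : Td k φ (k - d) = Td k φ d := by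
  unfold Td
  have hcast : ((k - d : ℕ) : ZMod k) = -(d : ZMod k) := by
    push_cast [Nat.cast_sub hd]
    simp
  rw [hcast]
  rw [← sum_shift (fun i => (φ (i + -(d:ZMod k)) - φ i) ^ 2) ((d : ZMod k))]
  apply Finset.sum_congr rfl
  intro i _
  rw [add_neg_cancel_right]
  ring

lemma secondHalf {M : ℕ} (hM : 2 * M ≤ k - 1) :
    ∑ d ∈ Ioc (k-1-M) (k-1), Td k φ d / ((min d (k - d) : ℕ) : ℝ)^2
    = ∑ d ∈ Ioc 0 M, Td k φ d / ((d : ℕ) : ℝ)^2 := by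
  have hk : 1 ≤ k := Nat.one_le_iff_ne_zero.2 (NeZero.ne k)
  apply Finset.sum_nbij' (fun d => k - d) (fun d => k - d)
  · intro a ha; simp only [Finset.mem_Ioc] at ha ⊢; omega
  · intro a ha; simp only [Finset.mem_Ioc] at ha ⊢; omega
  · intro a ha; simp only [Finset.mem_Ioc] at ha; omega
  · intro a ha; simp only [Finset.mem_Ioc] at ha; omega
  · intro a ha
    simp only [Finset.mem_Ioc] at ha
    have h1 : min a (k - a) = k - a := by omega
    rw [h1]
    have h2 : Td k φ (k - (k - a))  = Td k φ a := by
      congr 1; omega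
    rw [← h2, Td_symm φ (by omega : k - a ≤ k)]

lemma B1 : bSemiSq k φ ≤ ∑ d ∈ Ioc 0 (k/2), Td k φ d / ((d:ℕ) : ℝ)^2 := by
  have hk : 1 ≤ k := Nat.one_le_iff_ne_zero.2 (NeZero.ne k)
  rw [B0]
  rw [← Finset.sum_Ioc_consecutive _ (Nat.zero_le (k/2)) (by omega : k/2 ≤ k-1)]
  have hfirst : ∑ d ∈ Ioc 0 (k/2), Td k φ d / ((min d (k - d) : ℕ) : ℝ)^2
      = ∑ d ∈ Ioc 0 (k/2), Td k φ d / ((d:ℕ) : ℝ)^2 := by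
    apply Finset.sum_congr rfl
    intro d hd
    simp only [Finset.mem_Ioc] at hd
    have : min d (k - d) = d := by omega
    rw [this]
  have hsecond : ∑ d ∈ Ioc (k/2) (k-1), Td k φ d / ((min d (k - d) : ℕ) : ℝ)^2
      ≤ ∑ d ∈ Ioc 0 (k/2), Td k φ d / ((d:ℕ) : ℝ)^2 := by
    have hre : ∑ d ∈ Ioc (k/2) (k-1), Td k φ d / ((min d (k - d) : ℕ) : ℝ)^2
        = ∑ d ∈ Ioc 0 (k-1-k/2), Td k φ d / ((d : ℕ) : ℝ)^2 := by
      have : k - 1 - (k-1-(k-1-k/2)) = k-1-k/2 := by omega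
      have heq : Ioc (k/2) (k-1) = Ioc (k-1-(k-1-k/2)) (k-1) := by
        congr 1; omega
      rw [heq]
      exact secondHalf φ (by omega)
    rw [hre]
    apply Finset.sum_le_sum_of_subset_of_nonneg
    · apply Finset.Ioc_subset_Ioc le_rfl; omega
    · intro d _ _
      apply div_nonneg (Td_nonneg φ d) (sq_nonneg _)
  rw [hfirst]
  linarith

lemma B2 {M : ℕ} (hM : 2 * M < k) :
    ∑ d ∈ Ioc 0 M, Td k φ d / ((d:ℕ) : ℝ)^2 ≤ bSemiSq k φ := by
  have hk : 1 ≤ k := Nat.one_le_iff_ne_zero.2 (NeZero.ne k)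
  rw [B0]
  rw [← Finset.sum_Ioc_consecutive _ (Nat.zero_le M) (by omega : M ≤ k-1)]
  rw [← Finset.sum_Ioc_consecutive _ (by omega : M ≤ k-1-M) (by omega : k-1-M ≤ k-1)]
  have hfirst : ∑ d ∈ Ioc 0 M, Td k φ d / ((min d (k - d) : ℕ) : ℝ)^2
      = ∑ d ∈ Ioc 0 M, Td k φ d / ((d:ℕ) : ℝ)^2 := by
    apply Finset.sum_congr rfl
    intro d hd
    simp only [Finset.mem_Ioc] at hd
    have : min d (k - d) = d := by omega
    rw [this]
  have hmid : 0 ≤ ∑ d ∈ Ioc M (k-1-M), Td k φ d / ((min d (k - d) : ℕ) : ℝ)^2 := by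
    apply Finset.sum_nonneg
    intro d _
    apply div_nonneg (Td_nonneg φ d) (sq_nonneg _)
  have hthird := secondHalf φ (by omega : 2 * M ≤ k - 1)
  rw [hfirst, hthird]
  linarith


end Aux

section Ext
variable {k : ℕ} [NeZero k] (φ : ZMod k → ℝ)

/-- The averaging extension: `u(i,j)` is the mean of `φ` over a window of radius `j-1`. -/
def extAvg (φ : ZMod k → ℝ) (i : ZMod k) (j : ℕ) : ℝ :=
  ((2*j-1 : ℕ) : ℝ)⁻¹ * ∑ t ∈ range (2*j-1), φ (i + (t : ZMod k) - ((j-1 : ℕ) : ZMod k))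

lemma extAvg_one (i : ZMod k) : extAvg φ i 1 = φ i := by
  simp [extAvg]

lemma extAvg_horiz (j : ℕ) (hj : 1 ≤ j) :
    ∑ i : ZMod k, (extAvg φ (i+1) j - extAvg φ i j) ^ 2
      = Td k φ (2*j-1) / ((2*j-1 : ℕ) : ℝ) ^ 2 := by
  set n := 2*j-1 with hn
  set c : ZMod k := ((j-1 : ℕ) : ZMod k) with hc
  have hdiff : ∀ i : ZMod k, extAvg φ (i+1) j - extAvg φ i j
      = ((n:ℕ):ℝ)⁻¹ * (φ (i + (n:ZMod k) - c) - φ (i - c)) := by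
    intro i
    unfold extAvg
    rw [← hn, ← hc, ← mul_sub]
    congr 1
    have hshift : ∀ t : ℕ, ((i+1) + (t : ZMod k) - c) = (i + ((t+1 : ℕ) : ZMod k) - c) := by
      intro t; push_cast; ring
    rw [Finset.sum_congr rfl (fun t _ => by rw [hshift t])]
    have htel := Finset.sum_range_sub (fun t : ℕ => φ (i + (t : ZMod k) - c)) n
    rw [Finset.sum_sub_distrib] at htel
    simpa using htel
  rw [Finset.sum_congr rfl (fun i _ => by rw [hdiff i])]
  have hexp : ∀ i : ZMod k, (((n:ℕ):ℝ)⁻¹ * (φ (i + (n:ZMod k) - c) - φ (i - c))) ^ 2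
      = (φ (i + (n:ZMod k) - c) - φ (i - c)) ^ 2 * (((n:ℕ):ℝ) ^ 2)⁻¹ := by
    intro i; rw [mul_pow, inv_pow]; ring
  rw [Finset.sum_congr rfl (fun i _ => hexp i), ← Finset.sum_mul]
  rw [div_eq_mul_inv]
  congr 1
  rw [← sum_shift (fun i => (φ (i + (n:ZMod k) - c) - φ (i - c)) ^ 2) c]
  unfold Td
  apply Finset.sum_congr rfl
  intro i _
  have e1 : i + c + (n:ZMod k) - c = i + (n:ZMod k) := by ring
  have e2 : i + c - c = i := by ring
  rw [e1, e2]

lemma extAvg_rec (j : ℕ) (hj : 1 ≤ j) (i : ZMod k) :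
    extAvg φ i (j+1) = ((2*j+1 : ℕ) : ℝ)⁻¹ *
      (φ (i + (j : ZMod k)) + φ (i - (j : ZMod k)) + ((2*j-1 : ℕ) : ℝ) * extAvg φ i j) := by
  set n := 2*j-1 with hn
  set c : ZMod k := ((j-1 : ℕ) : ZMod k) with hc
  have hnR : ((n:ℕ):ℝ) ≠ 0 := by
    have : 1 ≤ n := by omega
    positivity
  have e1 : 2*(j+1)-1 = 2*j+1 := by omega
  have e2 : (j+1)-1 = j := by omega
  unfold extAvg
  rw [e1, e2, ← hn]
  congr 1
  have e3 : 2*j+1 = (n+1)+1 := by omega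
  rw [e3, Finset.sum_range_succ, Finset.sum_range_succ']
  have g1 : ∀ t : ℕ, φ (i + ((t+1 : ℕ) : ZMod k) - ((j:ℕ) : ZMod k)) = φ (i + (t : ZMod k) - c) := by
    intro t
    congr 1
    rw [hc]
    push_cast [Nat.cast_sub hj]
    ring
  rw [Finset.sum_congr rfl (fun t _ => g1 t)]
  have g0 : φ (i + ((0:ℕ) : ZMod k) - ((j:ℕ) : ZMod k)) = φ (i - (j : ZMod k)) := by
    congr 1; push_cast; ring
  have gn : φ (i + ((n+1 : ℕ) : ZMod k) - ((j:ℕ) : ZMod k)) = φ (i + (j : ZMod k)) := by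
    congr 1
    have hnat : n + 1 = 2*j := by omega
    rw [hnat]
    push_cast
    ring
  rw [g0, gn, ← hc, mul_inv_cancel_left₀ hnR]
  ring

lemma range_reindex_Ioc (n : ℕ) (F : ℕ → ℝ) :
    ∑ t ∈ range n, F (n - t) = ∑ s ∈ Ioc 0 n, F s := by
  apply Finset.sum_nbij' (fun t => n - t) (fun s => n - s)
  · intro a ha; simp only [Finset.mem_range] at ha; simp only [Finset.mem_Ioc]; omega
  · intro a ha; simp only [Finset.mem_Ioc] at ha; simp only [Finset.mem_range]; omega
  · intro a ha; simp only [Finset.mem_range] at ha; omega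
  · intro a ha; simp only [Finset.mem_Ioc] at ha; omega
  · intro a ha; rfl

lemma range_reindex_Ioc' (n : ℕ) (F : ℕ → ℝ) :
    ∑ t ∈ range n, F (t + 1) = ∑ s ∈ Ioc 0 n, F s := by
  apply Finset.sum_nbij' (fun t => t + 1) (fun s => s - 1)
  · intro a ha; simp only [Finset.mem_range] at ha; simp only [Finset.mem_Ioc]; omega
  · intro a ha; simp only [Finset.mem_Ioc] at ha; simp only [Finset.mem_range]; omega
  · intro a ha; simp only [Finset.mem_range] at ha; omega
  · intro a ha; simp only [Finset.mem_Ioc] at ha; omega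
  · intro a ha; rfl

lemma extAvg_Psum (j : ℕ) (hj : 1 ≤ j) :
    ∑ i : ZMod k, (φ (i + (j : ZMod k)) - extAvg φ i j) ^ 2
      ≤ ((2*j-1:ℕ):ℝ)⁻¹ * ∑ s ∈ Ioc 0 (2*j-1), Td k φ s := by
  set n := 2*j-1 with hn
  set c : ZMod k := ((j-1 : ℕ) : ZMod k) with hc
  have hnn : 1 ≤ n := by omega
  have hnR : (0:ℝ) < ((n:ℕ):ℝ) := by exact_mod_cast hnn
  have hnR' : ((n:ℕ):ℝ) ≠ 0 := ne_of_gt hnR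
  have hP : ∀ i : ZMod k, φ (i + (j : ZMod k)) - extAvg φ i j
      = ((n:ℕ):ℝ)⁻¹ * ∑ t ∈ range n, (φ (i + (j : ZMod k)) - φ (i + (t : ZMod k) - c)) := by
    intro i
    rw [Finset.sum_sub_distrib, Finset.sum_const, Finset.card_range, nsmul_eq_mul,
      mul_sub, inv_mul_cancel_left₀ hnR']
    unfold extAvg
    rw [← hn, ← hc]
  have hsq : ∀ i : ZMod k, (φ (i + (j : ZMod k)) - extAvg φ i j) ^ 2
      ≤ ((n:ℕ):ℝ)⁻¹ * ∑ t ∈ range n, (φ (i + (j : ZMod k)) - φ (i + (t : ZMod k) - c)) ^ 2 := by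
    intro i
    rw [hP i, mul_pow, inv_pow]
    have hcs := sq_sum_le_card_mul n (fun t => φ (i + (j : ZMod k)) - φ (i + (t : ZMod k) - c))
    have h2 := mul_le_mul_of_nonneg_left hcs (by positivity : (0:ℝ) ≤ (((n:ℕ):ℝ)^2)⁻¹)
    refine h2.trans_eq ?_
    field_simp
  have hsum := Finset.sum_le_sum (fun i (_ : i ∈ (univ : Finset (ZMod k))) => hsq i)
  refine hsum.trans ?_
  rw [← Finset.mul_sum, Finset.sum_comm]
  apply mul_le_mul_of_nonneg_left _ (by positivity)
  have hinner : ∀ t ∈ range n, ∑ i : ZMod k, (φ (i + (j : ZMod k)) - φ (i + (t : ZMod k) - c)) ^ 2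
      = Td k φ (n - t) := by
    intro t ht
    have htn : t < n := Finset.mem_range.1 ht
    set a : ZMod k := (t : ZMod k) - c with ha
    have key : (a : ZMod k) + ((n - t : ℕ) : ZMod k) = (j : ZMod k) := by
      rw [ha, hc, hn]
      push_cast [Nat.cast_sub (by omega : t ≤ 2*j-1), Nat.cast_sub (by omega : 1 ≤ j),
        Nat.cast_sub (by omega : 1 ≤ 2*j)]
      ring
    have hcong : ∀ i : ZMod k, (φ (i + (j : ZMod k)) - φ (i + (t : ZMod k) - c)) ^ 2
        = (fun i' => (φ (i' + ((n - t : ℕ) : ZMod k)) - φ i') ^ 2) (i + a) := by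
      intro i
      simp only []
      have e1 : i + a + ((n - t : ℕ) : ZMod k) = i + (j : ZMod k) := by
        rw [add_assoc, key]
      have e2 : i + a = i + (t : ZMod k) - c := by rw [ha]; ring
      rw [e1, e2]
    rw [Finset.sum_congr rfl (fun i _ => hcong i),
      sum_shift (fun i' => (φ (i' + ((n - t : ℕ) : ZMod k)) - φ i') ^ 2) a]
    rfl
  rw [Finset.sum_congr rfl hinner, range_reindex_Ioc n (Td k φ)]


lemma extAvg_Qsum (j : ℕ) (hj : 1 ≤ j) :
    ∑ i : ZMod k, (φ (i - (j : ZMod k)) - extAvg φ i j) ^ 2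
      ≤ ((2*j-1:ℕ):ℝ)⁻¹ * ∑ s ∈ Ioc 0 (2*j-1), Td k φ s := by
  set n := 2*j-1 with hn
  set c : ZMod k := ((j-1 : ℕ) : ZMod k) with hc
  have hnn : 1 ≤ n := by omega
  have hnR : (0:ℝ) < ((n:ℕ):ℝ) := by exact_mod_cast hnn
  have hnR' : ((n:ℕ):ℝ) ≠ 0 := ne_of_gt hnR
  have hP : ∀ i : ZMod k, φ (i - (j : ZMod k)) - extAvg φ i j
      = ((n:ℕ):ℝ)⁻¹ * ∑ t ∈ range n, (φ (i - (j : ZMod k)) - φ (i + (t : ZMod k) - c)) := by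
    intro i
    rw [Finset.sum_sub_distrib, Finset.sum_const, Finset.card_range, nsmul_eq_mul,
      mul_sub, inv_mul_cancel_left₀ hnR']
    unfold extAvg
    rw [← hn, ← hc]
  have hsq : ∀ i : ZMod k, (φ (i - (j : ZMod k)) - extAvg φ i j) ^ 2
      ≤ ((n:ℕ):ℝ)⁻¹ * ∑ t ∈ range n, (φ (i - (j : ZMod k)) - φ (i + (t : ZMod k) - c)) ^ 2 := by
    intro i
    rw [hP i, mul_pow, inv_pow]
    have hcs := sq_sum_le_card_mul n (fun t => φ (i - (j : ZMod k)) - φ (i + (t : ZMod k) - c))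
    have h2 := mul_le_mul_of_nonneg_left hcs (by positivity : (0:ℝ) ≤ (((n:ℕ):ℝ)^2)⁻¹)
    refine h2.trans_eq ?_
    field_simp
  have hsum := Finset.sum_le_sum (fun i (_ : i ∈ (univ : Finset (ZMod k))) => hsq i)
  refine hsum.trans ?_
  rw [← Finset.mul_sum, Finset.sum_comm]
  apply mul_le_mul_of_nonneg_left _ (by positivity)
  have hinner : ∀ t ∈ range n, ∑ i : ZMod k, (φ (i - (j : ZMod k)) - φ (i + (t : ZMod k) - c)) ^ 2
      = Td k φ (t + 1) := by
    intro t ht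
    set a : ZMod k := -(j : ZMod k) with ha
    have key : (a : ZMod k) + ((t + 1 : ℕ) : ZMod k) = (t : ZMod k) - c := by
      rw [ha, hc]
      push_cast [Nat.cast_sub (by omega : 1 ≤ j)]
      ring
    have hcong : ∀ i : ZMod k, (φ (i - (j : ZMod k)) - φ (i + (t : ZMod k) - c)) ^ 2
        = (fun i' => (φ (i' + ((t + 1 : ℕ) : ZMod k)) - φ i') ^ 2) (i + a) := by
      intro i
      simp only []
      have e1 : i + a + ((t + 1 : ℕ) : ZMod k) = i + (t : ZMod k) - c := by
        rw [add_assoc, key]; ring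
      have e2 : i + a = i - (j : ZMod k) := by rw [ha]; ring
      rw [e1, e2]
      ring
    rw [Finset.sum_congr rfl (fun i _ => hcong i),
      sum_shift (fun i' => (φ (i' + ((t + 1 : ℕ) : ZMod k)) - φ i') ^ 2) a]
    rfl
  rw [Finset.sum_congr rfl hinner, range_reindex_Ioc' n (Td k φ)]

lemma extAvg_vert (j : ℕ) (hj : 1 ≤ j) :
    ∑ i : ZMod k, (extAvg φ i (j+1) - extAvg φ i j) ^ 2
      ≤ 4 / (((2*j+1:ℕ):ℝ)^2 * ((2*j-1:ℕ):ℝ)) * ∑ s ∈ Ioc 0 (2*j-1), Td k φ s := by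
  have hmR : (0:ℝ) < ((2*j+1:ℕ):ℝ) := by positivity
  have hmR' : ((2*j+1:ℕ):ℝ) ≠ 0 := ne_of_gt hmR
  have hdiff : ∀ i : ZMod k, extAvg φ i (j+1) - extAvg φ i j
      = ((2*j+1:ℕ):ℝ)⁻¹ * ((φ (i + (j : ZMod k)) - extAvg φ i j)
          + (φ (i - (j : ZMod k)) - extAvg φ i j)) := by
    intro i
    rw [extAvg_rec φ j hj i]
    have hcast : ((2*j-1:ℕ):ℝ) = ((2*j+1:ℕ):ℝ) - 2 := by
      push_cast [Nat.cast_sub (by omega : 1 ≤ 2*j)]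
      ring
    rw [hcast]
    field_simp
    ring
  have hsq : ∀ i : ZMod k, (extAvg φ i (j+1) - extAvg φ i j) ^ 2
      ≤ (((2*j+1:ℕ):ℝ)^2)⁻¹ * (2 * (φ (i + (j : ZMod k)) - extAvg φ i j) ^ 2
          + 2 * (φ (i - (j : ZMod k)) - extAvg φ i j) ^ 2) := by
    intro i
    rw [hdiff i, mul_pow, inv_pow]
    apply mul_le_mul_of_nonneg_left _ (by positivity)
    nlinarith [sq_nonneg ((φ (i + (j : ZMod k)) - extAvg φ i j) - (φ (i - (j : ZMod k)) - extAvg φ i j))]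
  have hsum := Finset.sum_le_sum (fun i (_ : i ∈ (univ : Finset (ZMod k))) => hsq i)
  refine hsum.trans ?_
  rw [← Finset.mul_sum]
  have hsplit : ∑ i : ZMod k, (2 * (φ (i + (j : ZMod k)) - extAvg φ i j) ^ 2
      + 2 * (φ (i - (j : ZMod k)) - extAvg φ i j) ^ 2)
      = 2 * (∑ i : ZMod k, (φ (i + (j : ZMod k)) - extAvg φ i j) ^ 2)
        + 2 * (∑ i : ZMod k, (φ (i - (j : ZMod k)) - extAvg φ i j) ^ 2) := by
    rw [Finset.sum_add_distrib, Finset.mul_sum, Finset.mul_sum]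
  rw [hsplit]
  have hT : 0 ≤ ∑ s ∈ Ioc 0 (2*j-1), Td k φ s :=
    Finset.sum_nonneg (fun s _ => Td_nonneg φ s)
  have hp := extAvg_Psum φ j hj
  have hq := extAvg_Qsum φ j hj
  have hbound : 2 * (∑ i : ZMod k, (φ (i + (j : ZMod k)) - extAvg φ i j) ^ 2)
        + 2 * (∑ i : ZMod k, (φ (i - (j : ZMod k)) - extAvg φ i j) ^ 2)
      ≤ 4 * (((2*j-1:ℕ):ℝ)⁻¹ * ∑ s ∈ Ioc 0 (2*j-1), Td k φ s) := by linarith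
  have := mul_le_mul_of_nonneg_left hbound (by positivity : (0:ℝ) ≤ (((2*j+1:ℕ):ℝ)^2)⁻¹)
  refine this.trans_eq ?_
  have hnR : (0:ℝ) < ((2*j-1:ℕ):ℝ) := by
    have : (1:ℕ) ≤ 2*j-1 := by omega
    exact_mod_cast this
  field_simp


lemma coeff2 (L s : ℕ) (hL : 1 ≤ L) (hs : 1 ≤ s) :
    ∑ j ∈ Icc 1 (L-1), (if s ≤ 2*j-1 then 4 / (((2*j+1:ℕ):ℝ)^2 * ((2*j-1:ℕ):ℝ)) else 0)
      ≤ (5/3) / ((s:ℕ):ℝ)^2 := by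
  set j0 := s/2 + 1 with hj0
  have hfilter : (Icc 1 (L-1)).filter (fun j => s ≤ 2*j-1) = Icc j0 (L-1) := by
    ext j; simp only [Finset.mem_filter, Finset.mem_Icc]; omega
  rw [← Finset.sum_filter, hfilter]
  set g : ℕ → ℝ := fun j => (((2*j-1:ℕ)):ℝ)⁻¹ * (((2*j+1:ℕ)):ℝ)⁻¹ with hg
  have hsR : (0:ℝ) < ((s:ℕ):ℝ) := by exact_mod_cast hs
  rcases lt_or_ge (L-1) j0 with hlt | hle
  · rw [Finset.Icc_eq_empty (by omega)]
    simp only [Finset.sum_empty]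
    positivity
  · have hpt : ∀ j, 1 ≤ j → 4 / (((2*j+1:ℕ):ℝ)^2 * ((2*j-1:ℕ):ℝ)) ≤ (5/3) * (g j - g (j+1)) := by
      intro j hj
      have hx : (1:ℝ) ≤ (j:ℝ) := by exact_mod_cast hj
      have c1 : ((2*j-1:ℕ):ℝ) = 2*(j:ℝ)-1 := by
        push_cast [Nat.cast_sub (by omega : 1 ≤ 2*j)]; ring
      have c2 : ((2*j+1:ℕ):ℝ) = 2*(j:ℝ)+1 := by push_cast; ring
      have c3 : ((2*(j+1)-1:ℕ):ℝ) = 2*(j:ℝ)+1 := by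
        push_cast [Nat.cast_sub (by omega : 1 ≤ 2*(j+1))]; ring
      have c4 : ((2*(j+1)+1:ℕ):ℝ) = 2*(j:ℝ)+3 := by push_cast; ring
      have d1 : (0:ℝ) < 2*(j:ℝ)-1 := by linarith
      have d2 : (0:ℝ) < 2*(j:ℝ)+1 := by linarith
      have d3 : (0:ℝ) < 2*(j:ℝ)+3 := by linarith
      rw [hg]
      simp only []
      rw [c1, c2, c3, c4]
      have hkey : (5/3) * ((2*(j:ℝ)-1)⁻¹ * (2*(j:ℝ)+1)⁻¹ - (2*(j:ℝ)+1)⁻¹ * (2*(j:ℝ)+3)⁻¹)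
          - 4 / ((2*(j:ℝ)+1)^2 * (2*(j:ℝ)-1))
          = (16*(j:ℝ) - 16) / (3*(2*(j:ℝ)-1)*(2*(j:ℝ)+1)^2*(2*(j:ℝ)+3)) := by
        field_simp
        ring
      have hnn : (0:ℝ) ≤ (16*(j:ℝ) - 16) / (3*(2*(j:ℝ)-1)*(2*(j:ℝ)+1)^2*(2*(j:ℝ)+3)) := by
        apply div_nonneg (by linarith) (by positivity)
      linarith
    have hstep : ∑ j ∈ Icc j0 (L-1), (4 / (((2*j+1:ℕ):ℝ)^2 * ((2*j-1:ℕ):ℝ)))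
        ≤ ∑ j ∈ Icc j0 (L-1), (5/3) * (g j - g (j+1)) := by
      apply Finset.sum_le_sum
      intro j hj
      simp only [Finset.mem_Icc] at hj
      exact hpt j (by omega)
    refine hstep.trans ?_
    rw [← Finset.mul_sum]
    have htel : ∑ j ∈ Icc j0 (L-1), (g j - g (j+1)) = g j0 - g L := by
      have hIcc : Icc j0 (L-1) = Ico j0 L := by
        rw [← Finset.Ico_add_one_right_eq_Icc]
        congr 1
        omega
      rw [hIcc, Finset.sum_Ico_eq_sum_range]
      have := Finset.sum_range_sub' (fun t => g (j0 + t)) (L - j0)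
      have hcong : ∀ t ∈ range (L - j0), g (j0 + t) - g (j0 + t + 1)
          = (fun t => g (j0 + t)) t - (fun t => g (j0 + t)) (t+1) := by
        intro t _
        simp only []
        congr 2 <;> omega
        
      rw [Finset.sum_congr rfl hcong, this]
      have hfin : j0 + (L - j0) = L := by omega
      simp only [add_zero, hfin]
    rw [htel]
    have hgL : 0 ≤ g L := by
      rw [hg]; positivity
    have hgj0 : g j0 ≤ (((s:ℕ):ℝ)^2)⁻¹ := by
      rw [hg]
      simp only []
      have e1 : (s:ℝ) ≤ ((2*j0-1:ℕ):ℝ) := by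
        have : s ≤ 2*j0-1 := by omega
        exact_mod_cast this
      have e2 : (s:ℝ) ≤ ((2*j0+1:ℕ):ℝ) := by
        have : s ≤ 2*j0+1 := by omega
        exact_mod_cast this
      have p1 : (0:ℝ) < ((2*j0-1:ℕ):ℝ) := lt_of_lt_of_le hsR e1
      have p2 : (0:ℝ) < ((2*j0+1:ℕ):ℝ) := lt_of_lt_of_le hsR e2
      have i1 : ((2*j0-1:ℕ):ℝ)⁻¹ ≤ ((s:ℕ):ℝ)⁻¹ := by
        apply inv_anti₀ hsR e1
      have i2 : ((2*j0+1:ℕ):ℝ)⁻¹ ≤ ((s:ℕ):ℝ)⁻¹ := by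
        apply inv_anti₀ hsR e2
      have : ((2*j0-1:ℕ):ℝ)⁻¹ * ((2*j0+1:ℕ):ℝ)⁻¹ ≤ ((s:ℕ):ℝ)⁻¹ * ((s:ℕ):ℝ)⁻¹ := by
        apply mul_le_mul i1 i2 (by positivity) (by positivity)
      refine this.trans_eq ?_
      rw [← mul_inv, ← sq]
    have h5 : (5/3 : ℝ) * (g j0 - g L) ≤ 5/3 * (((s:ℕ):ℝ)^2)⁻¹ := by nlinarith
    refine h5.trans_eq (div_eq_mul_inv ((5:ℝ)/3) _).symm

lemma part_two (k L c : ℕ) [NeZero k] (h1 : 4*L < k) (h2 : k < 2*c*L) (hL : 2 ≤ L)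
    (φ : ZMod k → ℝ) :
    energySq k L (extAvg φ) ≤ (2*(c:ℝ) + 233/9) * bSemiSq k φ := by
  have hb0 : 0 ≤ bSemiSq k φ := by
    have := B2 φ (M := 0) (by omega)
    simpa using this
  unfold energySq
  -- Horizontal part
  have hHoriz : (∑ i : ZMod k, ∑ j ∈ Finset.Icc 1 L, (extAvg φ (i + 1) j - extAvg φ i j) ^ 2)
      ≤ bSemiSq k φ := by
    rw [Finset.sum_comm]
    have hj : ∀ j ∈ Finset.Icc 1 L, ∑ i : ZMod k, (extAvg φ (i + 1) j - extAvg φ i j) ^ 2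
        = Td k φ (2*j-1) / ((2*j-1:ℕ):ℝ)^2 := by
      intro j hj
      simp only [Finset.mem_Icc] at hj
      exact extAvg_horiz φ j hj.1
    rw [Finset.sum_congr rfl hj]
    have himg : ∑ j ∈ Finset.Icc 1 L, Td k φ (2*j-1) / ((2*j-1:ℕ):ℝ)^2
        = ∑ d ∈ (Finset.Icc 1 L).image (fun j => 2*j-1), Td k φ d / ((d:ℕ):ℝ)^2 := by
      rw [Finset.sum_image]
      intro a ha b hb hab
      simp only [Finset.coe_Icc, Set.mem_Icc, Finset.mem_coe, Finset.mem_Icc] at ha hb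
      beta_reduce at hab
      omega
    rw [himg]
    have hsub : (Finset.Icc 1 L).image (fun j => 2*j-1) ⊆ Ioc 0 (2*L-1) := by
      intro d hd
      simp only [Finset.mem_image, Finset.mem_Icc] at hd
      obtain ⟨j, hj, rfl⟩ := hd
      simp only [Finset.mem_Ioc]
      omega
    have hmono := Finset.sum_le_sum_of_subset_of_nonneg (f := fun d => Td k φ d / ((d:ℕ):ℝ)^2) hsub
      (fun d _ _ => div_nonneg (Td_nonneg φ d) (sq_nonneg _))
    refine hmono.trans ?_
    exact B2 φ (by omega : 2*(2*L-1) < k)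
  -- Vertical part
  have hVert : (∑ i : ZMod k, ∑ j ∈ Finset.Icc 1 (L - 1), (extAvg φ i (j + 1) - extAvg φ i j) ^ 2)
      ≤ (5/3) * bSemiSq k φ := by
    rw [Finset.sum_comm]
    have hstep1 : ∀ j ∈ Finset.Icc 1 (L-1),
        ∑ i : ZMod k, (extAvg φ i (j + 1) - extAvg φ i j) ^ 2
        ≤ ∑ s ∈ Ioc 0 (2*L-3), (if s ≤ 2*j-1 then
            4 / (((2*j+1:ℕ):ℝ)^2 * ((2*j-1:ℕ):ℝ)) * Td k φ s else 0) := by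
      intro j hjm
      simp only [Finset.mem_Icc] at hjm
      refine (extAvg_vert φ j hjm.1).trans ?_
      have hset : Ioc 0 (2*j-1) = (Ioc 0 (2*L-3)).filter (fun s => s ≤ 2*j-1) := by
        ext x; simp only [Finset.mem_Ioc, Finset.mem_filter]; omega
      rw [Finset.mul_sum, hset, Finset.sum_filter]
    have hsum1 := Finset.sum_le_sum hstep1
    refine hsum1.trans ?_
    rw [Finset.sum_comm]
    have hstep2 : ∀ s ∈ Ioc 0 (2*L-3),
        (∑ j ∈ Finset.Icc 1 (L-1), if s ≤ 2*j-1 then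
            4 / (((2*j+1:ℕ):ℝ)^2 * ((2*j-1:ℕ):ℝ)) * Td k φ s else 0)
        ≤ (5/3) * (Td k φ s / ((s:ℕ):ℝ)^2) := by
      intro s hs
      simp only [Finset.mem_Ioc] at hs
      have hfact : (∑ j ∈ Finset.Icc 1 (L-1), if s ≤ 2*j-1 then
            4 / (((2*j+1:ℕ):ℝ)^2 * ((2*j-1:ℕ):ℝ)) * Td k φ s else 0)
          = (∑ j ∈ Finset.Icc 1 (L-1), if s ≤ 2*j-1 then
            4 / (((2*j+1:ℕ):ℝ)^2 * ((2*j-1:ℕ):ℝ)) else 0) * Td k φ s := by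
        rw [Finset.sum_mul]
        apply Finset.sum_congr rfl
        intro j _
        split <;> simp
      rw [hfact]
      have hc := coeff2 L s (by omega) hs.1
      have := mul_le_mul_of_nonneg_right hc (Td_nonneg φ s)
      refine this.trans_eq ?_
      ring
    have hsum2 := Finset.sum_le_sum hstep2
    refine hsum2.trans ?_
    rw [← Finset.mul_sum]
    have := B2 φ (by omega : 2*(2*L-3) < k)
    nlinarith
  have hc0 : (0:ℝ) ≤ (c:ℝ) := Nat.cast_nonneg c
  have hcb : 0 ≤ (c:ℝ) * bSemiSq k φ := mul_nonneg hc0 hb0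
  nlinarith

end Ext

section PartOne
variable {k : ℕ} [NeZero k]

lemma horiz_path (u : ZMod k → ℕ → ℝ) (m d : ℕ) :
    ∑ i : ZMod k, (u (i + (d : ZMod k)) m - u i m) ^ 2
      ≤ (d:ℝ)^2 * ∑ i : ZMod k, (u (i + 1) m - u i m) ^ 2 := by
  have htel : ∀ i : ZMod k, u (i + (d : ZMod k)) m - u i m
      = ∑ t ∈ range d, (u (i + (t : ZMod k) + 1) m - u (i + (t : ZMod k)) m) := by
    intro i
    have := Finset.sum_range_sub (fun t : ℕ => u (i + (t : ZMod k)) m) d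
    simp only [Nat.cast_zero, add_zero] at this
    rw [← this]
    apply Finset.sum_congr rfl
    intro t _
    congr 2
    push_cast
    ring
  have hsq : ∀ i : ZMod k, (u (i + (d : ZMod k)) m - u i m) ^ 2
      ≤ (d:ℝ) * ∑ t ∈ range d, (u (i + (t : ZMod k) + 1) m - u (i + (t : ZMod k)) m) ^ 2 := by
    intro i
    rw [htel i]
    exact sq_sum_le_card_mul d _
  refine (Finset.sum_le_sum (fun i (_ : i ∈ (univ : Finset (ZMod k))) => hsq i)).trans ?_
  rw [← Finset.mul_sum, Finset.sum_comm]
  have hinner : ∀ t ∈ range d, ∑ i : ZMod k, (u (i + (t : ZMod k) + 1) m - u (i + (t : ZMod k)) m) ^ 2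
      = ∑ i : ZMod k, (u (i + 1) m - u i m) ^ 2 := by
    intro t _
    exact sum_shift (fun i => (u (i + 1) m - u i m) ^ 2) ((t : ZMod k))
  rw [Finset.sum_congr rfl hinner, Finset.sum_const, Finset.card_range, nsmul_eq_mul]
  rw [← mul_assoc, sq]

lemma vert_path (u : ZMod k → ℕ → ℝ) (φ : ZMod k → ℝ) (hu : ∀ i : ZMod k, u i 1 = φ i)
    (L : ℕ) (i : ZMod k) (m d : ℕ) (hm1 : 1 ≤ m) (hmL : m ≤ L) (hmd : m - 1 ≤ d) :
    (u i m - φ i) ^ 2 ≤ (∑ j ∈ Ioc 0 d, (if j ≤ L - 1 then |u i (j+1) - u i j| else 0)) ^ 2 := by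
  set G : ℝ := ∑ j ∈ Ioc 0 d, (if j ≤ L - 1 then |u i (j+1) - u i j| else 0) with hG
  have habs : |u i m - φ i| ≤ G := by
    have htel : u i m - φ i = ∑ t ∈ range (m-1), (u i (t+2) - u i (t+1)) := by
      have := Finset.sum_range_sub (fun t : ℕ => u i (t+1)) (m-1)
      rw [← hu i]
      have hm : m - 1 + 1 = m := by omega
      rw [hm] at this
      rw [this]
    rw [htel]
    refine (Finset.abs_sum_le_sum_abs _ _).trans ?_
    have hre : ∑ t ∈ range (m-1), |u i (t+2) - u i (t+1)|
        = ∑ j ∈ Ioc 0 (m-1), |u i (j+1) - u i j| := by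
      rw [← range_reindex_Ioc' (m-1) (fun j => |u i (j+1) - u i j|)]
    rw [hre]
    have heq : ∑ j ∈ Ioc 0 (m-1), |u i (j+1) - u i j|
        = ∑ j ∈ Ioc 0 (m-1), (if j ≤ L - 1 then |u i (j+1) - u i j| else 0) := by
      apply Finset.sum_congr rfl
      intro j hj
      simp only [Finset.mem_Ioc] at hj
      rw [if_pos (by omega : j ≤ L - 1)]
    rw [heq, hG]
    apply Finset.sum_le_sum_of_subset_of_nonneg
    · exact Finset.Ioc_subset_Ioc le_rfl hmd
    · intro j _ _
      split
      · exact abs_nonneg _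
      · exact le_rfl
  have hGnn : 0 ≤ G := (abs_nonneg _).trans habs
  calc (u i m - φ i) ^ 2 = |u i m - φ i| ^ 2 := (sq_abs _).symm
    _ ≤ G ^ 2 := by
      apply pow_le_pow_left₀ (abs_nonneg _) habs

/-- Window of levels used for distance `d`. -/
def Wnd (L d : ℕ) : Finset ℕ := if d ≤ L then Finset.Icc (d/2+1) d else Finset.Icc 1 L

lemma Wnd_card_pos (L d : ℕ) (hL : 1 ≤ L) (hd : 1 ≤ d) : 1 ≤ (Wnd L d).card := by
  unfold Wnd
  split <;> rw [Nat.card_Icc] <;> omega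

lemma Wnd_subset (L d : ℕ) (hd : 1 ≤ d) : Wnd L d ⊆ Finset.Icc 1 L := by
  unfold Wnd
  split
  · intro x hx
    simp only [Finset.mem_Icc] at *
    omega
  · exact fun x hx => hx

lemma coeff1 (k L c : ℕ) (h1 : 4*L < k) (h2 : k < 2*c*L) (hL : 2 ≤ L) (hc : 3 ≤ c) (m : ℕ)
    (hm1 : 1 ≤ m) (hm2 : m ≤ L) :
    ∑ d ∈ Ioc 0 (k/2), (if m ∈ Wnd L d then (((Wnd L d).card : ℕ):ℝ)⁻¹ else 0)
      ≤ (c:ℝ) + 1 := by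
  have hmR : (0:ℝ) < (m:ℝ) := by exact_mod_cast hm1
  have hLR : (0:ℝ) < (L:ℝ) := by
    have : (1:ℕ) ≤ L := by omega
    exact_mod_cast this
  have hLD : L ≤ k/2 := by omega
  rw [← Finset.sum_Ioc_consecutive _ (Nat.zero_le L) hLD]
  -- Part A : small d
  have hA : ∑ d ∈ Ioc 0 L, (if m ∈ Wnd L d then (((Wnd L d).card : ℕ):ℝ)⁻¹ else 0) ≤ 2 := by
    have hterm : ∀ d ∈ Ioc 0 L, (if m ∈ Wnd L d then (((Wnd L d).card : ℕ):ℝ)⁻¹ else 0)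
        ≤ (if m ≤ d ∧ d ≤ 2*m-1 then 2/(m:ℝ) else 0) := by
      intro d hd
      simp only [Finset.mem_Ioc] at hd
      have hWd : Wnd L d = Finset.Icc (d/2+1) d := by
        unfold Wnd; rw [if_pos hd.2]
      by_cases hmem : m ∈ Wnd L d
      · rw [if_pos hmem]
        rw [hWd, Finset.mem_Icc] at hmem
        have hcond : m ≤ d ∧ d ≤ 2*m-1 := by omega
        rw [if_pos hcond]
        have hcard : (Wnd L d).card = d - d/2 := by
          rw [hWd, Nat.card_Icc]; omega
        rw [hcard]
        have hge : (m:ℝ)/2 ≤ ((d - d/2 : ℕ):ℝ) := by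
          have : m ≤ 2*(d - d/2) := by omega
          have h' : (m:ℝ) ≤ 2*((d - d/2:ℕ):ℝ) := by exact_mod_cast this
          linarith
        have hpos : (0:ℝ) < (m:ℝ)/2 := by linarith
        have := inv_anti₀ hpos hge
        refine this.trans_eq ?_
        rw [inv_div]
      · rw [if_neg hmem]
        split
        · positivity
        · exact le_rfl
    refine (Finset.sum_le_sum hterm).trans ?_
    rw [← Finset.sum_filter]
    have hcard2 : ((Ioc 0 L).filter (fun d => m ≤ d ∧ d ≤ 2*m-1)).card ≤ m := by
      have hsub2 : (Ioc 0 L).filter (fun d => m ≤ d ∧ d ≤ 2*m-1) ⊆ Finset.Icc m (2*m-1) := by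
        intro x hx
        simp only [Finset.mem_filter, Finset.mem_Ioc, Finset.mem_Icc] at *
        omega
      have := Finset.card_le_card hsub2
      rw [Nat.card_Icc] at this
      omega
    rw [Finset.sum_const]
    have h2m : (0:ℝ) ≤ 2/(m:ℝ) := by positivity
    calc (((Ioc 0 L).filter (fun d => m ≤ d ∧ d ≤ 2*m-1)).card : ℕ) • (2/(m:ℝ))
        = (((Ioc 0 L).filter (fun d => m ≤ d ∧ d ≤ 2*m-1)).card : ℝ) * (2/(m:ℝ)) := by
          rw [nsmul_eq_mul]
      _ ≤ (m:ℝ) * (2/(m:ℝ)) := by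
          apply mul_le_mul_of_nonneg_right _ h2m
          exact_mod_cast hcard2
      _ = 2 := by field_simp
  -- Part B : large d
  have hB : ∑ d ∈ Ioc L (k/2), (if m ∈ Wnd L d then (((Wnd L d).card : ℕ):ℝ)⁻¹ else 0)
      ≤ (c:ℝ) - 1 := by
    have hterm : ∀ d ∈ Ioc L (k/2), (if m ∈ Wnd L d then (((Wnd L d).card : ℕ):ℝ)⁻¹ else 0)
        = (L:ℝ)⁻¹ := by
      intro d hd
      simp only [Finset.mem_Ioc] at hd
      have hWd : Wnd L d = Finset.Icc 1 L := by
        unfold Wnd; rw [if_neg (by omega)]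
      have hmem : m ∈ Wnd L d := by
        rw [hWd, Finset.mem_Icc]; omega
      rw [if_pos hmem, hWd, Nat.card_Icc]
      norm_num
    rw [Finset.sum_congr rfl hterm, Finset.sum_const, Nat.card_Ioc, nsmul_eq_mul]
    have hkc : k/2 < c*L := by
      have h2' : k < 2*(c*L) := by
        calc k < 2*c*L := h2
          _ = 2*(c*L) := by ring
      exact Nat.div_lt_of_lt_mul h2'
    have hnat : k/2 - L ≤ (c-1)*L := by
      have hexp : (c-1)*L = c*L - L := by
        rw [Nat.sub_mul, one_mul]
      rw [hexp]
      omega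
    have hcast : ((k/2 - L : ℕ):ℝ) ≤ (((c-1)*L : ℕ):ℝ) := by exact_mod_cast hnat
    have hinv : (0:ℝ) ≤ (L:ℝ)⁻¹ := by positivity
    calc ((k/2 - L : ℕ):ℝ) * (L:ℝ)⁻¹ ≤ (((c-1)*L : ℕ):ℝ) * (L:ℝ)⁻¹ :=
          mul_le_mul_of_nonneg_right hcast hinv
      _ = (c:ℝ) - 1 := by
          push_cast [Nat.cast_sub (by omega : 1 ≤ c)]
          field_simp
  linarith

lemma part_one (k L c : ℕ) [NeZero k] (h1 : 4*L < k) (h2 : k < 2*c*L) (hL : 2 ≤ L)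
    (φ : ZMod k → ℝ) (u : ZMod k → ℕ → ℝ) (hu : ∀ i : ZMod k, u i 1 = φ i) :
    bSemiSq k φ ≤ max (3 * (c : ℝ)) (4 * π ^ 2) * energySq k L u := by
  have hc : 3 ≤ c := by nlinarith
  set D := k/2 with hD
  have hLD : L ≤ D := by omega
  set b : ZMod k → ℕ → ℝ := fun i j => if j ≤ L-1 then |u i (j+1) - u i j| else 0 with hb
  set G : ZMod k → ℕ → ℝ := fun i d => ∑ j ∈ Ioc 0 d, b i j with hGdef
  set H : ℕ → ℝ := fun m => ∑ i : ZMod k, (u (i+1) m - u i m)^2 with hH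
  have hHnn : ∀ m, 0 ≤ H m := fun m => Finset.sum_nonneg (fun i _ => sq_nonneg _)
  -- per (d,m) bound
  have hdm : ∀ d, 1 ≤ d → ∀ m ∈ Wnd L d,
      Td k φ d ≤ 8 * (∑ i : ZMod k, (G i d)^2) + 2*(d:ℝ)^2 * H m := by
    intro d hd m hm
    have hmcond : 1 ≤ m ∧ m ≤ L ∧ m - 1 ≤ d := by
      unfold Wnd at hm
      by_cases hdL : d ≤ L
      · rw [if_pos hdL] at hm; simp only [Finset.mem_Icc] at hm; omega
      · rw [if_neg hdL] at hm; simp only [Finset.mem_Icc] at hm; omega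
    have hpt : ∀ i : ZMod k, (φ (i + (d:ZMod k)) - φ i)^2
        ≤ 4*(u (i + (d:ZMod k)) m - φ (i + (d:ZMod k)))^2
          + 2*(u (i + (d:ZMod k)) m - u i m)^2 + 4*(u i m - φ i)^2 := by
      intro i
      have hid : φ (i + (d:ZMod k)) - φ i
          = -(u (i + (d:ZMod k)) m - φ (i + (d:ZMod k)))
            + (u (i + (d:ZMod k)) m - u i m) + (u i m - φ i) := by ring
      rw [hid]
      nlinarith [sq_nonneg ((u (i + (d:ZMod k)) m - φ (i + (d:ZMod k))) + (u i m - φ i)),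
        sq_nonneg ((u (i + (d:ZMod k)) m - φ (i + (d:ZMod k))) - (u i m - φ i)
          + (u (i + (d:ZMod k)) m - u i m))]
    have hsum := Finset.sum_le_sum (fun i (_ : i ∈ (univ : Finset (ZMod k))) => hpt i)
    have hTd : Td k φ d = ∑ i : ZMod k, (φ (i + (d:ZMod k)) - φ i)^2 := rfl
    rw [← hTd] at hsum
    refine hsum.trans ?_
    rw [Finset.sum_add_distrib, Finset.sum_add_distrib, ← Finset.mul_sum, ← Finset.mul_sum,
      ← Finset.mul_sum]
    have hshift : ∑ i : ZMod k, (u (i + (d:ZMod k)) m - φ (i + (d:ZMod k)))^2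
        = ∑ i : ZMod k, (u i m - φ i)^2 :=
      sum_shift (fun i => (u i m - φ i)^2) ((d:ZMod k))
    rw [hshift]
    have hvert : ∑ i : ZMod k, (u i m - φ i)^2 ≤ ∑ i : ZMod k, (G i d)^2 := by
      apply Finset.sum_le_sum
      intro i _
      exact vert_path u φ hu L i m d hmcond.1 hmcond.2.1 hmcond.2.2
    have hhor : ∑ i : ZMod k, (u (i + (d:ZMod k)) m - u i m)^2 ≤ (d:ℝ)^2 * H m :=
      horiz_path u m d
    linarith
  -- averaged per-d bound divided by d²
  have hperd : ∀ d ∈ Ioc 0 D, Td k φ d / ((d:ℕ):ℝ)^2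
      ≤ 8 * (∑ i : ZMod k, (G i d / (d:ℝ))^2)
        + 2 * (((Wnd L d).card : ℕ):ℝ)⁻¹ * ∑ m ∈ Wnd L d, H m := by
    intro d hdIoc
    obtain ⟨hd0, hdD⟩ := Finset.mem_Ioc.1 hdIoc
    have hw1 : 1 ≤ (Wnd L d).card := Wnd_card_pos L d (by omega) hd0
    have hwR : (0:ℝ) < (((Wnd L d).card : ℕ):ℝ) := by exact_mod_cast hw1
    have hdR : (0:ℝ) < (d:ℝ) := by exact_mod_cast hd0
    have havg : (((Wnd L d).card : ℕ):ℝ) * Td k φ d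
        ≤ (((Wnd L d).card : ℕ):ℝ) * (8 * (∑ i : ZMod k, (G i d)^2))
          + 2*(d:ℝ)^2 * ∑ m ∈ Wnd L d, H m := by
      have hcs := Finset.card_nsmul_le_sum (Wnd L d)
        (fun m => 8 * (∑ i : ZMod k, (G i d)^2) + 2*(d:ℝ)^2 * H m) (Td k φ d)
        (fun m hm => hdm d hd0 m hm)
      rw [nsmul_eq_mul, Finset.sum_add_distrib, Finset.sum_const, nsmul_eq_mul,
        ← Finset.mul_sum] at hcs
      exact hcs
    have hexp : ∑ i : ZMod k, (G i d / (d:ℝ))^2 = (∑ i : ZMod k, (G i d)^2) / (d:ℝ)^2 := by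
      rw [Finset.sum_div]
      apply Finset.sum_congr rfl
      intro i _
      rw [div_pow]
    rw [hexp]
    rw [div_le_iff₀ (by positivity : (0:ℝ) < ((d:ℕ):ℝ)^2)]
    rw [← mul_le_mul_iff_right₀ hwR]
    have hrhs : (((Wnd L d).card : ℕ):ℝ) * ((8 * ((∑ i : ZMod k, (G i d)^2) / (d:ℝ)^2)
          + 2 * (((Wnd L d).card : ℕ):ℝ)⁻¹ * ∑ m ∈ Wnd L d, H m) * ((d:ℕ):ℝ)^2)
        = (((Wnd L d).card : ℕ):ℝ) * (8 * (∑ i : ZMod k, (G i d)^2))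
          + 2*(d:ℝ)^2 * ∑ m ∈ Wnd L d, H m := by
      field_simp
    rw [hrhs]
    exact havg
  -- sum over d
  have hmain : bSemiSq k φ ≤ ∑ d ∈ Ioc 0 D, (8 * (∑ i : ZMod k, (G i d / (d:ℝ))^2))
      + ∑ d ∈ Ioc 0 D, (2 * (((Wnd L d).card : ℕ):ℝ)⁻¹ * ∑ m ∈ Wnd L d, H m) := by
    refine (B1 φ).trans ?_
    rw [← Finset.sum_add_distrib]
    exact Finset.sum_le_sum hperd
  -- S1 : vertical part
  set EV : ℝ := ∑ i : ZMod k, ∑ j ∈ Finset.Icc 1 (L - 1), (u i (j + 1) - u i j) ^ 2 with hEV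
  have hEVnn : 0 ≤ EV := Finset.sum_nonneg fun i _ => Finset.sum_nonneg fun j _ => sq_nonneg _
  have hS1 : ∑ d ∈ Ioc 0 D, (8 * (∑ i : ZMod k, (G i d / (d:ℝ))^2)) ≤ 32 * EV := by
    rw [← Finset.mul_sum, Finset.sum_comm]
    have hi : ∀ i : ZMod k, ∑ d ∈ Ioc 0 D, (G i d / (d:ℝ))^2
        ≤ 4 * ∑ j ∈ Finset.Icc 1 (L-1), (u i (j+1) - u i j)^2 := by
      intro i
      have hhardy := hardy (b i) D
      have hb2 : ∑ n ∈ Ioc 0 D, (b i n)^2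
          = ∑ j ∈ Finset.Icc 1 (L-1), (u i (j+1) - u i j)^2 := by
        have hterm : ∀ n ∈ Ioc 0 D, (b i n)^2
            = if n ≤ L-1 then (u i (n+1) - u i n)^2 else 0 := by
          intro n _
          rw [hb]
          simp only []
          split
          · rw [sq_abs]
          · norm_num
        rw [Finset.sum_congr rfl hterm, ← Finset.sum_filter]
        apply Finset.sum_congr _ (fun x _ => rfl)
        ext x
        simp only [Finset.mem_filter, Finset.mem_Ioc, Finset.mem_Icc]
        omega
      rw [hb2] at hhardy
      exact hhardy
    refine (mul_le_mul_of_nonneg_left (Finset.sum_le_sum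
      (fun i (_ : i ∈ (univ : Finset (ZMod k))) => hi i)) (by norm_num : (0:ℝ) ≤ 8)).trans ?_
    rw [← Finset.mul_sum, ← hEV]
    linarith
  -- S2 : horizontal part
  set EH : ℝ := ∑ i : ZMod k, ∑ j ∈ Finset.Icc 1 L, (u (i + 1) j - u i j) ^ 2 with hEH
  have hEHnn : 0 ≤ EH := Finset.sum_nonneg fun i _ => Finset.sum_nonneg fun j _ => sq_nonneg _
  have hEHswap : EH = ∑ m ∈ Finset.Icc 1 L, H m := Finset.sum_comm
  have hS2 : ∑ d ∈ Ioc 0 D, (2 * (((Wnd L d).card : ℕ):ℝ)⁻¹ * ∑ m ∈ Wnd L d, H m)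
      ≤ (2*(c:ℝ) + 2) * EH := by
    have hinner : ∀ d ∈ Ioc 0 D, 2 * (((Wnd L d).card : ℕ):ℝ)⁻¹ * ∑ m ∈ Wnd L d, H m
        = ∑ m ∈ Finset.Icc 1 L, (if m ∈ Wnd L d then 2 * (((Wnd L d).card : ℕ):ℝ)⁻¹ * H m else 0) := by
      intro d hd
      simp only [Finset.mem_Ioc] at hd
      have hWsubs := Wnd_subset L d hd.1
      have hfil : (Finset.Icc 1 L).filter (fun m => m ∈ Wnd L d) = Wnd L d := by
        rw [Finset.filter_mem_eq_inter]
        exact Finset.inter_eq_right.2 hWsubs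
      rw [Finset.mul_sum]
      have hsf := Finset.sum_filter (s := Finset.Icc 1 L) (fun m => m ∈ Wnd L d)
        (fun m => 2 * (((Wnd L d).card : ℕ):ℝ)⁻¹ * H m)
      rw [hfil] at hsf
      exact hsf
    rw [Finset.sum_congr rfl hinner, Finset.sum_comm]
    have hm2 : ∀ m ∈ Finset.Icc 1 L,
        (∑ d ∈ Ioc 0 D, if m ∈ Wnd L d then 2 * (((Wnd L d).card : ℕ):ℝ)⁻¹ * H m else 0)
        ≤ (2*(c:ℝ) + 2) * H m := by
      intro m hm
      simp only [Finset.mem_Icc] at hm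
      have hfact : (∑ d ∈ Ioc 0 D, if m ∈ Wnd L d then 2 * (((Wnd L d).card : ℕ):ℝ)⁻¹ * H m else 0)
          = (∑ d ∈ Ioc 0 D, if m ∈ Wnd L d then (((Wnd L d).card : ℕ):ℝ)⁻¹ else 0) * (2 * H m) := by
        rw [Finset.sum_mul]
        apply Finset.sum_congr rfl
        intro d _
        split
        · ring
        · simp
      rw [hfact]
      have hco := coeff1 k L c h1 h2 hL hc m hm.1 hm.2
      have := mul_le_mul_of_nonneg_right hco (by positivity : (0:ℝ) ≤ 2 * H m)
      refine this.trans_eq ?_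
      ring
    refine (Finset.sum_le_sum hm2).trans ?_
    rw [← Finset.mul_sum, hEHswap]
  -- finish
  have hM1 : 4 * π ^ 2 ≤ max (3 * (c : ℝ)) (4 * π ^ 2) := le_max_right _ _
  have hM2 : 3 * (c:ℝ) ≤ max (3 * (c : ℝ)) (4 * π ^ 2) := le_max_left _ _
  have hpi := Real.pi_gt_three
  have h32 : (32:ℝ) ≤ max (3 * (c : ℝ)) (4 * π ^ 2) := by nlinarith
  have hcR : (3:ℝ) ≤ (c:ℝ) := by exact_mod_cast hc
  have h2c2 : 2*(c:ℝ) + 2 ≤ max (3 * (c : ℝ)) (4 * π ^ 2) := by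
    have : 2*(c:ℝ) + 2 ≤ 3*(c:ℝ) := by linarith
    linarith
  have hen : energySq k L u = EH + EV := rfl
  rw [hen]
  nlinarith [mul_nonneg (sub_nonneg.2 h32) hEVnn, mul_nonneg (sub_nonneg.2 h2c2) hEHnn]

end PartOne

/-- Discrete trace theorem for `C_k □ P_ℓ`: assuming `ℓ ≥ 2`, for every
`φ : ℤ/kℤ → ℝ`:
(i) every `u` with `u(i,1) = φ(i)` for all `i` satisfies `|φ|_Γ² ≤ max{3c, 4π²} · |u|_G²`;
(ii) there exists `u` with `u(i,1) = φ(i)` for all `i` and `|u|_G² ≤ (2c + 233/9) · |φ|_Γ²`. -/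
theorem discrete_trace_theorem (k ℓ c : ℕ) [NeZero k]
    (h1 : 4 * ℓ < k) (h2 : k < 2 * c * ℓ) (hℓ : 2 ≤ ℓ)
    (φ : ZMod k → ℝ) :
    (∀ u : ZMod k → ℕ → ℝ, (∀ i : ZMod k, u i 1 = φ i) →
      bSemiSq k φ ≤ max (3 * (c : ℝ)) (4 * π ^ 2) * energySq k ℓ u) ∧
    (∃ u : ZMod k → ℕ → ℝ, (∀ i : ZMod k, u i 1 = φ i) ∧
      energySq k ℓ u ≤ (2 * (c : ℝ) + 233 / 9) * bSemiSq k φ) := by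
  constructor
  · intro u hu
    exact part_one k ℓ c h1 h2 hℓ φ u hu
  · exact ⟨extAvg φ, fun i => extAvg_one φ i, part_two k ℓ c h1 h2 hℓ φ⟩
end
end
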